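/- arXiv:1709.06183 — 6 statements merged into one kernel-verified Lean document; each statement's English description precedes it below -/
import Mathlib

section
/- Fix an integer r ≥ 2. There exists a function f : [0,1] → ℝ with f continuous on (0,1], f(0) = 0, 0 ≤ f(x) ≤ 1 for all x ∈ [0,1], and there exist constants c > 0 and N ∈ ℕ, such that for all n ≥ N the delete-1 r-jackknife bias satisfies sup_{p∈[0,1]} |Σ_{i=1}^r C_i B_{n−r+i}[f](p) − f(p)| ≥ c n^{r−1}, where C_i = ∏_{j≠i} (n−r+i)/(i − j) are the jackknife coefficients for the sample sizes n_i = n − r + i, i = 1, …, r. -/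
/-- Bernstein operator: `B_m[g](p) = Σ_{k=0}^m C(m,k) p^k (1-p)^{m-k} g(k/m)`. -/
noncomputable def bernstein' (m : ℕ) (g : ℝ → ℝ) (p : ℝ) : ℝ :=
  ∑ k ∈ Finset.range (m + 1), (m.choose k : ℝ) * p ^ k * (1 - p) ^ (m - k) * g ((k : ℝ) / m)

/-- `r`-th symmetric difference of `g` with step `h`, vanishing near the boundary of `[0,1]`. -/
noncomputable def ditzSymmDiff (r : ℕ) (h : ℝ) (g : ℝ → ℝ) (x : ℝ) : ℝ :=
  if x - r * h / 2 ∈ Set.Icc (0:ℝ) 1 ∧ x + r * h / 2 ∈ Set.Icc (0:ℝ) 1 then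
    ∑ k ∈ Finset.range (r + 1), (-1 : ℝ) ^ k * (r.choose k : ℝ) * g (x + r * h / 2 - k * h)
  else 0

/-- `r`-th Ditzian–Totik modulus of smoothness with weight `φ(x) = √(x(1-x))`. -/
noncomputable def dtMod (r : ℕ) (g : ℝ → ℝ) (t : ℝ) : ℝ :=
  sSup {y : ℝ | ∃ h x : ℝ, 0 < h ∧ h ≤ t ∧ x ∈ Set.Icc (0:ℝ) 1 ∧
    y = |ditzSymmDiff r (h * Real.sqrt (x * (1 - x))) g x|}

/-- Sup norm on `[0,1]`. -/
noncomputable def supAbsOn (g : ℝ → ℝ) : ℝ := sSup ((fun p => |g p|) '' Set.Icc (0:ℝ) 1)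

/-- Jackknife coefficients `C_i = ∏_{j≠i} n_i/(n_i - n_j)`. -/
noncomputable def jackCoeff {r : ℕ} (ns : Fin r → ℕ) (i : Fin r) : ℝ :=
  ∏ j ∈ Finset.univ.erase i, (ns i : ℝ) / ((ns i : ℝ) - (ns j : ℝ))

/-- Sup over `p ∈ [0,1]` of the `r`-jackknife bias `|Σ_i C_i B_{n_i}[f](p) - f(p)|`. -/
noncomputable def jackBias {r : ℕ} (ns : Fin r → ℕ) (f : ℝ → ℝ) : ℝ :=
  sSup ((fun p => |(∑ i, jackCoeff ns i * bernstein' (ns i) f p) - f p|) '' Set.Icc (0:ℝ) 1)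

open Real Finset

noncomputable def badF (r : ℕ) : ℝ → ℝ := fun x =>
  if x = 0 then 0 else
    max 0 ((Real.cos (2 * Real.pi / (r * x)) - Real.cos (2 * Real.pi / r)) /
      (1 - Real.cos (2 * Real.pi / r)))

lemma badF_c0_lt_one {r : ℕ} (hr : 2 ≤ r) : Real.cos (2 * Real.pi / r) < 1 := by
  have hπ := Real.pi_pos
  have hr0 : (0:ℝ) < r := by exact_mod_cast (by omega : 0 < r)
  have hr2 : (2:ℝ) ≤ r := by exact_mod_cast hr
  have h1 : 0 < 2 * Real.pi / r := by positivity
  have h2 : 2 * Real.pi / r ≤ Real.pi := by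
    rw [div_le_iff₀ hr0]; nlinarith
  have := Real.strictAntiOn_cos ⟨le_rfl, Real.pi_nonneg⟩ ⟨h1.le, h2⟩ h1
  simpa using this

lemma badF_nonneg (r : ℕ) (x : ℝ) : 0 ≤ badF r x := by
  unfold badF; split
  · exact le_rfl
  · exact le_max_left _ _

lemma badF_le_one {r : ℕ} (hr : 2 ≤ r) (x : ℝ) : badF r x ≤ 1 := by
  have hc0 := badF_c0_lt_one hr
  unfold badF; split
  · norm_num
  · refine max_le (by norm_num) ((div_le_one (by linarith)).2 ?_)
    have := Real.cos_le_one (2 * Real.pi / (r * x))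
    linarith

lemma badF_zero (r : ℕ) : badF r 0 = 0 := if_pos rfl

lemma badF_cont {r : ℕ} (hr : 2 ≤ r) : ContinuousOn (badF r) (Set.Ioc 0 1) := by
  have hr0 : (0:ℝ) < r := by exact_mod_cast (by omega : 0 < r)
  have hcont : ContinuousOn (fun x : ℝ =>
      max 0 ((Real.cos (2 * Real.pi / (r * x)) - Real.cos (2 * Real.pi / r)) /
        (1 - Real.cos (2 * Real.pi / r)))) (Set.Ioc 0 1) := by
    have h1 : ContinuousOn (fun x : ℝ => 2 * Real.pi / (r * x)) (Set.Ioc 0 1) :=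
      ContinuousOn.div continuousOn_const (by fun_prop)
        (fun x hx => ne_of_gt (mul_pos hr0 hx.1))
    have h2 : ContinuousOn (fun x : ℝ => Real.cos (2 * Real.pi / (r * x))) (Set.Ioc 0 1) :=
      Real.continuous_cos.comp_continuousOn h1
    exact (continuous_const.max continuous_id).comp_continuousOn
      ((h2.sub continuousOn_const).div_const _)
  exact hcont.congr (fun x hx => if_neg (ne_of_gt hx.1))

lemma badF_one_div_one {r : ℕ} (hr : 2 ≤ r) {n : ℕ} (hn : 1 ≤ n) (h : r ∣ n) :
    badF r (1 / (n : ℝ)) = 1 := by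
  have hc0 := badF_c0_lt_one hr
  obtain ⟨q, rfl⟩ := h
  have hr0 : (0:ℝ) < r := by exact_mod_cast (by omega : 0 < r)
  have hq0 : (0:ℝ) < q := by
    have : 0 < q := by
      rcases Nat.eq_zero_or_pos q with h | h
      · subst h; simp at hn
      · exact h
    exact_mod_cast this
  have hrq0 : (0:ℝ) < ((r * q : ℕ) : ℝ) := by push_cast; positivity
  have hne : (1 : ℝ) / ((r * q : ℕ) : ℝ) ≠ 0 := by positivity
  unfold badF
  rw [if_neg hne]
  have harg : 2 * Real.pi / ((r:ℝ) * (1 / ((r * q : ℕ) : ℝ))) = (q:ℝ) * (2 * Real.pi) := by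
    push_cast
    field_simp
  rw [harg, Real.cos_nat_mul_two_pi, div_self (by linarith), max_eq_right zero_le_one]

lemma keycos {r k : ℕ} (hr : 2 ≤ r) (h1 : 1 ≤ k) (h2 : k < r) :
    Real.cos (2 * Real.pi * k / r) ≤ Real.cos (2 * Real.pi / r) := by
  have hπ := Real.pi_pos
  have hr0 : (0:ℝ) < r := by exact_mod_cast (by omega : 0 < r)
  have hk1 : (1:ℝ) ≤ k := by exact_mod_cast h1
  have hkr : (k:ℝ) + 1 ≤ r := by exact_mod_cast h2
  have hA : 2 * Real.pi / r ≤ 2 * Real.pi * k / r := by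
    exact (div_le_div_iff_of_pos_right hr0).mpr (by nlinarith)
  have hB : 2 * Real.pi * k / r ≤ 2 * Real.pi - 2 * Real.pi / r := by
    rw [div_le_iff₀ hr0]
    have hd : 2 * Real.pi / r * r = 2 * Real.pi := div_mul_cancel₀ _ (ne_of_gt hr0)
    nlinarith
  by_cases hc : 2 * Real.pi * k / r ≤ Real.pi
  · exact Real.cos_le_cos_of_nonneg_of_le_pi (by positivity) hc hA
  · push_neg at hc
    have hre : Real.cos (2 * Real.pi * k / r) = Real.cos (2 * Real.pi - 2 * Real.pi * k / r) := by
      rw [Real.cos_two_pi_sub]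
    rw [hre]
    exact Real.cos_le_cos_of_nonneg_of_le_pi (by positivity) (by linarith) (by linarith)
lemma badF_one_div_zero {r : ℕ} (hr : 2 ≤ r) {n : ℕ} (hn : 1 ≤ n) (h : ¬ r ∣ n) :
    badF r (1 / (n : ℝ)) = 0 := by
  have hc0 := badF_c0_lt_one hr
  have hr0 : (0:ℝ) < r := by exact_mod_cast (by omega : 0 < r)
  have hn0 : (0:ℝ) < (n:ℝ) := by exact_mod_cast hn
  have hne : (1 : ℝ) / (n : ℝ) ≠ 0 := by positivity
  unfold badF
  rw [if_neg hne]
  have hk1 : 1 ≤ n % r := by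
    rcases Nat.eq_zero_or_pos (n % r) with h0 | h0
    · exact absurd (Nat.dvd_of_mod_eq_zero h0) h
    · exact h0
  have hkr : n % r < r := Nat.mod_lt _ (by omega)
  have hnat : (n:ℝ) = r * (n / r : ℕ) + (n % r : ℕ) := by exact_mod_cast (Nat.div_add_mod n r).symm
  have harg : 2 * Real.pi / ((r:ℝ) * (1 / (n : ℝ))) =
      2 * Real.pi * (n % r : ℕ) / r + (n / r : ℕ) * (2 * Real.pi) := by
    rw [hnat]; field_simp; ring
  rw [harg, Real.cos_add_nat_mul_two_pi]
  have hle := keycos hr hk1 hkr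
  apply max_eq_left
  apply div_nonpos_of_nonpos_of_nonneg _ (by linarith)
  linarith

lemma bern_abs_le (m : ℕ) (g : ℝ → ℝ) (h0 : ∀ x, 0 ≤ g x) (h1 : ∀ x, g x ≤ 1)
    {p : ℝ} (hp : 0 ≤ p) (hp1 : p ≤ 1) : |bernstein' m g p| ≤ 1 := by
  have key : ∑ k ∈ Finset.range (m+1), (m.choose k : ℝ) * p^k * (1-p)^(m-k) = 1 := by
    have := add_pow p (1-p) m
    calc ∑ k ∈ Finset.range (m+1), (m.choose k : ℝ) * p^k * (1-p)^(m-k)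
        = (p + (1-p))^m := by
          rw [add_pow]; exact Finset.sum_congr rfl (fun k _ => by ring)
      _ = 1 := by norm_num
  unfold bernstein'
  calc |∑ k ∈ Finset.range (m+1), (m.choose k : ℝ) * p^k * (1-p)^(m-k) * g ((k:ℝ)/m)|
      ≤ ∑ k ∈ Finset.range (m+1), |(m.choose k : ℝ) * p^k * (1-p)^(m-k) * g ((k:ℝ)/m)| :=
        Finset.abs_sum_le_sum_abs _ _
    _ ≤ ∑ k ∈ Finset.range (m+1), (m.choose k : ℝ) * p^k * (1-p)^(m-k) := by
        apply Finset.sum_le_sum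
        intro k _
        have hnn : 0 ≤ (m.choose k : ℝ) * p^k * (1-p)^(m-k) :=
          mul_nonneg (mul_nonneg (by positivity) (pow_nonneg hp _))
            (pow_nonneg (by linarith) _)
        rw [abs_of_nonneg (mul_nonneg hnn (h0 _))]
        exact mul_le_of_le_one_right hnn (h1 _)
    _ = 1 := key

lemma bern_decomp (m : ℕ) (hm : 1 ≤ m) (g : ℝ → ℝ) (hg0 : g 0 = 0)
    (h0 : ∀ x, 0 ≤ g x) (h1 : ∀ x, g x ≤ 1) {p : ℝ} (hp : 0 ≤ p)
    (hmp : (m:ℝ) * p ≤ 1/2) :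
    |bernstein' m g p - (m:ℝ) * p * (1-p)^(m-1) * g (1/(m:ℝ))| ≤ 2 * ((m:ℝ)*p)^2 := by
  have hm1 : (1:ℝ) ≤ m := by exact_mod_cast hm
  have hp1 : p ≤ 1 := by nlinarith
  have hsplit : bernstein' m g p = ((m:ℝ) * p * (1-p)^(m-1) * g (1/(m:ℝ)))
      + ∑ k ∈ Finset.Ico 2 (m+1), (m.choose k : ℝ) * p^k * (1-p)^(m-k) * g ((k:ℝ)/m) := by
    unfold bernstein'
    rw [← Finset.sum_range_add_sum_Ico _ (show 2 ≤ m+1 by omega)]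
    congr 1
    rw [Finset.sum_range_succ, Finset.sum_range_one]
    simp [hg0, Nat.choose_one_right]
  rw [hsplit, add_sub_cancel_left]
  have habs : ∀ k ∈ Finset.Ico 2 (m+1),
      |(m.choose k : ℝ) * p^k * (1-p)^(m-k) * g ((k:ℝ)/m)| ≤ ((m:ℝ)*p)^k := by
    intro k _
    have hnn : 0 ≤ (m.choose k : ℝ) * p^k * (1-p)^(m-k) :=
      mul_nonneg (mul_nonneg (by positivity) (pow_nonneg hp _)) (pow_nonneg (by linarith) _)
    rw [abs_of_nonneg (mul_nonneg hnn (h0 _))]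
    calc (m.choose k : ℝ) * p^k * (1-p)^(m-k) * g ((k:ℝ)/m)
        ≤ (m.choose k : ℝ) * p^k * (1-p)^(m-k) := mul_le_of_le_one_right hnn (h1 _)
      _ ≤ (m:ℝ)^k * p^k * 1 := by
          apply mul_le_mul ?_ (pow_le_one₀ (by linarith) (by linarith)) (pow_nonneg (by linarith) _) (by positivity)
          apply mul_le_mul_of_nonneg_right ?_ (pow_nonneg hp _)
          exact_mod_cast Nat.choose_le_pow m k
      _ = ((m:ℝ)*p)^k := by rw [mul_pow]; ring
  have hgeom : ∑ k ∈ Finset.Ico 2 (m+1), ((m:ℝ)*p)^k ≤ 2 * ((m:ℝ)*p)^2 := by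
    set a : ℝ := (m:ℝ)*p with ha
    have ha0 : 0 ≤ a := by positivity
    rw [Finset.sum_Ico_eq_sum_range]
    calc ∑ j ∈ Finset.range (m+1-2), a^(2+j) = a^2 * ∑ j ∈ Finset.range (m+1-2), a^j := by
          rw [Finset.mul_sum]; exact Finset.sum_congr rfl (fun j _ => by rw [pow_add])
      _ ≤ a^2 * 2 := by
          apply mul_le_mul_of_nonneg_left ?_ (by positivity)
          calc ∑ j ∈ Finset.range (m+1-2), a^j ≤ ∑ j ∈ Finset.range (m+1-2), (1/2:ℝ)^j :=
                Finset.sum_le_sum (fun j _ => pow_le_pow_left₀ ha0 hmp j)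
            _ = ((1/2:ℝ)^(m+1-2) - 1)/((1/2:ℝ) - 1) := geom_sum_eq (by norm_num) _
            _ ≤ 2 := by
                rw [div_le_iff_of_neg (by norm_num)]
                have : (0:ℝ) ≤ (1/2:ℝ)^(m+1-2) := by positivity
                linarith
      _ = 2 * a^2 := by ring
  calc |∑ k ∈ Finset.Ico 2 (m+1), (m.choose k : ℝ) * p^k * (1-p)^(m-k) * g ((k:ℝ)/m)|
      ≤ ∑ k ∈ Finset.Ico 2 (m+1), |(m.choose k : ℝ) * p^k * (1-p)^(m-k) * g ((k:ℝ)/m)| :=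
        Finset.abs_sum_le_sum_abs _ _
    _ ≤ ∑ k ∈ Finset.Ico 2 (m+1), ((m:ℝ)*p)^k := Finset.sum_le_sum habs
    _ ≤ 2 * ((m:ℝ)*p)^2 := hgeom

lemma jack_bounds {r : ℕ} (hr : 2 ≤ r) (m : ℕ) (hm : 1 ≤ m) (i : Fin r) :
    (((m:ℝ) + i.val)/r)^(r-1) ≤ |jackCoeff (fun j : Fin r => m + j.val) i| ∧
    |jackCoeff (fun j : Fin r => m + j.val) i| ≤ ((m:ℝ) + i.val)^(r-1) := by
  have hr0 : (0:ℝ) < r := by exact_mod_cast (by omega : 0 < r)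
  have hmi : (0:ℝ) < (m:ℝ) + i.val := by
    have : (1:ℝ) ≤ (m:ℝ) := by exact_mod_cast hm
    have : (0:ℝ) ≤ (i.val:ℝ) := by positivity
    linarith
  have hcard : (Finset.univ.erase i).card = r - 1 := by
    rw [Finset.card_erase_of_mem (Finset.mem_univ i), Finset.card_univ, Fintype.card_fin]
  have hd : ∀ j ∈ Finset.univ.erase i,
      1 ≤ |(i.val:ℝ) - (j.val:ℝ)| ∧ |(i.val:ℝ) - (j.val:ℝ)| ≤ r := by
    intro j hj
    have hji : j ≠ i := Finset.ne_of_mem_erase hj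
    have hcast : (i.val:ℝ) - (j.val:ℝ) = (((i.val:ℤ) - (j.val:ℤ) : ℤ) : ℝ) := by push_cast; ring
    have hne : (i.val:ℤ) - (j.val:ℤ) ≠ 0 := by
      intro hc
      exact hji (Fin.ext (by omega))
    have hilt : (i.val:ℤ) < r := by exact_mod_cast i.isLt
    have hjlt : (j.val:ℤ) < r := by exact_mod_cast j.isLt
    have hi0 : (0:ℤ) ≤ (i.val:ℤ) := by positivity
    have hj0 : (0:ℤ) ≤ (j.val:ℤ) := by positivity
    constructor
    · rw [hcast, ← Int.cast_abs]
      exact_mod_cast Int.one_le_abs hne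
    · rw [hcast, ← Int.cast_abs]
      have : |(i.val:ℤ) - (j.val:ℤ)| ≤ (r:ℤ) := abs_le.2 ⟨by omega, by omega⟩
      exact_mod_cast this
  have habs : |jackCoeff (fun j : Fin r => m + j.val) i|
      = ∏ j ∈ Finset.univ.erase i, ((m:ℝ) + i.val) / |(i.val:ℝ) - (j.val:ℝ)| := by
    unfold jackCoeff
    rw [Finset.abs_prod]
    refine Finset.prod_congr rfl (fun j hj => ?_)
    have hc : (((m + i.val : ℕ)):ℝ) - (((m + j.val : ℕ)):ℝ) = (i.val:ℝ) - (j.val:ℝ) := by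
      push_cast; ring
    rw [hc, abs_div, abs_of_nonneg (by push_cast; positivity)]
    push_cast
    ring
  constructor
  · rw [habs]
    calc (((m:ℝ) + i.val)/r)^(r-1)
        = ∏ _j ∈ Finset.univ.erase i, ((m:ℝ) + i.val)/r := by
          rw [Finset.prod_const, hcard]
      _ ≤ ∏ j ∈ Finset.univ.erase i, ((m:ℝ) + i.val) / |(i.val:ℝ) - (j.val:ℝ)| := by
          apply Finset.prod_le_prod
          · intro j _; positivity
          · intro j hj
            exact div_le_div_of_nonneg_left hmi.le (lt_of_lt_of_le one_pos (hd j hj).1) (hd j hj).2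
  · rw [habs]
    calc ∏ j ∈ Finset.univ.erase i, ((m:ℝ) + i.val) / |(i.val:ℝ) - (j.val:ℝ)|
        ≤ ∏ _j ∈ Finset.univ.erase i, ((m:ℝ) + i.val) := by
          apply Finset.prod_le_prod
          · intro j hj; positivity
          · intro j hj
            exact div_le_self hmi.le (hd j hj).1
      _ = ((m:ℝ) + i.val)^(r-1) := by rw [Finset.prod_const, hcard]

lemma exists_k0 (r m : ℕ) (hr : 2 ≤ r) :
    ∃ k0, k0 < r ∧ r ∣ (m + k0) ∧ ∀ k, k < r → k ≠ k0 → ¬ r ∣ (m + k) := by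
  have hr0 : 0 < r := by omega
  set t := r * (m / r) with ht
  have hdm : t + m % r = m := by rw [ht]; exact Nat.div_add_mod m r
  have hmr : m % r < r := Nat.mod_lt _ hr0
  refine ⟨(r - m % r) % r, Nat.mod_lt _ hr0, ?_, ?_⟩
  · rcases Nat.eq_zero_or_pos (m % r) with h0 | h0
    · rw [h0]
      simp only [Nat.sub_zero, Nat.mod_self, Nat.add_zero]
      exact ⟨m / r, by omega⟩
    · have hlt : (r - m % r) % r = r - m % r := Nat.mod_eq_of_lt (by omega)
      rw [hlt]
      exact ⟨m / r + 1, by rw [Nat.mul_succ]; omega⟩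
  · intro k hk hne hdvd
    set k0 := (r - m % r) % r with hk0
    have hk0lt : k0 < r := Nat.mod_lt _ hr0
    have hdvd0 : r ∣ (m + k0) := by
      rcases Nat.eq_zero_or_pos (m % r) with h0 | h0
      · rw [hk0, h0]
        simp only [Nat.sub_zero, Nat.mod_self, Nat.add_zero]
        exact ⟨m / r, by omega⟩
      · have hlt : (r - m % r) % r = r - m % r := Nat.mod_eq_of_lt (by omega)
        rw [hk0, hlt]
        exact ⟨m / r + 1, by rw [Nat.mul_succ]; omega⟩
    rcases Nat.lt_or_ge k k0 with hlt | hge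
    · have hd : r ∣ (m + k0) - (m + k) := Nat.dvd_sub hdvd0 hdvd
      have he : (m + k0) - (m + k) = k0 - k := by omega
      rw [he] at hd
      have := Nat.le_of_dvd (by omega) hd
      omega
    · have hlt : k0 < k := by omega
      have hd : r ∣ (m + k) - (m + k0) := Nat.dvd_sub hdvd hdvd0
      have he : (m + k) - (m + k0) = k - k0 := by omega
      rw [he] at hd
      have := Nat.le_of_dvd (by omega) hd
      omega

set_option maxHeartbeats 2000000 in
/-- there is a fixed `f` continuous on `(0,1]`, `f(0)=0`, `0 ≤ f ≤ 1`, whose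
delete-1 `r`-jackknife bias is `≳ n^{r-1}`. -/
theorem delete_one_jackknife_bad_bias (r : ℕ) (hr : 2 ≤ r) :
    ∃ f : ℝ → ℝ, ContinuousOn f (Set.Ioc 0 1) ∧ f 0 = 0 ∧
      (∀ x ∈ Set.Icc (0:ℝ) 1, 0 ≤ f x ∧ f x ≤ 1) ∧
      ∃ c > 0, ∃ N : ℕ, ∀ n ≥ N,
        c * (n : ℝ) ^ (r - 1) ≤ jackBias (fun i : Fin r => n - r + 1 + i.val) f := by
  have hπ := Real.pi_pos
  have hrr : (0:ℝ) < r := by exact_mod_cast (by omega : 0 < r)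
  have hr2 : (2:ℝ) ≤ r := by exact_mod_cast hr
  set f := badF r with hf
  have hf0 : ∀ x, 0 ≤ f x := badF_nonneg r
  have hf1 : ∀ x, f x ≤ 1 := badF_le_one hr
  refine ⟨f, badF_cont hr, badF_zero r, fun x _ => ⟨hf0 x, hf1 x⟩, ?_⟩
  set K : ℝ := (2*(r:ℝ))^(r-1) with hK
  have hK1 : (1:ℝ) ≤ K := one_le_pow₀ (by linarith)
  have hK0 : (0:ℝ) < K := by positivity
  refine ⟨1/(256*(r:ℝ)*K^2), by positivity, 2*r + ⌈(256:ℝ)*r*K^2⌉₊, fun n hn => ?_⟩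
  set c : ℝ := 1/(256*(r:ℝ)*K^2) with hc
  set δ : ℝ := 1/(16*(r:ℝ)*K) with hδ
  have hc0 : 0 < c := by positivity
  have hδ0 : 0 < δ := by positivity
  have hδhalf : δ ≤ 1/2 := by
    rw [hδ, div_le_div_iff₀ (by positivity) (by norm_num)]
    nlinarith
  have hn2r : 2*r ≤ n := le_trans (Nat.le_add_right _ _) hn
  have hn0 : 0 < n := by omega
  have hn0R : (0:ℝ) < n := by exact_mod_cast hn0
  have hn1R : (1:ℝ) ≤ n := by exact_mod_cast hn0
  have hnR : (256:ℝ)*r*K^2 ≤ n := by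
    have h1 : ⌈(256:ℝ)*r*K^2⌉₊ ≤ n := le_trans (Nat.le_add_left _ _) hn
    exact le_trans (Nat.le_ceil _) (by exact_mod_cast h1)
  set m := n - r + 1 with hm
  have hm1 : 1 ≤ m := by omega
  have hm1R : (1:ℝ) ≤ m := by exact_mod_cast hm1
  have hmn : ∀ i : Fin r, m + i.val ≤ n := fun i => by have := i.isLt; omega
  have hmR : (n:ℝ)/2 ≤ m := by
    have h2 : n ≤ 2*m := by omega
    have h2' : (n:ℝ) ≤ 2*m := by exact_mod_cast h2
    linarith
  set p : ℝ := δ/n with hp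
  have hp0 : 0 < p := by positivity
  have hnp : (n:ℝ)*p = δ := by rw [hp]; field_simp
  have hphalf : p ≤ 1/2 := le_trans (by rw [hp]; exact div_le_self hδ0.le hn1R) hδhalf
  have hp1 : p ≤ 1 := by linarith
  have h1p0 : (0:ℝ) ≤ 1 - p := by linarith
  have h1p1 : 1 - p ≤ 1 := by linarith
  set ns : Fin r → ℕ := fun i : Fin r => m + i.val with hns
  have hns1 : ∀ i : Fin r, 1 ≤ ns i := fun i => by simp only [hns]; omega
  have hnsn : ∀ i : Fin r, ns i ≤ n := hmn
  have hnsp : ∀ i : Fin r, (ns i:ℝ)*p ≤ δ := by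
    intro i
    rw [← hnp]
    have hcast : ((ns i : ℕ):ℝ) ≤ n := by exact_mod_cast hnsn i
    exact mul_le_mul_of_nonneg_right hcast hp0.le
  obtain ⟨k0, hk0r, hk0dvd, hk0uniq⟩ := exists_k0 r m hr
  set i0 : Fin r := ⟨k0, hk0r⟩ with hi0
  have hfi0 : f (1/((ns i0 : ℕ):ℝ)) = 1 :=
    badF_one_div_one hr (hns1 i0) (by simpa [hns, hi0] using hk0dvd)
  have hfi : ∀ i : Fin r, i ≠ i0 → f (1/((ns i : ℕ):ℝ)) = 0 := by
    intro i hne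
    exact badF_one_div_zero hr (hns1 i) (hk0uniq i.val i.isLt (fun h => hne (Fin.ext h)))
  have hCub : ∀ i : Fin r, |jackCoeff ns i| ≤ (n:ℝ)^(r-1) := by
    intro i
    have hjb := (jack_bounds hr m hm1 i).2
    rw [← hns] at hjb
    refine le_trans hjb ?_
    apply pow_le_pow_left₀ (by positivity)
    have hcast : ((m + i.val : ℕ):ℝ) ≤ n := by exact_mod_cast hmn i
    push_cast at hcast ⊢
    linarith
  have hClb : ((m:ℝ)/r)^(r-1) ≤ |jackCoeff ns i0| := by
    have hjb := (jack_bounds hr m hm1 i0).1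
    rw [← hns] at hjb
    refine le_trans ?_ hjb
    apply pow_le_pow_left₀ (by positivity)
    rw [div_le_div_iff₀ hrr hrr]
    nlinarith [show (0:ℝ) ≤ (i0.val:ℝ) by positivity]
  have hRb : ∀ i : Fin r,
      |bernstein' (ns i) f p - (ns i:ℝ)*p*(1-p)^(ns i - 1) * f (1/((ns i : ℕ):ℝ))| ≤ 2*δ^2 := by
    intro i
    refine le_trans (bern_decomp (ns i) (hns1 i) f (badF_zero r) hf0 hf1 hp0.le
      (le_trans (hnsp i) hδhalf)) ?_
    have h2 : ((ns i:ℝ)*p)^2 ≤ δ^2 := pow_le_pow_left₀ (by positivity) (hnsp i) 2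
    linarith
  have hsum : (∑ i, jackCoeff ns i * bernstein' (ns i) f p)
      = jackCoeff ns i0 * ((ns i0:ℝ)*p*(1-p)^(ns i0 - 1))
        + ∑ i, jackCoeff ns i *
            (bernstein' (ns i) f p - (ns i:ℝ)*p*(1-p)^(ns i - 1) * f (1/((ns i : ℕ):ℝ))) := by
    have hterm : ∀ i ∈ Finset.univ, jackCoeff ns i * bernstein' (ns i) f p
        = jackCoeff ns i * ((ns i:ℝ)*p*(1-p)^(ns i - 1) * f (1/((ns i : ℕ):ℝ)))
          + jackCoeff ns i *
            (bernstein' (ns i) f p - (ns i:ℝ)*p*(1-p)^(ns i - 1) * f (1/((ns i : ℕ):ℝ))) :=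
      fun i _ => by ring
    rw [Finset.sum_congr rfl hterm, Finset.sum_add_distrib]
    congr 1
    rw [Finset.sum_eq_single i0 (fun i _ hne => by rw [hfi i hne]; ring)
      (fun h => absurd (Finset.mem_univ i0) h)]
    rw [hfi0]; ring
  have hpow : (1:ℝ)/2 ≤ (1-p)^(ns i0 - 1) := by
    have h1 : (1-p)^n ≤ (1-p)^(ns i0 - 1) :=
      pow_le_pow_of_le_one h1p0 h1p1 (by have := hnsn i0; omega)
    have h2 : 1 - (n:ℝ)*p ≤ (1-p)^n := by
      have hb := one_add_mul_le_pow (a := -p) (by linarith) n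
      calc 1 - (n:ℝ)*p = 1 + n*(-p) := by ring
        _ ≤ (1 + -p)^n := hb
        _ = (1-p)^n := by ring_nf
    rw [hnp] at h2
    linarith
  have hTlb : δ/(4*K) * (n:ℝ)^(r-1)
      ≤ |jackCoeff ns i0 * ((ns i0:ℝ)*p*(1-p)^(ns i0 - 1))| := by
    have hmp : δ/2 ≤ (m:ℝ)*p := by
      have h' : ((n:ℝ)/2)*p ≤ (m:ℝ)*p := mul_le_mul_of_nonneg_right hmR hp0.le
      calc δ/2 = ((n:ℝ)*p)/2 := by rw [hnp]
        _ = ((n:ℝ)/2)*p := by ring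
        _ ≤ (m:ℝ)*p := h'
    have hm_le_ns : (m:ℝ) ≤ (ns i0:ℝ) := by
      have hle : m ≤ ns i0 := Nat.le_add_right _ _
      exact_mod_cast hle
    have hq : (n:ℝ)/(2*r) ≤ (m:ℝ)/r := by
      rw [div_le_div_iff₀ (by positivity) hrr]
      nlinarith
    have hstep1 : ((n:ℝ)/(2*(r:ℝ)))^(r-1) = (n:ℝ)^(r-1)/K := by rw [div_pow, hK]
    have hstep2 : ((n:ℝ)/(2*(r:ℝ)))^(r-1) ≤ ((m:ℝ)/r)^(r-1) :=
      pow_le_pow_left₀ (by positivity) hq _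
    have habs : |jackCoeff ns i0 * ((ns i0:ℝ)*p*(1-p)^(ns i0 - 1))|
        = |jackCoeff ns i0| * ((ns i0:ℝ)*p*(1-p)^(ns i0 - 1)) := by
      rw [abs_mul,
        abs_of_nonneg (show (0:ℝ) ≤ (ns i0:ℝ)*p*(1-p)^(ns i0 - 1) by positivity)]
    rw [habs]
    calc δ/(4*K) * (n:ℝ)^(r-1)
        = ((n:ℝ)^(r-1)/K) * (δ/2) * (1/2) := by ring
      _ ≤ ((m:ℝ)/r)^(r-1) * ((m:ℝ)*p) * ((1-p)^(ns i0 - 1)) := by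
          apply mul_le_mul
          · apply mul_le_mul ?_ hmp (by positivity) (by positivity)
            rw [← hstep1]; exact hstep2
          · exact hpow
          · norm_num
          · positivity
      _ ≤ |jackCoeff ns i0| * ((ns i0:ℝ)*p) * ((1-p)^(ns i0 - 1)) := by
          apply mul_le_mul_of_nonneg_right ?_ (by positivity)
          apply mul_le_mul hClb (mul_le_mul_of_nonneg_right hm_le_ns hp0.le)
            (by positivity) (abs_nonneg _)
      _ = |jackCoeff ns i0| * ((ns i0:ℝ)*p*(1-p)^(ns i0 - 1)) := by ring
  have hfp : |f p| ≤ 1 := abs_le.2 ⟨by linarith [hf0 p], hf1 p⟩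
  have hEb : |(∑ i, jackCoeff ns i *
        (bernstein' (ns i) f p - (ns i:ℝ)*p*(1-p)^(ns i - 1) * f (1/((ns i : ℕ):ℝ)))) - f p|
      ≤ 2*(r:ℝ)*δ^2*(n:ℝ)^(r-1) + 1 := by
    have h2 : ∀ i ∈ Finset.univ, |jackCoeff ns i *
        (bernstein' (ns i) f p - (ns i:ℝ)*p*(1-p)^(ns i - 1) * f (1/((ns i : ℕ):ℝ)))|
        ≤ (n:ℝ)^(r-1) * (2*δ^2) := by
      intro i _
      rw [abs_mul]
      exact mul_le_mul (hCub i) (hRb i) (abs_nonneg _) (by positivity)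
    calc |(∑ i, jackCoeff ns i *
          (bernstein' (ns i) f p - (ns i:ℝ)*p*(1-p)^(ns i - 1) * f (1/((ns i : ℕ):ℝ)))) - f p|
        ≤ |∑ i, jackCoeff ns i *
          (bernstein' (ns i) f p - (ns i:ℝ)*p*(1-p)^(ns i - 1) * f (1/((ns i : ℕ):ℝ)))| + |f p| := by
          rw [sub_eq_add_neg]
          refine le_trans (abs_add_le _ _) ?_
          rw [abs_neg]
      _ ≤ (∑ i, |jackCoeff ns i *
          (bernstein' (ns i) f p - (ns i:ℝ)*p*(1-p)^(ns i - 1) * f (1/((ns i : ℕ):ℝ)))|) + 1 :=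
          add_le_add (Finset.abs_sum_le_sum_abs _ _) hfp
      _ ≤ (∑ _i : Fin r, (n:ℝ)^(r-1) * (2*δ^2)) + 1 := add_le_add (Finset.sum_le_sum h2) le_rfl
      _ = (r:ℝ) * ((n:ℝ)^(r-1) * (2*δ^2)) + 1 := by
          rw [Finset.sum_const, Finset.card_univ, Fintype.card_fin, nsmul_eq_mul]
      _ = 2*(r:ℝ)*δ^2*(n:ℝ)^(r-1) + 1 := by ring
  have hcoef : δ/(4*K) - 2*(r:ℝ)*δ^2 = 2*c := by
    rw [hδ, hc]; field_simp; ring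
  have hpow_n : (n:ℝ) ≤ (n:ℝ)^(r-1) := by
    calc (n:ℝ) = (n:ℝ)^1 := (pow_one _).symm
      _ ≤ (n:ℝ)^(r-1) := pow_le_pow_right₀ hn1R (by omega)
  have hc1 : 1 ≤ c * (n:ℝ)^(r-1) := by
    have h1 : c * (256*(r:ℝ)*K^2) = 1 := by rw [hc]; field_simp
    have h2 : c * (256*(r:ℝ)*K^2) ≤ c * n := mul_le_mul_of_nonneg_left hnR hc0.le
    have h3 : c * (n:ℝ) ≤ c * (n:ℝ)^(r-1) := mul_le_mul_of_nonneg_left hpow_n hc0.le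
    linarith
  have hSval : c * (n:ℝ)^(r-1) ≤ |(∑ i, jackCoeff ns i * bernstein' (ns i) f p) - f p| := by
    set T := jackCoeff ns i0 * ((ns i0:ℝ)*p*(1-p)^(ns i0 - 1)) with hT
    set E := ∑ i, jackCoeff ns i *
        (bernstein' (ns i) f p - (ns i:ℝ)*p*(1-p)^(ns i - 1) * f (1/((ns i : ℕ):ℝ))) with hE
    have hval : (∑ i, jackCoeff ns i * bernstein' (ns i) f p) - f p = T + (E - f p) := by
      rw [hsum]; ring
    rw [hval]
    have htri : |T| - |E - f p| ≤ |T + (E - f p)| := by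
      have hb : |T| ≤ |T + (E - f p)| + |E - f p| := by
        calc |T| = |(T + (E - f p)) + (-(E - f p))| := by ring_nf
          _ ≤ |T + (E - f p)| + |(-(E - f p))| := abs_add_le _ _
          _ = |T + (E - f p)| + |E - f p| := by rw [abs_neg]
      linarith
    have heq : δ/(4*K) * (n:ℝ)^(r-1) - 2*(r:ℝ)*δ^2*(n:ℝ)^(r-1) = 2*c*(n:ℝ)^(r-1) := by
      rw [← hcoef]; ring
    nlinarith [hTlb, hEb, htri, hc1]
  have hmemp : p ∈ Set.Icc (0:ℝ) 1 := ⟨hp0.le, hp1⟩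
  have hbdd : BddAbove ((fun q => |(∑ i, jackCoeff ns i * bernstein' (ns i) f q) - f q|)
      '' Set.Icc (0:ℝ) 1) := by
    refine ⟨(∑ i, |jackCoeff ns i|) + 1, ?_⟩
    rintro y ⟨q, hq, rfl⟩
    have hb : ∀ i ∈ Finset.univ, |jackCoeff ns i * bernstein' (ns i) f q| ≤ |jackCoeff ns i| := by
      intro i _
      rw [abs_mul]
      exact mul_le_of_le_one_right (abs_nonneg _) (bern_abs_le (ns i) f hf0 hf1 hq.1 hq.2)
    have h4 : |f q| ≤ 1 := abs_le.2 ⟨by linarith [hf0 q], hf1 q⟩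
    calc |(∑ i, jackCoeff ns i * bernstein' (ns i) f q) - f q|
        ≤ |∑ i, jackCoeff ns i * bernstein' (ns i) f q| + |f q| := by
          rw [sub_eq_add_neg]
          refine le_trans (abs_add_le _ _) ?_
          rw [abs_neg]
      _ ≤ (∑ i, |jackCoeff ns i * bernstein' (ns i) f q|) + 1 :=
          add_le_add (Finset.abs_sum_le_sum_abs _ _) h4
      _ ≤ (∑ i, |jackCoeff ns i|) + 1 := add_le_add (Finset.sum_le_sum hb) le_rfl
  refine le_trans hSval ?_
  unfold jackBias
  exact le_csSup hbdd ⟨p, hmemp, rfl⟩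
end

section
/- For every integer n ≥ 4, there exists a continuous function f : [0,1] → ℝ with sup_{x∈[0,1]} |f(x)| ≤ 1 (depending on n) such that the delete-1 2-jackknife estimator f̂_2, defined on X ∈ {0,1,…,n} by f̂_2(X) = n f(X/n) − ((n−1)/n) [ (n−X) f(X/(n−1)) + X f((X−1)/(n−1)) ] (where the term X f((X−1)/(n−1)) is 0 when X = 0), satisfies sup_{p∈[0,1]} Var_{X∼Binomial(n,p)}( f̂_2(X) ) ≥ n²/e. -/
/-- Expectation `E[g(X)]` for `X ∼ Binomial(n,p)`. -/
noncomputable def binomExp (n : ℕ) (p : ℝ) (g : ℕ → ℝ) : ℝ :=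
  ∑ k ∈ Finset.range (n + 1), (n.choose k : ℝ) * p ^ k * (1 - p) ^ (n - k) * g k

/-- Variance `Var(g(X))` for `X ∼ Binomial(n,p)`. -/
noncomputable def binomVar (n : ℕ) (p : ℝ) (g : ℕ → ℝ) : ℝ :=
  binomExp n p (fun k => (g k) ^ 2) - (binomExp n p g) ^ 2

/-- The delete-1 2-jackknife estimator built from `X ∼ Binomial(n,p)`:
`f̂₂(X) = n f(X/n) − ((n−1)/n)[(n−X) f(X/(n−1)) + X f((X−1)/(n−1))]`. -/
noncomputable def jack2Est (n : ℕ) (f : ℝ → ℝ) (X : ℕ) : ℝ :=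
  (n : ℝ) * f ((X : ℝ) / n) -
    (((n : ℝ) - 1) / n) *
      (((n : ℝ) - X) * f ((X : ℝ) / ((n : ℝ) - 1)) +
        (X : ℝ) * f (((X : ℝ) - 1) / ((n : ℝ) - 1)))

open Finset

/-- Sum of disjoint tents: value `(-1)^k` at `k/n` for `0<k<n`, vanishing at all
multiples of `1/(n-1)`. -/
noncomputable def tentf (n : ℕ) (x : ℝ) : ℝ :=
  ∑ k ∈ Finset.Ioo 0 n, (-1 : ℝ) ^ k * max 0 (1 - 2 * (n : ℝ) ^ 2 * |x - k / n|)

lemma tentf_abs_le (n : ℕ) (hn : 2 ≤ n) (x : ℝ) : |tentf n x| ≤ 1 := by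
  have hnR : (2 : ℝ) ≤ (n : ℝ) := by exact_mod_cast hn
  by_cases h : ∃ k₀ ∈ Finset.Ioo 0 n, (0:ℝ) < 1 - 2 * (n : ℝ) ^ 2 * |x - k₀ / n|
  · obtain ⟨k₀, hk₀, hpos⟩ := h
    rw [tentf, Finset.sum_eq_single_of_mem k₀ hk₀ ?_]
    · rw [abs_mul, abs_pow, abs_neg, abs_one, one_pow, one_mul,
        abs_of_nonneg (le_max_left _ _)]
      apply max_le (by norm_num)
      nlinarith [abs_nonneg (x - (k₀:ℝ)/n), sq_nonneg (n:ℝ)]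
    · intro b hb hne
      have hb' := Finset.mem_Ioo.mp hb
      have hk' := Finset.mem_Ioo.mp hk₀
      rw [mul_eq_zero]; right
      rw [max_eq_left_iff]
      by_contra hcon
      push_neg at hcon
      have hd1 : |x - (k₀:ℝ)/n| < 1 / (2 * (n:ℝ)^2) := by
        rw [lt_div_iff₀ (by positivity)]; nlinarith
      have hd2 : |x - (b:ℝ)/n| < 1 / (2 * (n:ℝ)^2) := by
        rw [lt_div_iff₀ (by positivity)]; nlinarith
      have htri : |(k₀:ℝ)/n - b/n| ≤ |x - (k₀:ℝ)/n| + |x - (b:ℝ)/n| := by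
        calc |(k₀:ℝ)/n - b/n| = |(x - (b:ℝ)/n) - (x - (k₀:ℝ)/n)| := by ring_nf
          _ ≤ |x - (b:ℝ)/n| + |x - (k₀:ℝ)/n| := abs_sub _ _
          _ = _ := by ring
      have hone : (1:ℝ) ≤ |(k₀:ℝ) - b| := by
        have : ((k₀:ℤ) - b) ≠ 0 := by
          intro hz; apply hne; exact_mod_cast (by omega : (b:ℤ) = (k₀:ℤ))
        have := Int.one_le_abs this
        calc (1:ℝ) = ((1:ℤ):ℝ) := by norm_num
          _ ≤ |(((k₀:ℤ) - b : ℤ) : ℝ)| := by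
              rw [← Int.cast_abs]; exact_mod_cast this
          _ = |(k₀:ℝ) - b| := by push_cast; ring_nf
      have hgap : 1/(n:ℝ) ≤ |(k₀:ℝ)/n - b/n| := by
        rw [div_sub_div_same, abs_div, abs_of_pos (by positivity : (0:ℝ) < (n:ℝ))]
        apply div_le_div_of_nonneg_right ?_ (by positivity)
        · exact hone
      have hnn : (1:ℝ)/(n:ℝ)^2 < 1/(n:ℝ) := by
        apply div_lt_div_of_pos_left one_pos (by positivity)
        nlinarith
      have hsum : 1/(2*(n:ℝ)^2) + 1/(2*(n:ℝ)^2) = 1/(n:ℝ)^2 := by ring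
      linarith
  · push_neg at h
    rw [tentf, Finset.sum_eq_zero, abs_zero]
    · norm_num
    · intro k hk
      rw [mul_eq_zero]; right
      exact max_eq_left (h k hk)

lemma nat_abs_one_le {a b : ℕ} (h : a ≠ b) : (1:ℝ) ≤ |(a:ℝ) - b| := by
  have hz : ((a:ℤ) - b) ≠ 0 := by
    intro hz; exact h (by exact_mod_cast (by omega : (a:ℤ) = (b:ℤ)))
  have h1 := Int.one_le_abs hz
  calc (1:ℝ) = ((1:ℤ):ℝ) := by norm_num
    _ ≤ |(((a:ℤ) - b : ℤ) : ℝ)| := by rw [← Int.cast_abs]; exact_mod_cast h1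
    _ = |(a:ℝ) - b| := by push_cast; ring_nf

lemma tentf_grid_n (n : ℕ) (hn : 2 ≤ n) (j : ℕ) (h1 : 0 < j) (h2 : j < n) :
    tentf n ((j:ℝ)/n) = (-1:ℝ)^j := by
  have hnR : (2:ℝ) ≤ (n:ℝ) := by exact_mod_cast hn
  have hn0 : (0:ℝ) < (n:ℝ) := by linarith
  rw [tentf, Finset.sum_eq_single_of_mem j (Finset.mem_Ioo.mpr ⟨h1, h2⟩)]
  · have h0 : |(j:ℝ)/n - j/n| = 0 := by simp
    rw [h0]; norm_num
  · intro b hb hne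
    rw [mul_eq_zero]; right
    rw [max_eq_left_iff]
    have hone : (1:ℝ) ≤ |(j:ℝ) - b| := nat_abs_one_le (show j ≠ b from fun hh => hne hh.symm)
    have heq : |(j:ℝ)/n - b/n| = |(j:ℝ) - b|/n := by
      rw [div_sub_div_same, abs_div, abs_of_pos hn0]
    rw [heq]
    have h3 : 2*(n:ℝ)^2*(|(j:ℝ) - b|/n) = 2*n*|(j:ℝ) - b| := by
      field_simp
    rw [h3]
    nlinarith

lemma tentf_grid_n1 (n : ℕ) (hn : 2 ≤ n) (j : ℕ) (hj : j ≤ n - 1) :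
    tentf n ((j:ℝ)/((n:ℝ)-1)) = 0 := by
  have hnR : (2:ℝ) ≤ (n:ℝ) := by exact_mod_cast hn
  have hn0 : (0:ℝ) < (n:ℝ) := by linarith
  have hn1 : (0:ℝ) < (n:ℝ) - 1 := by linarith
  rw [tentf]
  apply Finset.sum_eq_zero
  intro k hk
  obtain ⟨hk1, hk2⟩ := Finset.mem_Ioo.mp hk
  rw [mul_eq_zero]; right
  rw [max_eq_left_iff]
  set A : ℤ := (j:ℤ)*n - (k:ℤ)*((n:ℤ)-1) with hA_def
  have hA : A ≠ 0 := by
    intro hz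
    have hznat : j * n = k * (n-1) := by
      have : ((j*n : ℕ) : ℤ) = ((k*(n-1) : ℕ) : ℤ) := by
        push_cast [Nat.cast_sub (by omega : 1 ≤ n)]
        rw [hA_def] at hz; linarith [hz]
      exact_mod_cast this
    have hdvd : n ∣ k * (n-1) := ⟨j, by rw [← hznat]; ring⟩
    have hcop : Nat.Coprime n (n-1) := by
      have h := (by simp : Nat.Coprime ((n-1)+1) (n-1))
      rwa [Nat.sub_add_cancel (by omega : 1 ≤ n)] at h
    have hnk : n ∣ k := hcop.dvd_of_dvd_mul_right hdvd
    have := Nat.le_of_dvd hk1 hnk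
    omega
  have hone : (1:ℝ) ≤ |(j:ℝ)*n - k*((n:ℝ)-1)| := by
    have h1 := Int.one_le_abs hA
    calc (1:ℝ) = ((1:ℤ):ℝ) := by norm_num
      _ ≤ |((A : ℤ) : ℝ)| := by rw [← Int.cast_abs]; exact_mod_cast h1
      _ = |(j:ℝ)*n - k*((n:ℝ)-1)| := by rw [hA_def]; push_cast; ring_nf
  have heq : (j:ℝ)/((n:ℝ)-1) - k/n = ((j:ℝ)*n - k*((n:ℝ)-1))/(((n:ℝ)-1)*n) := by
    field_simp
  have hd : 1 ≤ (((n:ℝ)-1)*n) * |(j:ℝ)/((n:ℝ)-1) - k/n| := by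
    rw [heq, abs_div, abs_of_pos (by positivity : (0:ℝ) < ((n:ℝ)-1)*n),
      mul_div_cancel₀ _ (by positivity : ((n:ℝ)-1)*(n:ℝ) ≠ 0)]
    exact hone
  nlinarith [abs_nonneg ((j:ℝ)/((n:ℝ)-1) - k/n)]

lemma tentf_continuous (n : ℕ) : Continuous (tentf n) := by
  unfold tentf
  apply continuous_finset_sum
  intro i _
  exact continuous_const.mul (continuous_const.max
    (continuous_const.sub (continuous_const.mul
      ((continuous_id.sub continuous_const).abs))))

lemma jack_zero (n : ℕ) (hn : 4 ≤ n) : jack2Est n (tentf n) 0 = 0 := by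
  have h0 : tentf n 0 = 0 := by
    have := tentf_grid_n1 n (by omega) 0 (by omega)
    simpa using this
  simp [jack2Est, h0]

lemma jack_n (n : ℕ) (hn : 4 ≤ n) : jack2Est n (tentf n) n = 0 := by
  have hn0 : (n:ℝ) ≠ 0 := by positivity
  have hn1 : (n:ℝ) - 1 ≠ 0 := by
    have : (4:ℝ) ≤ (n:ℝ) := by exact_mod_cast hn
    intro h; linarith
  have h1 : tentf n 1 = 0 := by
    have := tentf_grid_n1 n (by omega) (n-1) le_rfl
    rw [Nat.cast_sub (by omega : 1 ≤ n), Nat.cast_one, div_self hn1] at this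
    exact this
  simp only [jack2Est]
  rw [div_self hn0, div_self hn1, h1, sub_self]
  ring

lemma jack_mid (n : ℕ) (hn : 4 ≤ n) (k : ℕ) (h1 : 0 < k) (h2 : k < n) :
    jack2Est n (tentf n) k = (n:ℝ) * (-1:ℝ)^k := by
  have ha := tentf_grid_n n (by omega) k h1 h2
  have hb := tentf_grid_n1 n (by omega) k (by omega)
  have hc := tentf_grid_n1 n (by omega) (k-1) (by omega)
  have hcast : ((k:ℝ) - 1) = ((k-1:ℕ):ℝ) := by
    rw [Nat.cast_sub h1, Nat.cast_one]
  simp only [jack2Est]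
  rw [ha, hb, hcast, hc]
  ring

lemma half_pow (n k : ℕ) (hk : k ≤ n) : (1/2:ℝ)^k * (1 - 1/2:ℝ)^(n-k) = (1/2:ℝ)^n := by
  have : (1 - 1/2 : ℝ) = 1/2 := by norm_num
  rw [this, ← pow_add, Nat.add_sub_cancel' hk]

lemma sum_choose_real (n : ℕ) :
    ∑ k ∈ Finset.range (n+1), (n.choose k : ℝ) = 2^n := by
  have := Nat.sum_range_choose n
  exact_mod_cast congrArg (Nat.cast : ℕ → ℝ) this

lemma alt_sum_choose_real (n : ℕ) (hn : n ≠ 0) :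
    ∑ k ∈ Finset.range (n+1), (-1:ℝ)^k * (n.choose k : ℝ) = 0 := by
  have h := add_pow (-1:ℝ) 1 n
  simp only [one_pow, mul_one, neg_add_cancel] at h
  rw [zero_pow hn] at h
  exact h.symm

lemma exp_g2 (n : ℕ) (hn : 4 ≤ n) :
    binomExp n (1/2) (fun k => (jack2Est n (tentf n) k)^2) =
      (1/2:ℝ)^n * ((n:ℝ)^2 * (2^n - 2)) := by
  unfold binomExp
  have step1 : ∀ k ∈ Finset.range (n+1),
      (n.choose k : ℝ) * (1/2:ℝ)^k * (1 - 1/2:ℝ)^(n-k) * (jack2Est n (tentf n) k)^2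
        = (1/2:ℝ)^n * ((n.choose k : ℝ) * (jack2Est n (tentf n) k)^2) := by
    intro k hk
    have hk' : k ≤ n := by simpa [Nat.lt_succ_iff] using Finset.mem_range.mp hk
    calc (n.choose k : ℝ) * (1/2:ℝ)^k * (1 - 1/2:ℝ)^(n-k) * (jack2Est n (tentf n) k)^2
        = ((1/2:ℝ)^k * (1 - 1/2:ℝ)^(n-k)) * ((n.choose k : ℝ) * (jack2Est n (tentf n) k)^2) := by
          ring
      _ = _ := by rw [half_pow n k hk']
  rw [Finset.sum_congr rfl step1, ← Finset.mul_sum]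
  congr 1
  have step2 : ∀ k ∈ Finset.range (n+1),
      (n.choose k : ℝ) * (jack2Est n (tentf n) k)^2
        = (n.choose k : ℝ) * (n:ℝ)^2 - ((if k = 0 then (n:ℝ)^2 else 0)
            + (if k = n then (n:ℝ)^2 else 0)) := by
    intro k hk
    have hk' : k ≤ n := by simpa [Nat.lt_succ_iff] using Finset.mem_range.mp hk
    by_cases hk0 : k = 0
    · subst hk0
      rw [jack_zero n hn, if_pos rfl, if_neg (by omega)]
      simp
    · by_cases hkn : k = n
      · subst hkn
        rw [jack_n _ hn, if_neg hk0, if_pos rfl]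
        simp
      · rw [jack_mid n hn k (by omega) (by omega), if_neg hk0, if_neg hkn]
        have hsq : ((n:ℝ) * (-1:ℝ)^k)^2 = (n:ℝ)^2 := by
          rw [mul_pow, ← pow_mul, mul_comm k 2, pow_mul, neg_one_sq, one_pow, mul_one]
        rw [hsq]; ring
  rw [Finset.sum_congr rfl step2, Finset.sum_sub_distrib, Finset.sum_add_distrib,
    Finset.sum_ite_eq' _ 0 (fun _ => (n:ℝ)^2), Finset.sum_ite_eq' _ n (fun _ => (n:ℝ)^2),
    if_pos (Finset.mem_range.mpr (by omega)), if_pos (Finset.mem_range.mpr (by omega)),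
    ← Finset.sum_mul, sum_choose_real]
  ring

lemma exp_g (n : ℕ) (hn : 4 ≤ n) :
    binomExp n (1/2) (jack2Est n (tentf n)) =
      (1/2:ℝ)^n * (-(n:ℝ) * (1 + (-1:ℝ)^n)) := by
  unfold binomExp
  have step1 : ∀ k ∈ Finset.range (n+1),
      (n.choose k : ℝ) * (1/2:ℝ)^k * (1 - 1/2:ℝ)^(n-k) * (jack2Est n (tentf n) k)
        = (1/2:ℝ)^n * ((n.choose k : ℝ) * (jack2Est n (tentf n) k)) := by
    intro k hk
    have hk' : k ≤ n := by simpa [Nat.lt_succ_iff] using Finset.mem_range.mp hk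
    calc (n.choose k : ℝ) * (1/2:ℝ)^k * (1 - 1/2:ℝ)^(n-k) * (jack2Est n (tentf n) k)
        = ((1/2:ℝ)^k * (1 - 1/2:ℝ)^(n-k)) * ((n.choose k : ℝ) * (jack2Est n (tentf n) k)) := by
          ring
      _ = _ := by rw [half_pow n k hk']
  rw [Finset.sum_congr rfl step1, ← Finset.mul_sum]
  congr 1
  have step2 : ∀ k ∈ Finset.range (n+1),
      (n.choose k : ℝ) * (jack2Est n (tentf n) k)
        = (n:ℝ) * ((-1:ℝ)^k * (n.choose k : ℝ)) - ((if k = 0 then (n:ℝ) else 0)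
            + (if k = n then (n:ℝ) * (-1:ℝ)^n else 0)) := by
    intro k hk
    by_cases hk0 : k = 0
    · subst hk0
      rw [jack_zero n hn, if_pos rfl, if_neg (by omega)]
      simp
    · by_cases hkn : k = n
      · subst hkn
        rw [jack_n _ hn, if_neg hk0, if_pos rfl]
        simp
      · rw [jack_mid n hn k (by omega), if_neg hk0, if_neg hkn]
        · ring
        · have hk' : k ≤ n := by simpa [Nat.lt_succ_iff] using Finset.mem_range.mp hk
          omega
  rw [Finset.sum_congr rfl step2, Finset.sum_sub_distrib, Finset.sum_add_distrib,
    Finset.sum_ite_eq' _ 0 (fun _ => (n:ℝ)), Finset.sum_ite_eq' _ n (fun _ => (n:ℝ) * (-1:ℝ)^n),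
    if_pos (Finset.mem_range.mpr (by omega)), if_pos (Finset.mem_range.mpr (by omega)),
    ← Finset.mul_sum, alt_sum_choose_real n (by omega)]
  ring

lemma binomExp_continuous (n : ℕ) (g : ℕ → ℝ) : Continuous (fun p => binomExp n p g) := by
  unfold binomExp
  apply continuous_finset_sum
  intro k _
  exact ((continuous_const.mul (continuous_pow k)).mul
    ((continuous_const.sub continuous_id).pow (n-k))).mul continuous_const

/-- for every `n ≥ 4` there is a continuous `f` with `‖f‖ ≤ 1` on `[0,1]`
whose delete-1 2-jackknife estimator has worst-case variance at least `n²/e`. -/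
theorem delete_one_jackknife_bad_variance (n : ℕ) (hn : 4 ≤ n) :
    ∃ f : ℝ → ℝ, ContinuousOn f (Set.Icc 0 1) ∧ (∀ x ∈ Set.Icc (0:ℝ) 1, |f x| ≤ 1) ∧
      (n : ℝ) ^ 2 / Real.exp 1 ≤
        sSup ((fun p => binomVar n p (jack2Est n f)) '' Set.Icc (0:ℝ) 1) := by

  refine ⟨tentf n, (tentf_continuous n).continuousOn,
    fun x _ => tentf_abs_le n (by omega) x, ?_⟩
  have hcont : Continuous (fun p => binomVar n p (jack2Est n (tentf n))) := by
    unfold binomVar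
    exact (binomExp_continuous n _).sub ((binomExp_continuous n _).pow 2)
  have hbdd : BddAbove ((fun p => binomVar n p (jack2Est n (tentf n))) '' Set.Icc (0:ℝ) 1) :=
    isCompact_Icc.bddAbove_image hcont.continuousOn
  have hmem : binomVar n (1/2) (jack2Est n (tentf n)) ∈
      ((fun p => binomVar n p (jack2Est n (tentf n))) '' Set.Icc (0:ℝ) 1) :=
    ⟨1/2, by constructor <;> norm_num, rfl⟩
  refine le_trans ?_ (le_csSup hbdd hmem)
  unfold binomVar
  rw [exp_g2 n hn, exp_g n hn]
  set t := (1/2:ℝ)^n with ht_def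
  have ht0 : 0 < t := by positivity
  have ht16 : t ≤ 1/16 := by
    calc t ≤ (1/2:ℝ)^4 := pow_le_pow_of_le_one (by norm_num) (by norm_num) hn
      _ = 1/16 := by norm_num
  have h2t : t * 2^n = 1 := by rw [ht_def, ← mul_pow]; norm_num
  have hs2 : (1 + (-1:ℝ)^n)^2 ≤ 4 := by
    rcases neg_one_pow_eq_or ℝ n with h | h <;> rw [h] <;> norm_num
  have hexp : (2:ℝ) ≤ Real.exp 1 := by
    have := Real.exp_one_gt_d9; linarith
  have hstep : (n:ℝ)^2 / Real.exp 1 ≤ (n:ℝ)^2 / 2 := by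
    gcongr
    all_goals first | positivity | norm_num
  refine hstep.trans ?_
  have hexpand : t*((n:ℝ)^2*(2^n - 2)) = (n:ℝ)^2*(1 - 2*t) := by
    calc t*((n:ℝ)^2*((2:ℝ)^n - 2)) = (n:ℝ)^2*(t*2^n) - 2*t*(n:ℝ)^2 := by ring
      _ = (n:ℝ)^2*(1 - 2*t) := by rw [h2t]; ring
  rw [hexpand]
  have hsq : (t * (-(n:ℝ)*(1+(-1:ℝ)^n)))^2 = t^2 * ((n:ℝ)^2 * (1+(-1:ℝ)^n)^2) := by ring
  have hscalar : (1:ℝ)/2 ≤ (1 - 2*t) - t^2*(1+(-1:ℝ)^n)^2 := by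
    nlinarith [mul_nonneg (sub_nonneg.mpr ht16) ht0.le, sq_nonneg t,
      mul_nonneg (sub_nonneg.mpr hs2) (sq_nonneg t)]
  nlinarith [mul_le_mul_of_nonneg_left hscalar (sq_nonneg (n:ℝ)), hsq]
end

section
/- Fix integers r ≥ 2 and s with 1 ≤ s ≤ 2r−3. There exist a constant c > 0 and N ∈ ℕ, depending only on r and s, such that for every n ≥ N there exists a function f ∈ C^s([0,1]) with sup_{x∈[0,1]} |f^{(i)}(x)| ≤ 1 for all 0 ≤ i ≤ s, such that the delete-1 r-jackknife bias satisfies sup_{p∈[0,1]} |Σ_{i=1}^r C_i B_{n−r+i}[f](p) − f(p)| ≥ c n^{r−1−s}, where C_i are the jackknife coefficients for the sample sizes n_i = n − r + i. -/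
open Real

-- auxiliary lemmas
lemma aux_iterwithin_eq {f : ℝ → ℝ} (hf : ContDiff ℝ (⊤ : ℕ∞) f) (i : ℕ) {x : ℝ}
    (hx : x ∈ Set.Icc (0:ℝ) 1) :
    iteratedDerivWithin i f (Set.Icc 0 1) x = iteratedDeriv i f x := by
  have h1 : HasFTaylorSeriesUpTo (⊤ : ℕ∞) f (ftaylorSeries ℝ f) := contDiff_iff_ftaylorSeries.mp hf
  have h2 := (h1.hasFTaylorSeriesUpToOn (Set.Icc 0 1)).eq_iteratedFDerivWithin_of_uniqueDiffOn
    (m := i) (by exact_mod_cast le_top) (uniqueDiffOn_Icc zero_lt_one) hx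
  rw [iteratedDerivWithin_eq_iteratedFDerivWithin, iteratedDeriv_eq_iteratedFDeriv, ← h2]
  rfl

lemma aux_iterDeriv_acos (a c : ℝ) (i : ℕ) :
    iteratedDeriv i (fun x => a * Real.cos (c * x)) =
      fun x => a * c ^ i * Real.cos (c * x + i * (π / 2)) := by
  induction i with
  | zero => simp
  | succ i ih =>
    rw [iteratedDeriv_succ, ih]
    funext x
    have hd : ∀ y : ℝ, HasDerivAt (fun x => a * c ^ i * Real.cos (c * x + i * (π / 2)))
        (a * c ^ i * (-Real.sin (c * y + i * (π / 2)) * c)) y := by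
      intro y
      have h1 : HasDerivAt (fun x : ℝ => c * x + i * (π / 2)) c y := by
        simpa using ((hasDerivAt_id y).const_mul c).add_const ((i : ℝ) * (π / 2))
      exact ((Real.hasDerivAt_cos _).comp y h1).const_mul _
    rw [(hd x).deriv]
    have h2 : c * x + ((i:ℕ)+1 : ℕ) * (π / 2) = (c * x + i * (π/2)) + π/2 := by
      push_cast; ring
    rw [h2, Real.cos_add_pi_div_two]
    ring

lemma aux_half_exp (w : ℂ) : (1/2 : ℂ) * Complex.exp (2*w*Complex.I) + 1/2 =
    Complex.exp (w*Complex.I) * Complex.cos w := by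
  have h1 : Complex.exp (w*Complex.I) * Complex.exp (w*Complex.I) = Complex.exp (2*w*Complex.I) := by
    rw [← Complex.exp_add]; ring_nf
  have h2 : Complex.exp (w*Complex.I) * Complex.exp (-w*Complex.I) = 1 := by
    rw [← Complex.exp_add]; simp [← sub_eq_add_neg]
  rw [Complex.cos, mul_div_assoc', mul_add, h1, h2]
  ring

lemma aux_bern_cos (m d : ℕ) (hm : 1 ≤ m) :
    bernstein' m (fun x => Real.cos (2 * π * ((m : ℝ) + d) * x)) (1/2) =
      (-1 : ℝ)^d * Real.cos (π * d / m) ^ m := by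
  have hm0 : (m : ℝ) ≠ 0 := Nat.cast_ne_zero.mpr (by omega)
  have hm0' : (m : ℂ) ≠ 0 := Nat.cast_ne_zero.mpr (by omega)
  set θ : ℝ := π * ((m:ℝ) + d) / m with hθ
  have hre : bernstein' m (fun x => Real.cos (2 * π * ((m : ℝ) + d) * x)) (1/2) =
      (((1/2 : ℂ) * Complex.exp (2*(θ:ℂ)*Complex.I) + 1/2)^m).re := by
    rw [add_pow]
    rw [Complex.re_sum]
    unfold bernstein'
    refine Finset.sum_congr rfl fun k hk => ?_
    have hzk : ((1/2 : ℂ) * Complex.exp (2*(θ:ℂ)*Complex.I))^k * (1/2)^(m-k) * (m.choose k : ℂ)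
        = (((m.choose k : ℝ) * (1/2:ℝ)^k * (1/2:ℝ)^(m-k) : ℝ) : ℂ) *
          Complex.exp ((2*θ*k : ℝ)*Complex.I) := by
      rw [mul_pow, ← Complex.exp_nat_mul,
        show ((k:ℂ) * (2*(θ:ℂ)*Complex.I)) = ((2*θ*(k:ℕ) : ℝ):ℂ)*Complex.I by push_cast; ring]
      push_cast
      ring
    rw [hzk, Complex.re_ofReal_mul, Complex.exp_ofReal_mul_I_re]
    dsimp only
    have harg : 2 * π * ((m : ℝ) + d) * ((k:ℝ) / m) = 2*θ*k := by
      rw [hθ]; ring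
    rw [harg, show (1:ℝ) - 1/2 = 1/2 by norm_num]
  rw [hre, aux_half_exp, mul_pow, ← Complex.exp_nat_mul]
  have hre2 : (m:ℝ) * θ = ((m+d : ℕ):ℝ) * π := by
    rw [hθ]; field_simp; push_cast; ring
  have hmθ : (m : ℂ) * ((θ:ℂ) * Complex.I) = ((m+d : ℕ) : ℂ) * ((π : ℂ) * Complex.I) := by
    rw [← mul_assoc, show ((m:ℂ) * (θ:ℂ)) = (((m:ℝ) * θ : ℝ) : ℂ) by push_cast; ring, hre2]
    push_cast
    ring
  have hexp : Complex.exp ((m:ℂ) * ((θ:ℂ)*Complex.I)) = ((-1 : ℝ)^(m+d) : ℝ) := by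
    rw [hmθ, Complex.exp_nat_mul, Complex.exp_pi_mul_I]
    push_cast
    ring
  have hcos : Real.cos θ = - Real.cos (π * d / m) := by
    have h5 : θ = π + π * d / m := by rw [hθ, mul_add, add_div, mul_div_cancel_right₀ _ hm0]
    rw [h5, Real.cos_add]
    simp
  rw [hexp, ← Complex.ofReal_cos, hcos]
  have hc2 : ((-Real.cos (π * ↑d / ↑m) : ℝ) : ℂ) ^ m = (((-Real.cos (π * ↑d / ↑m)) ^ m : ℝ) : ℂ) := by
    push_cast; ring
  rw [hc2, ← Complex.ofReal_mul, Complex.ofReal_re, neg_pow]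
  have hsign : (-1:ℝ)^(m+d) * (-1:ℝ)^m = (-1:ℝ)^d := by
    rw [← pow_add, show m+d+m = 2*m+d by ring, pow_add, pow_mul]; norm_num
  linear_combination (Real.cos (π*(d:ℝ)/(m:ℝ)))^m * hsign

lemma aux_bern_const_mul (m : ℕ) (a : ℝ) (g : ℝ → ℝ) (p : ℝ) :
    bernstein' m (fun x => a * g x) p = a * bernstein' m g p := by
  unfold bernstein'
  rw [Finset.mul_sum]
  exact Finset.sum_congr rfl fun k _ => by ring

lemma aux_bern_cont (m : ℕ) (g : ℝ → ℝ) : Continuous (fun p => bernstein' m g p) := by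
  unfold bernstein'
  exact continuous_finset_sum _ fun k _ =>
    ((continuous_const.mul (continuous_pow k)).mul
      ((continuous_const.sub continuous_id).pow (m-k))).mul continuous_const

/-- for `1 ≤ s ≤ 2r-3`, there are `c > 0`, `N` such that for every `n ≥ N`
some `f ∈ C^s([0,1])` with all derivatives up to order `s` bounded by `1` has delete-1
`r`-jackknife bias at least `c n^{r-1-s}`. -/
theorem delete_one_jackknife_Ds_converse (r s : ℕ) (hr : 2 ≤ r) (hs1 : 1 ≤ s)
    (hs2 : s ≤ 2 * r - 3) :
    ∃ c > 0, ∃ N : ℕ, ∀ n ≥ N, ∃ f : ℝ → ℝ,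
      ContDiffOn ℝ s f (Set.Icc 0 1) ∧
      (∀ i ≤ s, ∀ x ∈ Set.Icc (0:ℝ) 1, |iteratedDerivWithin i f (Set.Icc 0 1) x| ≤ 1) ∧
      c * (n : ℝ) ^ ((r : ℝ) - 1 - (s : ℝ)) ≤
        jackBias (fun i : Fin r => n - r + 1 + i.val) f := by
  have hπ : (0:ℝ) < π := Real.pi_pos
  refine ⟨(2 * (2*π)^s * (r:ℝ)^(r-1))⁻¹, by positivity, 3*r, fun n hn => ?_⟩
  have hn3 : 3*r ≤ n := hn
  have hnr : r ≤ n := by omega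
  have hn1 : 1 ≤ n := by omega
  have hA : (0:ℝ) < n := by exact_mod_cast Nat.pos_of_ne_zero (by omega)
  set c : ℝ := 2 * π * n with hc
  have hc1 : (1:ℝ) ≤ c := by
    rw [hc]
    nlinarith [Real.pi_gt_three, (by exact_mod_cast hn1 : (1:ℝ) ≤ (n:ℝ))]
  have hc0 : (0:ℝ) < c := lt_of_lt_of_le one_pos hc1
  set a : ℝ := (c^s)⁻¹ with ha
  have ha0 : 0 < a := by positivity
  refine ⟨fun x => a * Real.cos (c * x), ?_, ?_, ?_⟩
  · have hf : ContDiff ℝ (⊤ : ℕ∞) (fun x => a * Real.cos (c * x)) :=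
      contDiff_const.mul (Real.contDiff_cos.comp (contDiff_const.mul contDiff_id))
    exact (hf.of_le (by exact_mod_cast le_top)).contDiffOn
  · intro i hi x hx
    have hf : ContDiff ℝ (⊤ : ℕ∞) (fun x => a * Real.cos (c * x)) :=
      contDiff_const.mul (Real.contDiff_cos.comp (contDiff_const.mul contDiff_id))
    rw [aux_iterwithin_eq hf i hx, aux_iterDeriv_acos]
    have h1 : |a * c ^ i * Real.cos (c * x + i * (π/2))| ≤ a * c ^ i := by
      rw [abs_mul]
      calc |a * c ^ i| * |Real.cos (c * x + i * (π/2))| ≤ |a * c^i| * 1 :=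
            mul_le_mul_of_nonneg_left (Real.abs_cos_le_one _) (abs_nonneg _)
        _ = a * c ^ i := by rw [mul_one, abs_of_nonneg (by positivity)]
    refine h1.trans ?_
    have h2 : c ^ i ≤ c ^ s := pow_le_pow_right₀ hc1 hi
    calc a * c ^ i ≤ a * c ^ s := mul_le_mul_of_nonneg_left h2 (le_of_lt ha0)
      _ = 1 := by rw [ha]; field_simp
  · set ns : Fin r → ℕ := fun i => n - r + 1 + i.val with hns
    set f : ℝ → ℝ := fun x => a * Real.cos (c * x) with hf
    have hns1 : ∀ i : Fin r, 1 ≤ ns i := fun i => by simp only [hns]; omega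
    set d : Fin r → ℕ := fun i => r - 1 - i.val with hd
    have hnd : ∀ i : Fin r, ns i + d i = n := fun i => by
      have := i.isLt; simp only [hns, hd]; omega
    -- Bernstein values at 1/2
    have hbern : ∀ i : Fin r, bernstein' (ns i) f (1/2)
        = a * ((-1:ℝ)^(d i) * Real.cos (π * (d i) / (ns i)) ^ (ns i)) := by
      intro i
      have hcast : ((ns i : ℝ) + (d i : ℝ)) = (n:ℝ) := by
        exact_mod_cast congrArg (Nat.cast : ℕ → ℝ) (hnd i)
      have hb := aux_bern_cos (ns i) (d i) (hns1 i)
      rw [hcast] at hb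
      have hfe : f = fun x => a * Real.cos (2 * π * (n:ℝ) * x) := by
        funext x; rw [hf]
      rw [hfe, aux_bern_const_mul, hb]
    -- coefficients with simplified denominators
    have hcoeff : ∀ i : Fin r, jackCoeff ns i
        = ∏ j ∈ Finset.univ.erase i, (ns i : ℝ) / ((i.val:ℝ) - (j.val:ℝ)) := by
      intro i
      unfold jackCoeff
      refine Finset.prod_congr rfl fun j _ => ?_
      have h1 : (ns i : ℝ) - (ns j : ℝ) = (i.val : ℝ) - (j.val : ℝ) := by
        have e1 : ns i = (n - r + 1) + i.val := rfl
        have e2 : ns j = (n - r + 1) + j.val := rfl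
        rw [e1, e2]; push_cast; ring
      rw [h1]
    have hfilter : ∀ i : Fin r,
        (Finset.univ.erase i).filter (fun j => i < j) = Finset.Ioi i := by
      intro i
      ext j
      simp only [Finset.mem_filter, Finset.mem_erase, Finset.mem_univ, Finset.mem_Ioi,
        and_true, true_and]
      exact ⟨fun h => h.2, fun h => ⟨h.ne', h⟩⟩
    -- sign of the coefficients
    have hsign : ∀ i : Fin r, 0 ≤ (-1:ℝ)^(d i) * jackCoeff ns i := by
      intro i
      have key : (-1:ℝ)^(d i) * jackCoeff ns i
          = ∏ j ∈ Finset.univ.erase i,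
              ((if i < j then (-1:ℝ) else 1) * ((ns i : ℝ) / ((i.val:ℝ) - (j.val:ℝ)))) := by
        rw [Finset.prod_mul_distrib, Finset.prod_ite, Finset.prod_const, Finset.prod_const_one,
          hfilter i, Fin.card_Ioi, ← hcoeff i, mul_one]
      rw [key]
      refine Finset.prod_nonneg fun j hj => ?_
      rcases lt_or_ge i j with h | h
      · rw [if_pos h]
        have hlt : (i.val:ℝ) - (j.val:ℝ) < 0 := by
          have h1 : i.val < j.val := h
          have h2 : (i.val:ℝ) < (j.val:ℝ) := by exact_mod_cast h1
          linarith
        have h3 : (ns i : ℝ) / ((i.val:ℝ) - (j.val:ℝ)) ≤ 0 :=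
          div_nonpos_of_nonneg_of_nonpos (by positivity) (le_of_lt hlt)
        linarith
      · rw [if_neg (not_lt.mpr h)]
        have hne : j ≠ i := (Finset.mem_erase.mp hj).1
        have hlt : j < i := lt_of_le_of_ne h hne
        have hpos : (0:ℝ) < (i.val:ℝ) - (j.val:ℝ) := by
          have h1 : j.val < i.val := hlt
          have h2 : (j.val:ℝ) < (i.val:ℝ) := by exact_mod_cast h1
          linarith
        have h3 : 0 ≤ (ns i : ℝ) / ((i.val:ℝ) - (j.val:ℝ)) :=
          div_nonneg (by positivity) (le_of_lt hpos)
        simpa using h3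
    -- the top coefficient
    set i₀ : Fin r := ⟨r-1, by omega⟩ with hi₀
    have hnsi₀ : ns i₀ = n := by simp only [hns, hi₀]; omega
    have hdi₀ : d i₀ = 0 := by simp only [hd, hi₀]; omega
    have hcoeff₀ : ((n:ℝ)/r)^(r-1) ≤ jackCoeff ns i₀ := by
      rw [hcoeff i₀]
      have hcard : (Finset.univ.erase i₀).card = r - 1 := by
        rw [Finset.card_erase_of_mem (Finset.mem_univ _), Finset.card_univ, Fintype.card_fin]
      calc ((n:ℝ)/r)^(r-1) = ∏ _j ∈ Finset.univ.erase i₀, ((n:ℝ)/r) := by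
            rw [Finset.prod_const, hcard]
        _ ≤ ∏ j ∈ Finset.univ.erase i₀, (ns i₀ : ℝ) / ((i₀.val:ℝ) - (j.val:ℝ)) := by
            refine Finset.prod_le_prod (fun j _ => by positivity) (fun j hj => ?_)
            have hne : j ≠ i₀ := (Finset.mem_erase.mp hj).1
            have hjlt : j.val < r - 1 := by
              have h1 : j.val < r := j.isLt
              have h2 : j.val ≠ r - 1 := fun hcontra =>
                hne (Fin.ext (show j.val = i₀.val from hcontra))
              omega
            have hD : (i₀.val:ℝ) - (j.val:ℝ) = ((r - 1 - j.val : ℕ) : ℝ) := by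
              have hi : i₀.val = r - 1 := rfl
              rw [hi]
              push_cast [Nat.cast_sub (by omega : j.val ≤ r - 1),
                Nat.cast_sub (by omega : 1 ≤ r)]
              ring
            rw [hnsi₀, hD]
            have h1 : (0:ℝ) < ((r - 1 - j.val : ℕ) : ℝ) := by
              exact_mod_cast (by omega : 0 < r - 1 - j.val)
            have h2 : ((r - 1 - j.val : ℕ) : ℝ) ≤ (r:ℝ) := by
              exact_mod_cast (by omega : r - 1 - j.val ≤ r)
            gcongr
    -- nonnegativity of every term
    have hterm : ∀ i : Fin r, 0 ≤ jackCoeff ns i * bernstein' (ns i) f (1/2) := by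
      intro i
      rw [hbern i]
      have hnspos : (0:ℝ) < (ns i : ℝ) := by exact_mod_cast hns1 i
      have h2d : 2 * d i ≤ ns i := by
        have h1 : d i ≤ r - 1 := by simp only [hd]; omega
        have h2 : n - r + 1 ≤ ns i := by simp only [hns]; omega
        omega
      have hcosnn : 0 ≤ Real.cos (π * (d i) / (ns i)) := by
        apply Real.cos_nonneg_of_mem_Icc
        constructor
        · have : (0:ℝ) ≤ π * (d i) / (ns i) := by positivity
          linarith
        · rw [div_le_iff₀ hnspos]
          have h3 : (2:ℝ) * (d i) ≤ (ns i : ℝ) := by exact_mod_cast h2d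
          nlinarith
      have hC : 0 ≤ Real.cos (π * (d i) / (ns i)) ^ (ns i) := pow_nonneg hcosnn _
      have hre : jackCoeff ns i * (a * ((-1:ℝ)^(d i) * Real.cos (π * (d i) / (ns i)) ^ (ns i)))
          = a * Real.cos (π * (d i) / (ns i)) ^ (ns i) * ((-1:ℝ)^(d i) * jackCoeff ns i) := by
        ring
      rw [hre]
      exact mul_nonneg (mul_nonneg ha0.le hC) (hsign i)
    -- lower bound the sum at p = 1/2
    set V : ℝ := ∑ i, jackCoeff ns i * bernstein' (ns i) f (1/2) with hV
    have hterm₀ : jackCoeff ns i₀ * bernstein' (ns i₀) f (1/2) = jackCoeff ns i₀ * a := by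
      rw [hbern i₀, hnsi₀, hdi₀]
      norm_num
    have hVlb : ((n:ℝ)/r)^(r-1) * a ≤ V := by
      have h1 : jackCoeff ns i₀ * bernstein' (ns i₀) f (1/2) ≤ V :=
        Finset.single_le_sum (fun i _ => hterm i) (Finset.mem_univ i₀)
      rw [hterm₀] at h1
      refine le_trans ?_ h1
      exact mul_le_mul_of_nonneg_right hcoeff₀ ha0.le
    have hfhalf : |f (1/2)| ≤ a := by
      rw [hf]
      simp only
      rw [abs_mul, abs_of_nonneg ha0.le]
      calc a * |Real.cos (c * (1/2))| ≤ a * 1 :=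
        mul_le_mul_of_nonneg_left (Real.abs_cos_le_one _) ha0.le
        _ = a := mul_one a
    -- the sSup bound
    have hcontF : Continuous f := by
      rw [hf]
      exact continuous_const.mul (Real.continuous_cos.comp (continuous_const.mul continuous_id))
    have hcontAll : Continuous (fun p => |(∑ i, jackCoeff ns i * bernstein' (ns i) f p) - f p|) :=
      ((continuous_finset_sum _ fun i _ => continuous_const.mul (aux_bern_cont (ns i) f)).sub hcontF).abs
    have hbdd : BddAbove ((fun p => |(∑ i, jackCoeff ns i * bernstein' (ns i) f p) - f p|) ''
        Set.Icc (0:ℝ) 1) := (isCompact_Icc.image hcontAll).bddAbove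
    have hmem : |V - f (1/2)| ∈ ((fun p => |(∑ i, jackCoeff ns i * bernstein' (ns i) f p) - f p|) ''
        Set.Icc (0:ℝ) 1) := ⟨1/2, by constructor <;> norm_num, rfl⟩
    have hjb : |V - f (1/2)| ≤ jackBias ns f := le_csSup hbdd hmem
    -- final numeric computation
    have h2P : (2:ℝ) ≤ ((n:ℝ)/r)^(r-1) := by
      have hrpos : (0:ℝ) < r := by exact_mod_cast (by omega : 0 < r)
      have hdiv : (3:ℝ) ≤ (n:ℝ)/r := by
        rw [le_div_iff₀ hrpos]
        exact_mod_cast hn3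
      calc (2:ℝ) ≤ 3^(r-1) := by
            calc (2:ℝ) ≤ 3^1 := by norm_num
              _ ≤ 3^(r-1) := pow_le_pow_right₀ (by norm_num) (by omega)
        _ ≤ ((n:ℝ)/r)^(r-1) := pow_le_pow_left₀ (by norm_num) hdiv _
    have hLchain : ((n:ℝ)/r)^(r-1) * a - a ≤ |V - f (1/2)| := by
      have h1 : ((n:ℝ)/r)^(r-1) * a - a ≤ V - |f (1/2)| := by linarith
      have h2 : V - |f (1/2)| ≤ V - f (1/2) := by
        have := le_abs_self (f (1/2)); linarith
      calc ((n:ℝ)/r)^(r-1) * a - a ≤ V - f (1/2) := by linarith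
        _ ≤ |V - f (1/2)| := le_abs_self _
    have hhalf : (1/2:ℝ) * (((n:ℝ)/r)^(r-1) * a) ≤ ((n:ℝ)/r)^(r-1) * a - a := by
      nlinarith [h2P, ha0]
    have heq : (2 * (2*π)^s * (r:ℝ)^(r-1))⁻¹ * (n : ℝ) ^ ((r : ℝ) - 1 - (s : ℝ))
        = (1/2:ℝ) * (((n:ℝ)/r)^(r-1) * a) := by
      have hrpow : (n : ℝ) ^ ((r : ℝ) - 1 - (s : ℝ)) = (n:ℝ)^(r-1) / (n:ℝ)^s := by
        have h1 : (r : ℝ) - 1 - (s : ℝ) = ((r-1 : ℕ) : ℝ) - ((s:ℕ) : ℝ) := by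
          push_cast [Nat.cast_sub (by omega : 1 ≤ r)]; ring
        rw [h1, Real.rpow_sub hA, Real.rpow_natCast, Real.rpow_natCast]
      rw [hrpow, ha, hc]
      have hrne : (r:ℝ) ≠ 0 := by positivity
      have hnne : (n:ℝ) ≠ 0 := by positivity
      have hπne : π ≠ 0 := ne_of_gt hπ
      field_simp
      have hr1 : (r:ℝ)^(r-1) * (r:ℝ)⁻¹^(r-1) = 1 := by rw [← mul_pow, mul_inv_cancel₀ hrne, one_pow]
      linear_combination (-((n:ℝ) ^ (r - 1) * (n:ℝ) ^ s * π ^ s * 2 ^ s)) * hr1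
    rw [heq]
    calc (1/2:ℝ) * (((n:ℝ)/r)^(r-1) * a) ≤ ((n:ℝ)/r)^(r-1) * a - a := hhalf
      _ ≤ |V - f (1/2)| := hLchain
      _ ≤ jackBias ns f := hjb
end

section
/- Fix an integer n ≥ 1 and any function f : [0,1] → ℝ. Let L_n[f] be the unique polynomial of degree at most n satisfying L_n[f](i/n) = f(i/n) for all integers 0 ≤ i ≤ n, and for m ≥ 1 let e_m = (I − B_n)^m f, i.e. e_1(p) = f(p) − B_n[f](p) and e_m(p) = e_{m−1}(p) − B_n[e_{m−1}](p). Then lim_{m→∞} sup_{p∈[0,1]} | e_m(p) − ( f(p) − L_n[f](p) ) | = 0. -/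
open Finset Polynomial Function
open scoped fwdDiff

-- iterated forward differences of monomials
private lemma fwdDiff_pow_succ (e : ℕ) :
    (fwdDiff (1:ℝ)) (fun x : ℝ => x ^ e) = ∑ i ∈ range e, (e.choose i : ℝ) • (fun x : ℝ => x ^ i) := by
  funext x
  have h := add_pow x (1:ℝ) e
  simp only [one_pow, mul_one] at h
  simp only [fwdDiff, Finset.sum_apply, Pi.smul_apply, smul_eq_mul]
  rw [h, Finset.sum_range_succ]
  simp [Nat.choose_self, mul_comm]

private lemma fwdDiff_iter_zero_fun (j : ℕ) :
    (fwdDiff (1:ℝ))^[j] (fun _ : ℝ => (0:ℝ)) = fun _ => 0 := by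
  induction j with
  | zero => rfl
  | succ j ih =>
    rw [Function.iterate_succ_apply]
    have : (fwdDiff (1:ℝ)) (fun _ : ℝ => (0:ℝ)) = fun _ => 0 := by
      funext x; simp [fwdDiff]
    rw [this, ih]

private lemma fwdDiff_iter_pow (e : ℕ) :
    (∀ j : ℕ, e < j → (fwdDiff (1:ℝ))^[j] (fun x : ℝ => x ^ e) = fun _ => 0)
      ∧ (fwdDiff (1:ℝ))^[e] (fun x : ℝ => x ^ e) = fun _ => (e.factorial : ℝ) := by
  induction e using Nat.strong_induction_on with
  | _ e IH =>
    constructor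
    · intro j hj
      obtain ⟨j', rfl⟩ : ∃ j', j = j' + 1 := ⟨j - 1, by omega⟩
      rw [Function.iterate_succ_apply, fwdDiff_pow_succ, fwdDiff_iter_finset_sum]
      have : ∀ i ∈ range e, (fwdDiff (1:ℝ))^[j'] ((e.choose i : ℝ) • (fun x : ℝ => x ^ i))
          = fun _ => 0 := by
        intro i hi
        rw [fwdDiff_iter_const_smul, (IH i (mem_range.1 hi)).1 j' (by
          have := mem_range.1 hi; omega)]
        funext x; simp
      rw [Finset.sum_congr rfl this]
      funext x; simp
    · cases e with
      | zero => funext x; simp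
      | succ e' =>
        rw [Function.iterate_succ_apply, fwdDiff_pow_succ, fwdDiff_iter_finset_sum,
          Finset.sum_range_succ]
        have h1 : ∀ i ∈ range e', (fwdDiff (1:ℝ))^[e'] (((e' + 1).choose i : ℝ) • (fun x : ℝ => x ^ i))
            = fun _ => 0 := by
          intro i hi
          rw [fwdDiff_iter_const_smul, (IH i (by have := mem_range.1 hi; omega)).1 e'
            (mem_range.1 hi)]
          funext x; simp
        rw [Finset.sum_congr rfl h1, fwdDiff_iter_const_smul, (IH e' (by omega)).2]
        funext x
        simp [Nat.factorial_succ, Nat.choose_succ_self_right, mul_comm]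

private lemma choose_trinomial {n j k : ℕ} (hk : k ≤ j) (hj : j ≤ n) :
    n.choose j * j.choose k = n.choose k * (n - k).choose (j - k) := by
  have h1 := Nat.choose_mul_factorial_mul_factorial hk
  have h2 := Nat.choose_mul_factorial_mul_factorial hj
  have h3 := Nat.choose_mul_factorial_mul_factorial (hk.trans hj)
  have h4 := Nat.choose_mul_factorial_mul_factorial (show j - k ≤ n - k by omega)
  rw [show n - k - (j - k) = n - j by omega] at h4
  have hpos : 0 < k.factorial * (j - k).factorial * (n - j).factorial := by positivity
  apply Nat.eq_of_mul_eq_mul_right hpos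
  calc n.choose j * j.choose k * (k.factorial * (j - k).factorial * (n - j).factorial)
      = (j.choose k * k.factorial * (j - k).factorial) * n.choose j * (n - j).factorial := by ring
    _ = n.choose j * j.factorial * (n - j).factorial := by rw [h1]; ring
    _ = n.factorial := h2
    _ = n.choose k * k.factorial * (n - k).factorial := h3.symm
    _ = ((n - k).choose (j - k) * (j - k).factorial * (n - j).factorial) * (n.choose k * k.factorial) := by
        rw [h4]; ring
    _ = n.choose k * (n - k).choose (j - k) * (k.factorial * (j - k).factorial * (n - j).factorial) := by
        ring

private lemma bern_newton (n : ℕ) (g : ℝ → ℝ) (p : ℝ) :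
    ∑ k ∈ range (n + 1), (n.choose k : ℝ) * p ^ k * (1 - p) ^ (n - k) * g k
      = ∑ j ∈ range (n + 1), (n.choose j : ℝ) * ((fwdDiff (1:ℝ))^[j] g 0) * p ^ j := by
  have hg : ∀ k : ℕ, g (k : ℝ)
      = ∑ j ∈ range (k + 1), (k.choose j : ℝ) * ((fwdDiff (1:ℝ))^[j] g 0) := by
    intro k
    have := shift_eq_sum_fwdDiff_iter (1:ℝ) g k 0
    simpa [nsmul_eq_mul, smul_eq_mul] using this
  calc ∑ k ∈ range (n + 1), (n.choose k : ℝ) * p ^ k * (1 - p) ^ (n - k) * g k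
      = ∑ k ∈ Finset.Ico 0 (n + 1), ∑ j ∈ Finset.Ico 0 (k + 1),
          (n.choose k : ℝ) * p ^ k * (1 - p) ^ (n - k)
            * ((k.choose j : ℝ) * ((fwdDiff (1:ℝ))^[j] g 0)) := by
        rw [← Finset.range_eq_Ico]
        refine Finset.sum_congr rfl fun k _ => ?_
        rw [hg k, Finset.mul_sum]
        rw [← Finset.range_eq_Ico]
    _ = ∑ j ∈ Finset.Ico 0 (n + 1), ∑ k ∈ Finset.Ico j (n + 1),
          (n.choose k : ℝ) * p ^ k * (1 - p) ^ (n - k)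
            * ((k.choose j : ℝ) * ((fwdDiff (1:ℝ))^[j] g 0)) := by
        rw [← Finset.sum_Ico_Ico_comm 0 (n+1) (fun j k =>
          (n.choose k : ℝ) * p ^ k * (1 - p) ^ (n - k)
            * ((k.choose j : ℝ) * ((fwdDiff (1:ℝ))^[j] g 0)))]
    _ = ∑ j ∈ range (n + 1), (n.choose j : ℝ) * ((fwdDiff (1:ℝ))^[j] g 0) * p ^ j := by
        rw [← Finset.range_eq_Ico]
        refine Finset.sum_congr rfl fun j hj => ?_
        have hjn : j ≤ n := by have := mem_range.1 hj; omega
        have key : ∀ k ∈ Finset.Ico j (n + 1),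
            (n.choose k : ℝ) * p ^ k * (1 - p) ^ (n - k)
              * ((k.choose j : ℝ) * ((fwdDiff (1:ℝ))^[j] g 0))
            = ((n.choose j : ℝ) * ((fwdDiff (1:ℝ))^[j] g 0) * p ^ j)
              * (((n - j).choose (k - j) : ℝ) * p ^ (k - j) * (1 - p) ^ ((n - j) - (k - j))) := by
          intro k hk
          have hk' := Finset.mem_Ico.1 hk
          have hcc : (n.choose k : ℝ) * (k.choose j : ℝ)
              = (n.choose j : ℝ) * ((n - j).choose (k - j) : ℝ) := by
            have := choose_trinomial hk'.1 (by omega : k ≤ n)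
            exact_mod_cast congrArg (fun t : ℕ => (t : ℝ)) this
          have hp : p ^ k = p ^ j * p ^ (k - j) := by
            rw [← pow_add]; congr 1; omega
          have hq : n - k = (n - j) - (k - j) := by omega
          rw [hp, hq]
          linear_combination (p ^ j * p ^ (k - j) * (1 - p) ^ ((n - j) - (k - j)) * ((fwdDiff (1:ℝ))^[j] g 0)) * hcc
        rw [Finset.sum_congr rfl key, ← Finset.mul_sum]
        have hbin : ∑ k ∈ Finset.Ico j (n + 1),
            ((n - j).choose (k - j) : ℝ) * p ^ (k - j) * (1 - p) ^ ((n - j) - (k - j)) = 1 := by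
          rw [Finset.sum_Ico_eq_sum_range, show n + 1 - j = (n - j) + 1 by omega]
          simp only [Nat.add_sub_cancel_left]
          calc ∑ i ∈ range ((n - j) + 1), ((n - j).choose i : ℝ) * p ^ i * (1 - p) ^ ((n - j) - i)
              = ∑ i ∈ range ((n - j) + 1), p ^ i * (1 - p) ^ ((n - j) - i) * ((n - j).choose i : ℝ) := by
                refine Finset.sum_congr rfl fun i _ => by ring
            _ = (p + (1 - p)) ^ (n - j) := (add_pow p (1 - p) (n - j)).symm
            _ = 1 := by rw [show p + (1 - p) = (1:ℝ) by ring, one_pow]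
        rw [hbin, mul_one]

noncomputable def Bq (n : ℕ) (q : Polynomial ℝ) : Polynomial ℝ :=
  ∑ k ∈ range (n + 1),
    Polynomial.C ((n.choose k : ℝ) * q.eval ((k : ℝ) / n)) * Polynomial.X ^ k
      * (1 - Polynomial.X) ^ (n - k)

lemma Bq_eval (n : ℕ) (q : Polynomial ℝ) (p : ℝ) :
    (Bq n q).eval p
      = ∑ k ∈ range (n + 1), (n.choose k : ℝ) * p ^ k * (1 - p) ^ (n - k)
          * q.eval ((k : ℝ) / n) := by
  simp only [Bq, eval_finset_sum, eval_mul, eval_pow, eval_C, eval_X, eval_sub, eval_one]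
  exact Finset.sum_congr rfl fun k _ => by ring

lemma Bq_natDegree (n : ℕ) (q : Polynomial ℝ) : (Bq n q).natDegree ≤ n := by
  refine natDegree_sum_le_of_forall_le _ _ fun k hk => ?_
  have hk' : k ≤ n := by have := mem_range.1 hk; omega
  calc (Polynomial.C ((n.choose k : ℝ) * q.eval ((k : ℝ) / n)) * Polynomial.X ^ k
        * (1 - Polynomial.X) ^ (n - k)).natDegree
      ≤ (Polynomial.C ((n.choose k : ℝ) * q.eval ((k : ℝ) / n)) * Polynomial.X ^ k).natDegree
        + ((1 - Polynomial.X : Polynomial ℝ) ^ (n - k)).natDegree := natDegree_mul_le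
    _ ≤ k + (n - k) := by
        gcongr
        · exact (natDegree_C_mul_le _ _).trans_eq (natDegree_X_pow k)
        · calc _ ≤ (n - k) * (1 - Polynomial.X : Polynomial ℝ).natDegree := natDegree_pow_le
            _ ≤ (n - k) * 1 := by
                gcongr
                exact (natDegree_sub_le _ _).trans (by simp)
            _ = n - k := mul_one _
    _ ≤ n := by omega

lemma Bq_newton (n : ℕ) (q : Polynomial ℝ) :
    Bq n q = ∑ j ∈ range (n + 1),
      Polynomial.C ((n.choose j : ℝ)
        * ((fwdDiff (1:ℝ))^[j] (fun x : ℝ => q.eval (x / n)) 0)) * Polynomial.X ^ j := by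
  apply Polynomial.funext
  intro p
  rw [Bq_eval]
  have := bern_newton n (fun x : ℝ => q.eval (x / n)) p
  simp only [eval_finset_sum, eval_mul, eval_C, eval_pow, eval_X]
  exact this

lemma Bq_coeff (n : ℕ) (q : Polynomial ℝ) (k : ℕ) (hk : k ≤ n) :
    (Bq n q).coeff k
      = (n.choose k : ℝ) * ((fwdDiff (1:ℝ))^[k] (fun x : ℝ => q.eval (x / n)) 0) := by
  rw [Bq_newton, finset_sum_coeff]
  rw [Finset.sum_eq_single k]
  · rw [coeff_C_mul, coeff_X_pow, if_pos rfl, mul_one]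
  · intro j _ hj
    rw [coeff_C_mul, coeff_X_pow, if_neg (Ne.symm hj), mul_zero]
  · intro h
    exact absurd (mem_range.2 (by omega)) h

noncomputable def dke (k e : ℕ) : ℝ := (fwdDiff (1:ℝ))^[k] (fun x : ℝ => x ^ e) 0

lemma dke_zero {k e : ℕ} (h : e < k) : dke k e = 0 := by
  rw [dke, (fwdDiff_iter_pow e).1 k h]

lemma dke_diag (e : ℕ) : dke e e = (e.factorial : ℝ) := by
  rw [dke, (fwdDiff_iter_pow e).2]

noncomputable def wke (n k e : ℕ) : ℝ :=
  (if k = e then (1:ℝ) else 0) - (n.choose k : ℝ) * ((n:ℝ)⁻¹) ^ e * dke k e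

lemma wke_zero {n k e : ℕ} (h : e < k) : wke n k e = 0 := by
  rw [wke, dke_zero h, if_neg (by omega), mul_zero]
  ring

lemma wke_diag {n e : ℕ} : wke n e e = 1 - (n.descFactorial e : ℝ) / (n : ℝ) ^ e := by
  rw [wke, dke_diag, if_pos rfl, Nat.descFactorial_eq_factorial_mul_choose]
  push_cast
  rw [div_eq_mul_inv, ← inv_pow]
  ring

lemma Bq_coeff_matrix (n : ℕ) (q : Polynomial ℝ) (hq : q.natDegree ≤ n) {k : ℕ} (hk : k ≤ n) :
    (Bq n q).coeff k
      = ∑ e ∈ range (n + 1), q.coeff e * ((n.choose k : ℝ) * ((n:ℝ)⁻¹) ^ e * dke k e) := by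
  rw [Bq_coeff n q k hk]
  have hdecomp : (fun x : ℝ => q.eval (x / n))
      = ∑ e ∈ range (n + 1), (q.coeff e * ((n:ℝ)⁻¹) ^ e) • (fun x : ℝ => x ^ e) := by
    funext x
    rw [Polynomial.eval_eq_sum_range' (lt_of_le_of_lt hq (lt_add_one n))]
    rw [Finset.sum_apply]
    refine Finset.sum_congr rfl fun e _ => ?_
    simp only [Pi.smul_apply, smul_eq_mul, div_pow, div_eq_mul_inv, mul_pow, inv_pow]
    ring
  rw [hdecomp, fwdDiff_iter_finset_sum, Finset.sum_apply, Finset.mul_sum]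
  refine Finset.sum_congr rfl fun e _ => ?_
  rw [fwdDiff_iter_const_smul]
  simp only [Pi.smul_apply, smul_eq_mul]
  rw [← dke]
  ring

lemma T_coeff (n : ℕ) (q : Polynomial ℝ) (hq : q.natDegree ≤ n) {k : ℕ} (hk : k ≤ n) :
    (q - Bq n q).coeff k = ∑ e ∈ range (n + 1), q.coeff e * wke n k e := by
  rw [Polynomial.coeff_sub, Bq_coeff_matrix n q hq hk]
  have hq' : q.coeff k = ∑ e ∈ range (n + 1), q.coeff e * (if k = e then (1:ℝ) else 0) := by
    rw [Finset.sum_eq_single k]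
    · simp
    · intro e _ he; rw [if_neg (Ne.symm he), mul_zero]
    · intro h; exact absurd (mem_range.2 (by omega)) h
  rw [hq', ← Finset.sum_sub_distrib]
  refine Finset.sum_congr rfl fun e _ => ?_
  rw [wke]
  ring

/-- Iterated bootstrap bias: `bootIter n f m = (I − B_n)^m f`. -/
noncomputable def bootIter (n : ℕ) (f : ℝ → ℝ) : ℕ → ℝ → ℝ
  | 0 => f
  | m + 1 => fun p => bootIter n f m p - bernstein' n (bootIter n f m) p

lemma bernstein'_poly (n : ℕ) (q : Polynomial ℝ) (p : ℝ) :
    bernstein' n (fun x => q.eval x) p = (Bq n q).eval p := by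
  rw [Bq_eval, bernstein']

/-- iterating the bootstrap bias correction infinitely many times, the bias
`e_m = (I − B_n)^m f` converges uniformly on `[0,1]` to `f − L_n[f]`, where `L_n[f]` is the
Lagrange interpolation polynomial of `f` at the equidistant nodes `{i/n : 0 ≤ i ≤ n}`. -/
theorem bootstrap_iter_limit (n : ℕ) (hn : 1 ≤ n) (f : ℝ → ℝ) (L : Polynomial ℝ)
    (hdeg : L.degree ≤ n)
    (hinterp : ∀ i : ℕ, i ≤ n → L.eval ((i : ℝ) / n) = f ((i : ℝ) / n)) :
    Filter.Tendsto
      (fun m => sSup ((fun p => |bootIter n f m p - (f p - L.eval p)|) '' Set.Icc (0:ℝ) 1))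
      Filter.atTop (nhds 0) := by
  have hL : L.natDegree ≤ n := Polynomial.natDegree_le_iff_degree_le.2 hdeg
  have hnR : (0:ℝ) < (n:ℝ) := by exact_mod_cast hn
  set T : Polynomial ℝ → Polynomial ℝ := fun q => q - Bq n q with hT
  -- reduction to the polynomial iteration
  have hred : ∀ m p, bootIter n f m p
      = (f p - L.eval p) + bootIter n (fun x => L.eval x) m p := by
    intro m
    induction m with
    | zero => intro p; simp [bootIter]
    | succ m ih =>
      intro p
      have hb : bernstein' n (bootIter n f m) p
          = bernstein' n (bootIter n (fun x => L.eval x) m) p := by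
        unfold bernstein'
        refine Finset.sum_congr rfl fun k hk => ?_
        have hkn : k ≤ n := by have := mem_range.1 hk; omega
        rw [ih ((k:ℝ)/n), hinterp k hkn]
        ring_nf
      show bootIter n f m p - bernstein' n (bootIter n f m) p = _
      rw [ih p, hb]
      show _ = (f p - L.eval p) +
        (bootIter n (fun x => L.eval x) m p
          - bernstein' n (bootIter n (fun x => L.eval x) m) p)
      ring
  have hpoly : ∀ m p, bootIter n (fun x => L.eval x) m p = Polynomial.eval p (T^[m] L) := by
    intro m
    induction m with
    | zero => intro p; simp [bootIter]
    | succ m ih =>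
      intro p
      have hb : bernstein' n (bootIter n (fun x => L.eval x) m) p
          = (Bq n (T^[m] L)).eval p := by
        rw [← bernstein'_poly]
        unfold bernstein'
        exact Finset.sum_congr rfl fun k _ => by rw [ih]
      show bootIter n (fun x => L.eval x) m p
          - bernstein' n (bootIter n (fun x => L.eval x) m) p = _
      rw [ih p, hb, Function.iterate_succ_apply', hT]
      simp
  -- constants
  have hrne : (Finset.range (n+1)).Nonempty := Finset.nonempty_range_add_one
  set lam : ℕ → ℝ := fun e => (n.descFactorial e : ℝ) / (n : ℝ) ^ e with hlam
  have hlam_pos : ∀ e ≤ n, 0 < lam e := by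
    intro e he
    apply div_pos _ (by positivity)
    have : n.descFactorial e ≠ 0 := by
      rw [Ne, Nat.descFactorial_eq_zero_iff_lt]; omega
    exact_mod_cast Nat.pos_of_ne_zero this
  have hlam_le : ∀ e, lam e ≤ 1 := by
    intro e
    rw [hlam, div_le_one (by positivity)]
    exact_mod_cast Nat.descFactorial_le_pow n e
  set μmax : ℝ := (Finset.range (n+1)).sup' hrne (fun e => 1 - lam e) with hμmax
  have hμmax_lt : μmax < 1 := by
    rw [hμmax, Finset.sup'_lt_iff]
    intro e he
    have := hlam_pos e (by have := mem_range.1 he; omega)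
    linarith
  have hμmax_nonneg : 0 ≤ μmax := by
    refine le_trans ?_ (Finset.le_sup' (fun e => 1 - lam e) (mem_range.2 (by omega : 0 < n + 1)))
    have h0 : lam 0 = 1 := by rw [hlam]; simp
    simp [h0]
  set Cw : ℝ := (Finset.range (n+1)).sup' hrne (fun e => ∑ k ∈ range e, |wke n k e|) with hCw
  have hCw_nonneg : 0 ≤ Cw := by
    refine le_trans ?_ (Finset.le_sup' _ (mem_range.2 (by omega : 0 < n + 1)))
    simp
  set η : ℝ := max 1 (2 * Cw / (1 - μmax)) with hη
  have hη1 : (1:ℝ) ≤ η := le_max_left _ _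
  have hη0 : (0:ℝ) < η := by linarith
  have hηC : Cw ≤ η * ((1 - μmax) / 2) := by
    have h2 : 2 * Cw / (1 - μmax) ≤ η := le_max_right _ _
    rw [div_le_iff₀ (by linarith)] at h2
    linarith
  set ρ : ℝ := (1 + μmax) / 2 with hρ
  have hρ0 : 0 ≤ ρ := by rw [hρ]; linarith
  have hρ1 : ρ < 1 := by rw [hρ]; linarith
  set Nr : Polynomial ℝ → ℝ := fun q => ∑ k ∈ range (n+1), η ^ k * |q.coeff k| with hNr
  have hNr_nonneg : ∀ q, 0 ≤ Nr q := by
    intro q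
    exact Finset.sum_nonneg fun k _ => by positivity
  -- column bound
  have hcol : ∀ e ≤ n, ∑ k ∈ range (n+1), η ^ k * |wke n k e| ≤ ρ * η ^ e := by
    intro e he
    have hsub : ∑ k ∈ range (n+1), η ^ k * |wke n k e| = ∑ k ∈ range (e+1), η ^ k * |wke n k e| := by
      symm
      apply Finset.sum_subset
      · intro k hk; exact mem_range.2 (by have := mem_range.1 hk; omega)
      · intro k hk hk'
        have h1 := mem_range.1 hk
        have h2 : e < k := by
          by_contra h
          exact hk' (mem_range.2 (by omega))
        rw [wke_zero h2, abs_zero, mul_zero]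
    rw [hsub, Finset.sum_range_succ]
    have hdiag : |wke n e e| = 1 - lam e := by
      have h1 : (n.descFactorial e : ℝ) / (n : ℝ) ^ e ≤ 1 := hlam_le e
      rw [wke_diag, abs_of_nonneg (by linarith)]
    have hμe : 1 - lam e ≤ μmax := Finset.le_sup' (fun e => 1 - lam e) (mem_range.2 (by omega))
    have htail : ∑ k ∈ range e, η ^ k * |wke n k e| ≤ η ^ e * ((1 - μmax) / 2) := by
      rcases Nat.eq_zero_or_pos e with rfl | hepos
      · simp
        linarith
      · obtain ⟨e', rfl⟩ : ∃ e', e = e' + 1 := ⟨e - 1, by omega⟩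
        calc ∑ k ∈ range (e'+1), η ^ k * |wke n k (e'+1)|
            ≤ ∑ k ∈ range (e'+1), η ^ e' * |wke n k (e'+1)| := by
              refine Finset.sum_le_sum fun k hk => ?_
              have hke : k ≤ e' := by have := mem_range.1 hk; omega
              exact mul_le_mul_of_nonneg_right (pow_le_pow_right₀ hη1 hke) (abs_nonneg _)
          _ = η ^ e' * ∑ k ∈ range (e'+1), |wke n k (e'+1)| := by rw [Finset.mul_sum]
          _ ≤ η ^ e' * Cw := by
              refine mul_le_mul_of_nonneg_left ?_ (by positivity)
              exact Finset.le_sup' (fun e => ∑ k ∈ range e, |wke n k e|) (mem_range.2 (by omega))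
          _ ≤ η ^ e' * (η * ((1 - μmax) / 2)) := mul_le_mul_of_nonneg_left hηC (by positivity)
          _ = η ^ (e'+1) * ((1 - μmax) / 2) := by ring
    calc ∑ k ∈ range e, η ^ k * |wke n k e| + η ^ e * |wke n e e|
        ≤ η ^ e * ((1 - μmax) / 2) + η ^ e * μmax := by
          rw [hdiag]
          have : η ^ e * (1 - lam e) ≤ η ^ e * μmax :=
            mul_le_mul_of_nonneg_left hμe (by positivity)
          linarith
      _ = ρ * η ^ e := by rw [hρ]; ring
  -- contraction
  have hTdeg : ∀ q : Polynomial ℝ, q.natDegree ≤ n → (T q).natDegree ≤ n := by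
    intro q hq
    exact (Polynomial.natDegree_sub_le q (Bq n q)).trans (max_le hq (Bq_natDegree n q))
  have hcontr : ∀ q : Polynomial ℝ, q.natDegree ≤ n → Nr (T q) ≤ ρ * Nr q := by
    intro q hq
    calc Nr (T q) = ∑ k ∈ range (n+1), η ^ k * |∑ e ∈ range (n+1), q.coeff e * wke n k e| := by
          refine Finset.sum_congr rfl fun k hk => ?_
          rw [hT]
          rw [T_coeff n q hq (show k ≤ n by have := mem_range.1 hk; omega)]
      _ ≤ ∑ k ∈ range (n+1), η ^ k * ∑ e ∈ range (n+1), |q.coeff e| * |wke n k e| := by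
          refine Finset.sum_le_sum fun k _ => ?_
          refine mul_le_mul_of_nonneg_left ?_ (by positivity)
          refine (Finset.abs_sum_le_sum_abs _ _).trans ?_
          refine Finset.sum_le_sum fun e _ => ?_
          rw [abs_mul]
      _ = ∑ k ∈ range (n+1), ∑ e ∈ range (n+1), |q.coeff e| * (η ^ k * |wke n k e|) := by
          refine Finset.sum_congr rfl fun k _ => ?_
          rw [Finset.mul_sum]
          exact Finset.sum_congr rfl fun e _ => by ring
      _ = ∑ e ∈ range (n+1), ∑ k ∈ range (n+1), |q.coeff e| * (η ^ k * |wke n k e|) :=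
          Finset.sum_comm
      _ = ∑ e ∈ range (n+1), |q.coeff e| * ∑ k ∈ range (n+1), η ^ k * |wke n k e| := by
          refine Finset.sum_congr rfl fun e _ => ?_
          rw [Finset.mul_sum]
      _ ≤ ∑ e ∈ range (n+1), |q.coeff e| * (ρ * η ^ e) := by
          refine Finset.sum_le_sum fun e he => ?_
          exact mul_le_mul_of_nonneg_left
            (hcol e (by have := mem_range.1 he; omega)) (abs_nonneg _)
      _ = ρ * Nr q := by
          rw [hNr, Finset.mul_sum]
          refine Finset.sum_congr rfl fun e _ => by ring
  -- iterate
  have hiter : ∀ m, (T^[m] L).natDegree ≤ n ∧ Nr (T^[m] L) ≤ ρ ^ m * Nr L := by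
    intro m
    induction m with
    | zero => exact ⟨hL, by simp⟩
    | succ m ih =>
      rw [Function.iterate_succ_apply']
      refine ⟨hTdeg _ ih.1, ?_⟩
      calc Nr (T (T^[m] L)) ≤ ρ * Nr (T^[m] L) := hcontr _ ih.1
        _ ≤ ρ * (ρ ^ m * Nr L) := mul_le_mul_of_nonneg_left ih.2 hρ0
        _ = ρ ^ (m+1) * Nr L := by ring
  -- eval bound
  have heval : ∀ (q : Polynomial ℝ), q.natDegree ≤ n → ∀ p ∈ Set.Icc (0:ℝ) 1,
      |q.eval p| ≤ Nr q := by
    intro q hq p hp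
    rw [Polynomial.eval_eq_sum_range' (lt_of_le_of_lt hq (lt_add_one n))]
    refine (Finset.abs_sum_le_sum_abs _ _).trans ?_
    refine Finset.sum_le_sum fun k _ => ?_
    rw [abs_mul, abs_pow]
    have hp1 : |p| ≤ 1 := abs_le.2 ⟨by linarith [hp.1], hp.2⟩
    calc |q.coeff k| * |p| ^ k ≤ |q.coeff k| * 1 := by
          refine mul_le_mul_of_nonneg_left ?_ (abs_nonneg _)
          exact pow_le_one₀ (abs_nonneg _) hp1
      _ = 1 * |q.coeff k| := by ring
      _ ≤ η ^ k * |q.coeff k| := by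
          refine mul_le_mul_of_nonneg_right ?_ (abs_nonneg _)
          exact one_le_pow₀ hη1
  -- squeeze
  have hupper : ∀ m, sSup ((fun p => |bootIter n f m p - (f p - L.eval p)|) '' Set.Icc (0:ℝ) 1)
      ≤ ρ ^ m * Nr L := by
    intro m
    apply Real.sSup_le
    · rintro x ⟨p, hp, rfl⟩
      dsimp only
      have : bootIter n f m p - (f p - L.eval p) = Polynomial.eval p (T^[m] L) := by
        rw [hred m p, hpoly m p]; ring
      rw [this]
      exact (heval _ (hiter m).1 p hp).trans (hiter m).2
    · exact mul_nonneg (pow_nonneg hρ0 m) (hNr_nonneg L)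
  have hlower : ∀ m, 0 ≤ sSup ((fun p => |bootIter n f m p - (f p - L.eval p)|) '' Set.Icc (0:ℝ) 1) := by
    intro m
    apply Real.sSup_nonneg
    rintro x ⟨p, _, rfl⟩
    exact abs_nonneg _
  have hgeom : Filter.Tendsto (fun m => ρ ^ m * Nr L) Filter.atTop (nhds 0) := by
    have := tendsto_pow_atTop_nhds_zero_of_lt_one hρ0 hρ1
    simpa using this.mul_const (Nr L)
  exact squeeze_zero hlower hupper hgeom
end

section
/- Fix an integer m ≥ 1 and a continuous function f : [0,1] → ℝ, and let e_m^{(n)} = (I − B_n)^m f denote the bootstrap bias after m−1 rounds of correction at sample size n. Then lim_{n→∞} n^m · sup_{p∈[0,1]} |e_m^{(n)}(p)| = 0 if and only if f is an affine function, i.e. there exist a, b ∈ ℝ with f(p) = a p + b for all p ∈ [0,1]. -/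
section BootstrapAux
open Finset

lemma aux1 (m k : ℕ) : (m+1).choose (k+1) * (k+1) = (m+1) * m.choose k := by
  rw [← Nat.add_one_mul_choose_eq]

lemma aux2 (m k : ℕ) : (m+2).choose (k+2) * ((k+2)*(k+1)) = ((m+2)*(m+1)) * m.choose k := by
  calc (m+2).choose (k+2) * ((k+2)*(k+1)) = ((m+2).choose (k+2) * (k+2)) * (k+1) := by ring
    _ = (m+2) * ((m+1).choose (k+1) * (k+1)) := by rw [aux1 (m+1) (k+1)]; ring
    _ = ((m+2)*(m+1)) * m.choose k := by rw [aux1 m k]; ring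

lemma aux3 (m k : ℕ) : (m+3).choose (k+3) * ((k+3)*(k+2)*(k+1)) = ((m+3)*(m+2)*(m+1)) * m.choose k := by
  calc (m+3).choose (k+3) * ((k+3)*(k+2)*(k+1)) = ((m+3).choose (k+3) * (k+3)) * ((k+2)*(k+1)) := by ring
    _ = (m+3) * ((m+2).choose (k+2) * ((k+2)*(k+1))) := by rw [aux1 (m+2) (k+2)]; ring
    _ = ((m+3)*(m+2)*(m+1)) * m.choose k := by rw [aux2 m k]; ring

lemma fm0 (n : ℕ) (p q : ℝ) :
    ∑ k ∈ range (n+1), (n.choose k : ℝ) * p ^ k * q ^ (n-k) = (p+q)^n := by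
  rw [add_pow]
  exact sum_congr rfl fun k _ => by ring

lemma fm1 (n : ℕ) (p q : ℝ) :
    ∑ k ∈ range (n+1), (n.choose k : ℝ) * p ^ k * q ^ (n-k) * k
      = n * p * (p+q)^(n-1) := by
  cases n with
  | zero => simp
  | succ m =>
    rw [Finset.sum_range_succ']
    have he : ∀ k, m + 1 - (k+1) = m - k := fun k => by omega
    have h : ∀ k ∈ range (m+1), ((m+1).choose (k+1) : ℝ) * p ^ (k+1) * q ^ (m+1-(k+1)) * ((k+1 : ℕ) : ℝ)
        = ((m+1) : ℝ) * p * ((m.choose k : ℝ) * p ^ k * q ^ (m-k)) := by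
      intro k _
      have hc : (((m+1).choose (k+1) * (k+1) : ℕ) : ℝ) = (((m+1) * m.choose k : ℕ) : ℝ) := by
        exact_mod_cast congrArg (Nat.cast : ℕ → ℝ) (aux1 m k)
      push_cast at hc
      rw [he k]
      push_cast
      linear_combination (p ^ (k+1) * q^(m-k)) * hc
    rw [Finset.sum_congr rfl h, ← Finset.mul_sum, fm0]
    push_cast
    ring_nf

lemma fm2 (n : ℕ) (p q : ℝ) :
    ∑ k ∈ range (n+1), (n.choose k : ℝ) * p ^ k * q ^ (n-k) * (k * ((k:ℝ) - 1))
      = n * ((n:ℝ)-1) * p^2 * (p+q)^(n-2) := by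
  match n with
  | 0 => simp
  | 1 => simp [Finset.sum_range_succ]
  | (m+2) =>
    rw [Finset.sum_range_succ', Finset.sum_range_succ']
    have h : ∀ k ∈ range (m+1), ((m+2).choose (k+1+1) : ℝ) * p ^ (k+1+1) * q ^ (m+2-(k+1+1)) * (((k+1+1:ℕ):ℝ) * (((k+1+1:ℕ):ℝ) - 1))
        = ((m+2) : ℝ) * ((m+1):ℝ) * p^2 * ((m.choose k : ℝ) * p ^ k * q ^ (m-k)) := by
      intro k _
      have hc : (((m+2).choose (k+2) * ((k+2)*(k+1)) : ℕ) : ℝ) = ((((m+2)*(m+1)) * m.choose k : ℕ) : ℝ) := by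
        exact_mod_cast congrArg (Nat.cast : ℕ → ℝ) (aux2 m k)
      push_cast at hc
      have he : m + 2 - (k+2) = m - k := by omega
      have he2 : k + 1 + 1 = k + 2 := by omega
      rw [he2, he]
      push_cast
      linear_combination (p ^ (k+2) * q^(m-k)) * hc
    rw [Finset.sum_congr rfl h, ← Finset.mul_sum, fm0]
    push_cast
    ring_nf

lemma fm3 (n : ℕ) (p q : ℝ) :
    ∑ k ∈ range (n+1), (n.choose k : ℝ) * p ^ k * q ^ (n-k) * (k * ((k:ℝ) - 1) * ((k:ℝ) - 2))
      = n * ((n:ℝ)-1) * ((n:ℝ)-2) * p^3 * (p+q)^(n-3) := by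
  match n with
  | 0 => simp
  | 1 => simp [Finset.sum_range_succ]
  | 2 => simp [Finset.sum_range_succ]
  | (m+3) =>
    rw [Finset.sum_range_succ', Finset.sum_range_succ', Finset.sum_range_succ']
    have h : ∀ k ∈ range (m+1), ((m+3).choose (k+1+1+1) : ℝ) * p ^ (k+1+1+1) * q ^ (m+3-(k+1+1+1)) * (((k+1+1+1:ℕ):ℝ) * (((k+1+1+1:ℕ):ℝ) - 1) * (((k+1+1+1:ℕ):ℝ) - 2))
        = ((m+3) : ℝ) * ((m+2):ℝ) * ((m+1):ℝ) * p^3 * ((m.choose k : ℝ) * p ^ k * q ^ (m-k)) := by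
      intro k _
      have hc : (((m+3).choose (k+3) * ((k+3)*(k+2)*(k+1)) : ℕ) : ℝ) = ((((m+3)*(m+2)*(m+1)) * m.choose k : ℕ) : ℝ) := by
        exact_mod_cast congrArg (Nat.cast : ℕ → ℝ) (aux3 m k)
      push_cast at hc
      have he : m + 3 - (k+3) = m - k := by omega
      have he2 : k + 1 + 1 + 1 = k + 3 := by omega
      rw [he2, he]
      push_cast
      linear_combination (p ^ (k+3) * q^(m-k)) * hc
    rw [Finset.sum_congr rfl h, ← Finset.mul_sum, fm0]
    push_cast
    ring_nf

section
variable (n : ℕ) (p : ℝ)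

lemma hq1 : p + (1-p) = 1 := by ring

lemma gm0 : ∑ k ∈ range (n+1), (n.choose k : ℝ) * p ^ k * (1-p) ^ (n-k) = 1 := by
  rw [fm0, hq1, one_pow]

lemma gm1 : ∑ k ∈ range (n+1), (n.choose k : ℝ) * p ^ k * (1-p) ^ (n-k) * k = n * p := by
  rw [fm1, hq1, one_pow, mul_one]

lemma gm2 : ∑ k ∈ range (n+1), (n.choose k : ℝ) * p ^ k * (1-p) ^ (n-k) * (k * ((k:ℝ) - 1))
    = n * ((n:ℝ)-1) * p^2 := by
  rw [fm2, hq1, one_pow, mul_one]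

lemma gm3 : ∑ k ∈ range (n+1), (n.choose k : ℝ) * p ^ k * (1-p) ^ (n-k) * (k * ((k:ℝ) - 1) * ((k:ℝ) - 2))
    = n * ((n:ℝ)-1) * ((n:ℝ)-2) * p^3 := by
  rw [fm3, hq1, one_pow, mul_one]


/-- mean -/
lemma msum1 (hn : (n:ℝ) ≠ 0) : ∑ k ∈ range (n+1), (n.choose k : ℝ) * p ^ k * (1-p) ^ (n-k) * ((k:ℝ)/n) = p := by
  have : ∀ k ∈ range (n+1), (n.choose k : ℝ) * p ^ k * (1-p) ^ (n-k) * ((k:ℝ)/n)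
      = (1/(n:ℝ)) * ((n.choose k : ℝ) * p ^ k * (1-p) ^ (n-k) * k) := by
    intro k _; field_simp [hn] <;> ring
  rw [Finset.sum_congr rfl this, ← Finset.mul_sum, gm1]
  field_simp [hn]

/-- eigenfunction identity for q(x) = x(1-x) -/
lemma msumq (hn : (n:ℝ) ≠ 0) : ∑ k ∈ range (n+1), (n.choose k : ℝ) * p ^ k * (1-p) ^ (n-k) * (((k:ℝ)/n) * (1 - (k:ℝ)/n))
    = (1 - 1/(n:ℝ)) * (p * (1-p)) := by
  have : ∀ k ∈ range (n+1), (n.choose k : ℝ) * p ^ k * (1-p) ^ (n-k) * (((k:ℝ)/n) * (1 - (k:ℝ)/n))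
      = (-(1/(n:ℝ)^2)) * ((n.choose k : ℝ) * p ^ k * (1-p) ^ (n-k) * (k * ((k:ℝ) - 1)))
        + ((1/(n:ℝ)) - 1/(n:ℝ)^2) * ((n.choose k : ℝ) * p ^ k * (1-p) ^ (n-k) * k) := by
    intro k _; field_simp [hn] <;> ring
  rw [Finset.sum_congr rfl this, Finset.sum_add_distrib, ← Finset.mul_sum, ← Finset.mul_sum,
    gm1, gm2]
  field_simp [hn] <;> ring

/-- second central moment -/
lemma msum2c (hn : (n:ℝ) ≠ 0) : ∑ k ∈ range (n+1), (n.choose k : ℝ) * p ^ k * (1-p) ^ (n-k) * ((k:ℝ)/n - p)^2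
    = p * (1-p) / n := by
  have : ∀ k ∈ range (n+1), (n.choose k : ℝ) * p ^ k * (1-p) ^ (n-k) * ((k:ℝ)/n - p)^2
      = (1/(n:ℝ)^2) * ((n.choose k : ℝ) * p ^ k * (1-p) ^ (n-k) * (k * ((k:ℝ) - 1)))
        + (1/(n:ℝ)^2 - 2*p/(n:ℝ)) * ((n.choose k : ℝ) * p ^ k * (1-p) ^ (n-k) * k)
        + p^2 * ((n.choose k : ℝ) * p ^ k * (1-p) ^ (n-k)) := by
    intro k _; field_simp [hn] <;> ring
  rw [Finset.sum_congr rfl this, Finset.sum_add_distrib, Finset.sum_add_distrib,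
    ← Finset.mul_sum, ← Finset.mul_sum, ← Finset.mul_sum, gm0, gm1, gm2]
  field_simp [hn] <;> ring

/-- third central moment -/
lemma msum3c (hn : (n:ℝ) ≠ 0) : ∑ k ∈ range (n+1), (n.choose k : ℝ) * p ^ k * (1-p) ^ (n-k) * ((k:ℝ)/n - p)^3
    = p * (1-p) * ((1-p) - p) / n^2 := by
  have : ∀ k ∈ range (n+1), (n.choose k : ℝ) * p ^ k * (1-p) ^ (n-k) * ((k:ℝ)/n - p)^3
      = (1/(n:ℝ)^3) * ((n.choose k : ℝ) * p ^ k * (1-p) ^ (n-k) * (k * ((k:ℝ) - 1) * ((k:ℝ) - 2)))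
        + (3/(n:ℝ)^3 - 3*p/(n:ℝ)^2) * ((n.choose k : ℝ) * p ^ k * (1-p) ^ (n-k) * (k * ((k:ℝ) - 1)))
        + (1/(n:ℝ)^3 - 3*p/(n:ℝ)^2 + 3*p^2/(n:ℝ)) * ((n.choose k : ℝ) * p ^ k * (1-p) ^ (n-k) * k)
        + (- p^3) * ((n.choose k : ℝ) * p ^ k * (1-p) ^ (n-k)) := by
    intro k _; field_simp [hn] <;> ring
  rw [Finset.sum_congr rfl this, Finset.sum_add_distrib, Finset.sum_add_distrib, Finset.sum_add_distrib,
    ← Finset.mul_sum, ← Finset.mul_sum, ← Finset.mul_sum, ← Finset.mul_sum, gm0, gm1, gm2, gm3]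
  field_simp [hn] <;> ring

end


noncomputable def wt (n k : ℕ) (p : ℝ) : ℝ := (n.choose k : ℝ) * p ^ k * (1 - p) ^ (n - k)
noncomputable def yy (n k : ℕ) : ℝ := (k:ℝ)/(n:ℝ)

lemma gm0' (n : ℕ) (p : ℝ) : ∑ k ∈ Finset.range (n+1), wt n k p = 1 := gm0 n p
lemma msum1' (n : ℕ) (p : ℝ) (hn : (n:ℝ) ≠ 0) :
    ∑ k ∈ Finset.range (n+1), wt n k p * yy n k = p := msum1 n p hn
lemma msumq' (n : ℕ) (p : ℝ) (hn : (n:ℝ) ≠ 0) :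
    ∑ k ∈ Finset.range (n+1), wt n k p * (yy n k * (1 - yy n k)) = (1 - 1/(n:ℝ)) * (p * (1-p)) :=
  msumq n p hn
lemma msum2c' (n : ℕ) (p : ℝ) (hn : (n:ℝ) ≠ 0) :
    ∑ k ∈ Finset.range (n+1), wt n k p * (yy n k - p)^2 = p*(1-p)/n := msum2c n p hn
lemma msum3c' (n : ℕ) (p : ℝ) (hn : (n:ℝ) ≠ 0) :
    ∑ k ∈ Finset.range (n+1), wt n k p * (yy n k - p)^3 = p*(1-p)*((1-p)-p)/n^2 := msum3c n p hn

lemma wt_nonneg {n k : ℕ} {p : ℝ} (hp0 : 0 ≤ p) (hp1 : p ≤ 1) : 0 ≤ wt n k p := by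
  unfold wt
  have : (0:ℝ) ≤ 1 - p := by linarith
  positivity

lemma yy_mem {n k : ℕ} (hn : 1 ≤ n) (hk : k ∈ range (n+1)) : 0 ≤ yy n k ∧ yy n k ≤ 1 := by
  rw [Finset.mem_range] at hk
  have hkn : (k:ℝ) ≤ (n:ℝ) := by exact_mod_cast Nat.lt_succ_iff.1 hk
  have hn0 : (0:ℝ) < n := by exact_mod_cast hn
  constructor
  · unfold yy; positivity
  · unfold yy; rw [div_le_one hn0]; exact hkn

noncomputable def aa (n k : ℕ) (p : ℝ) : ℝ := Real.sqrt (yy n k * (1 - p))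
noncomputable def bb (n k : ℕ) (p : ℝ) : ℝ := Real.sqrt ((1 - yy n k) * p)
noncomputable def WW (n k : ℕ) (p : ℝ) : ℝ := yy n k * (1 - p) + (1 - yy n k) * p

lemma WW_pos {n k : ℕ} {p : ℝ} (hp0 : 0 < p) (hp1 : p < 1) (hy0 : 0 ≤ yy n k) (hy1 : yy n k ≤ 1) :
    0 < WW n k p := by
  unfold WW
  rcases eq_or_lt_of_le hy0 with h | h
  · rw [← h]; simp; linarith
  · have : 0 < yy n k * (1-p) := by nlinarith
    nlinarith

lemma key_k {n k : ℕ} {p : ℝ} (hp0 : 0 < p) (hp1 : p < 1) (hy0 : 0 ≤ yy n k) (hy1 : yy n k ≤ 1) :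
    (yy n k - p)^2 / (2 * WW n k p) ≤ (aa n k p - bb n k p)^2 := by
  have hq : (0:ℝ) ≤ 1 - p := by linarith
  have ha2 : (aa n k p)^2 = yy n k * (1-p) := Real.sq_sqrt (by positivity)
  have hb2 : (bb n k p)^2 = (1 - yy n k) * p := Real.sq_sqrt (by nlinarith)
  have ha0 : 0 ≤ aa n k p := Real.sqrt_nonneg _
  have hb0 : 0 ≤ bb n k p := Real.sqrt_nonneg _
  have hW : 0 < WW n k p := WW_pos hp0 hp1 hy0 hy1
  have hWeq : (aa n k p)^2 + (bb n k p)^2 = WW n k p := by rw [ha2, hb2]; rfl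
  have hs0 : 0 < aa n k p + bb n k p := by
    by_contra h
    push_neg at h
    have h1 : aa n k p = 0 := le_antisymm (by linarith) ha0
    have h2 : bb n k p = 0 := le_antisymm (by linarith) hb0
    rw [h1, h2] at hWeq; norm_num at hWeq; linarith
  have hdiff : (aa n k p - bb n k p) * (aa n k p + bb n k p) = yy n k - p := by
    have : (aa n k p)^2 - (bb n k p)^2 = yy n k - p := by rw [ha2, hb2]; ring
    nlinarith [this]
  have hsq : (aa n k p - bb n k p)^2 * (aa n k p + bb n k p)^2 = (yy n k - p)^2 := by
    nlinarith [hdiff]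
  have hs2 : (aa n k p + bb n k p)^2 ≤ 2 * WW n k p := by nlinarith [sq_nonneg (aa n k p - bb n k p)]
  have hs2pos : 0 < (aa n k p + bb n k p)^2 := by positivity
  calc (yy n k - p)^2 / (2 * WW n k p)
      ≤ (yy n k - p)^2 / (aa n k p + bb n k p)^2 := by
        apply div_le_div_of_nonneg_left (by positivity) hs2pos hs2
    _ = (aa n k p - bb n k p)^2 := by
        rw [← hsq]; field_simp

lemma diamond (n : ℕ) (hn2 : 2 ≤ n) (p : ℝ) (hp0 : 0 < p) (hp1 : p < 1)
    (h2 : 1 ≤ 2*(n:ℝ)*(p*(1-p))) :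
    ∑ k ∈ range (n+1), wt n k p * Real.sqrt (yy n k * (1 - yy n k))
      ≤ Real.sqrt (p*(1-p)) - 1/(8*(n:ℝ)) := by
  have hn1 : 1 ≤ n := le_trans (by norm_num) hn2
  have hn0 : (0:ℝ) < n := by exact_mod_cast lt_of_lt_of_le (by norm_num) hn2
  have hnne : (n:ℝ) ≠ 0 := ne_of_gt hn0
  have hq0 : (0:ℝ) < 1 - p := by linarith
  have hpq : 0 < p * (1-p) := mul_pos hp0 hq0
  set r := Real.sqrt (p*(1-p)) with hr
  have hr0 : 0 < r := Real.sqrt_pos.2 hpq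
  have hr2 : r^2 = p*(1-p) := Real.sq_sqrt hpq.le
  have hrhalf : 2*r ≤ 1 := by nlinarith [hr2, hr0, sq_nonneg (1 - 2*p)]
  have hwnn : ∀ k ∈ range (n+1), 0 ≤ wt n k p := fun k _ => wt_nonneg hp0.le hp1.le
  -- E1
  set S := ∑ k ∈ range (n+1), wt n k p * Real.sqrt (yy n k * (1 - yy n k)) with hS
  have E1 : ∑ k ∈ range (n+1), wt n k p * (aa n k p - bb n k p)^2
      = 2*(p*(1-p)) - 2*r*S := by
    have hterm : ∀ k ∈ range (n+1), wt n k p * (aa n k p - bb n k p)^2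
        = ((1-p)-p) * (wt n k p * yy n k) + p * wt n k p
          - (2*r) * (wt n k p * Real.sqrt (yy n k * (1 - yy n k))) := by
      intro k hk
      obtain ⟨hy0, hy1⟩ := yy_mem hn1 hk
      have ha2 : (aa n k p)^2 = yy n k * (1-p) := Real.sq_sqrt (by positivity)
      have hb2 : (bb n k p)^2 = (1 - yy n k) * p := Real.sq_sqrt (by nlinarith)
      have hab : aa n k p * bb n k p = r * Real.sqrt (yy n k * (1 - yy n k)) := by
        unfold aa bb
        rw [← Real.sqrt_mul (by positivity), hr, ← Real.sqrt_mul hpq.le]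
        congr 1
        ring
      have : (aa n k p - bb n k p)^2 = yy n k * (1-p) + (1 - yy n k) * p
          - 2 * (r * Real.sqrt (yy n k * (1 - yy n k))) := by
        rw [← ha2, ← hb2, ← hab]; ring
      rw [this]; ring
    rw [Finset.sum_congr rfl hterm, Finset.sum_sub_distrib, Finset.sum_add_distrib,
      ← Finset.mul_sum, ← Finset.mul_sum, ← Finset.mul_sum, msum1' n p hnne, gm0']
    rw [hS]
    ring
  -- Cauchy-Schwarz
  set A := ∑ k ∈ range (n+1), wt n k p * (yy n k - p)^2 / (2 * WW n k p) with hA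
  set B := ∑ k ∈ range (n+1), wt n k p * (yy n k - p)^2 * (2 * WW n k p) with hB
  have hCS : (∑ k ∈ range (n+1), wt n k p * (yy n k - p)^2)^2 ≤ A * B := by
    have h := Finset.sum_mul_sq_le_sq_mul_sq (range (n+1))
      (fun k => Real.sqrt (wt n k p * (yy n k - p)^2 / (2 * WW n k p)))
      (fun k => Real.sqrt (wt n k p * (yy n k - p)^2 * (2 * WW n k p)))
    have e1 : ∀ k ∈ range (n+1),
        Real.sqrt (wt n k p * (yy n k - p)^2 / (2 * WW n k p)) *
        Real.sqrt (wt n k p * (yy n k - p)^2 * (2 * WW n k p))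
        = wt n k p * (yy n k - p)^2 := by
      intro k hk
      obtain ⟨hy0, hy1⟩ := yy_mem hn1 hk
      have hW := WW_pos hp0 hp1 hy0 hy1
      have hw := wt_nonneg (n := n) (k := k) hp0.le hp1.le
      rw [← Real.sqrt_mul (by positivity)]
      have : wt n k p * (yy n k - p)^2 / (2 * WW n k p) * (wt n k p * (yy n k - p)^2 * (2 * WW n k p))
          = (wt n k p * (yy n k - p)^2)^2 := by
        field_simp
      rw [this, Real.sqrt_sq (by positivity)]
    have e2 : ∀ k ∈ range (n+1),
        Real.sqrt (wt n k p * (yy n k - p)^2 / (2 * WW n k p))^2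
        = wt n k p * (yy n k - p)^2 / (2 * WW n k p) := by
      intro k hk
      obtain ⟨hy0, hy1⟩ := yy_mem hn1 hk
      have hW := WW_pos hp0 hp1 hy0 hy1
      have hw := wt_nonneg (n := n) (k := k) hp0.le hp1.le
      exact Real.sq_sqrt (by positivity)
    have e3 : ∀ k ∈ range (n+1),
        Real.sqrt (wt n k p * (yy n k - p)^2 * (2 * WW n k p))^2
        = wt n k p * (yy n k - p)^2 * (2 * WW n k p) := by
      intro k hk
      obtain ⟨hy0, hy1⟩ := yy_mem hn1 hk
      have hW := WW_pos hp0 hp1 hy0 hy1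
      have hw := wt_nonneg (n := n) (k := k) hp0.le hp1.le
      exact Real.sq_sqrt (by positivity)
    rw [Finset.sum_congr rfl e1, Finset.sum_congr rfl e2, Finset.sum_congr rfl e3] at h
    exact h
  have hS2 : ∑ k ∈ range (n+1), wt n k p * (yy n k - p)^2 = p*(1-p)/n := msum2c' n p hnne
  have hS3 : B = 2*(2*(p*(1-p))*(p*(1-p)/n) + ((1-p)-p)*(p*(1-p)*((1-p)-p)/n^2)) := by
    have hterm : ∀ k ∈ range (n+1), wt n k p * (yy n k - p)^2 * (2 * WW n k p)
        = 2*((2*(p*(1-p))) * (wt n k p * (yy n k - p)^2) + ((1-p)-p) * (wt n k p * (yy n k - p)^3)) := by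
      intro k hk
      have hWW : WW n k p = p + yy n k * ((1-p) - p) := by unfold WW; ring
      rw [hWW]
      ring
    rw [hB, Finset.sum_congr rfl hterm, ← Finset.mul_sum, Finset.sum_add_distrib,
      ← Finset.mul_sum, ← Finset.mul_sum, hS2, msum3c' n p hnne]
  have hkey : ((1-p)-p)^2 ≤ 2*(n:ℝ)*(p*(1-p)) := le_trans (by nlinarith) h2
  have hBle : B ≤ 8*(p*(1-p))^2/n := by
    rw [hS3]
    have e : 8*(p*(1-p))^2/(n:ℝ) - 2*(2*(p*(1-p))*(p*(1-p)/n) + ((1-p)-p)*(p*(1-p)*((1-p)-p)/n^2))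
        = (2*(p*(1-p))/(n:ℝ)^2) * (2*(n:ℝ)*(p*(1-p)) - ((1-p)-p)^2) := by
      field_simp
      ring
    have hpos : 0 ≤ (2*(p*(1-p))/(n:ℝ)^2) * (2*(n:ℝ)*(p*(1-p)) - ((1-p)-p)^2) := by
      apply mul_nonneg (by positivity)
      linarith
    linarith [e, hpos]
  have hA0 : 0 ≤ A := by
    rw [hA]
    apply Finset.sum_nonneg
    intro k hk
    obtain ⟨hy0, hy1⟩ := yy_mem hn1 hk
    have hW := WW_pos hp0 hp1 hy0 hy1
    have hw := wt_nonneg (n := n) (k := k) hp0.le hp1.le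
    positivity
  have hA1 : 1/(8*(n:ℝ)) ≤ A := by
    rw [hS2] at hCS
    have h9 : (p*(1-p)/n)^2 ≤ A * (8*(p*(1-p))^2/n) :=
      le_trans hCS (mul_le_mul_of_nonneg_left hBle hA0)
    rw [div_le_iff₀ (show (0:ℝ) < 8*(n:ℝ) by positivity)]
    have h12 : (p*(1-p))^2 * (1/(n:ℝ)^2) ≤ (p*(1-p))^2 * (8*A/n) := by
      calc (p*(1-p))^2 * (1/(n:ℝ)^2) = (p*(1-p)/n)^2 := by ring
        _ ≤ A * (8*(p*(1-p))^2/n) := h9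
        _ = (p*(1-p))^2 * (8*A/n) := by ring
    have h13 : 1/(n:ℝ)^2 ≤ 8*A/n := le_of_mul_le_mul_left h12 (by positivity)
    calc (1:ℝ) = (n:ℝ)^2 * (1/(n:ℝ)^2) := by field_simp
      _ ≤ (n:ℝ)^2 * (8*A/n) := mul_le_mul_of_nonneg_left h13 (by positivity)
      _ = A * (8*(n:ℝ)) := by field_simp
  have hD : 1/(8*(n:ℝ)) ≤ ∑ k ∈ range (n+1), wt n k p * (aa n k p - bb n k p)^2 := by
    refine le_trans hA1 ?_
    rw [hA]
    apply Finset.sum_le_sum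
    intro k hk
    obtain ⟨hy0, hy1⟩ := yy_mem hn1 hk
    have hw := wt_nonneg (n := n) (k := k) hp0.le hp1.le
    have := key_k (n := n) (k := k) hp0 hp1 hy0 hy1
    calc wt n k p * (yy n k - p)^2 / (2 * WW n k p)
        = wt n k p * ((yy n k - p)^2 / (2 * WW n k p)) := by ring
      _ ≤ wt n k p * (aa n k p - bb n k p)^2 := mul_le_mul_of_nonneg_left this hw
  -- conclude
  nlinarith [E1, hD, hr0, hr2, hrhalf, hn0, mul_pos hr0 hn0,
    mul_nonneg (by linarith : (0:ℝ) ≤ 1 - 2*r) (by positivity : (0:ℝ) ≤ 1/(8*(n:ℝ)))]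

lemma bern_eq (n : ℕ) (g : ℝ → ℝ) (p : ℝ) :
    bernstein' n g p = ∑ k ∈ range (n+1), wt n k p * g (yy n k) := rfl

lemma bern_add (n : ℕ) (g h : ℝ → ℝ) (p : ℝ) :
    bernstein' n (fun x => g x + h x) p = bernstein' n g p + bernstein' n h p := by
  simp only [bern_eq, ← Finset.sum_add_distrib]
  exact Finset.sum_congr rfl fun k _ => by ring

lemma bern_sub (n : ℕ) (g h : ℝ → ℝ) (p : ℝ) :
    bernstein' n (fun x => g x - h x) p = bernstein' n g p - bernstein' n h p := by
  simp only [bern_eq, ← Finset.sum_sub_distrib]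
  exact Finset.sum_congr rfl fun k _ => by ring

lemma bern_smul (n : ℕ) (c : ℝ) (g : ℝ → ℝ) (p : ℝ) :
    bernstein' n (fun x => c * g x) p = c * bernstein' n g p := by
  simp only [bern_eq, Finset.mul_sum]
  exact Finset.sum_congr rfl fun k _ => by ring

lemma bern_zero (n : ℕ) (g : ℝ → ℝ) : bernstein' n g 0 = g 0 := by
  unfold bernstein'
  rw [Finset.sum_range_succ']
  have : ∀ k ∈ range n, (n.choose (k+1) : ℝ) * (0:ℝ) ^ (k+1) * (1 - 0) ^ (n - (k+1)) * g ((k+1 : ℕ) / n) = 0 := by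
    intro k _
    simp [zero_pow]
  rw [Finset.sum_congr rfl this]
  simp

lemma bern_one (n : ℕ) (hn : 1 ≤ n) (g : ℝ → ℝ) : bernstein' n g 1 = g 1 := by
  unfold bernstein'
  rw [Finset.sum_range_succ]
  have : ∀ k ∈ range n, (n.choose k : ℝ) * (1:ℝ) ^ k * (1 - 1) ^ (n - k) * g (k / n) = 0 := by
    intro k hk
    rw [Finset.mem_range] at hk
    have : ((1:ℝ) - 1) ^ (n - k) = 0 := by
      rw [sub_self]
      exact zero_pow (by omega)
    rw [this]; ring
  rw [Finset.sum_congr rfl this]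
  have hne : ((n:ℝ)) ≠ 0 := by exact_mod_cast (by omega : n ≠ 0)
  have hnn : ((n:ℝ))/(n:ℝ) = 1 := div_self hne
  simp [hnn]

lemma bern_mono (n : ℕ) {g h : ℝ → ℝ} (H : ∀ k ∈ range (n+1), g (yy n k) ≤ h (yy n k))
    {p : ℝ} (hp0 : 0 ≤ p) (hp1 : p ≤ 1) : bernstein' n g p ≤ bernstein' n h p := by
  simp only [bern_eq]
  exact Finset.sum_le_sum fun k hk => mul_le_mul_of_nonneg_left (H k hk) (wt_nonneg hp0 hp1)

lemma bern_abs (n : ℕ) (g : ℝ → ℝ) {p : ℝ} (hp0 : 0 ≤ p) (hp1 : p ≤ 1) :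
    |bernstein' n g p| ≤ bernstein' n (fun x => |g x|) p := by
  simp only [bern_eq]
  refine le_trans (Finset.abs_sum_le_sum_abs _ _) ?_
  refine Finset.sum_le_sum fun k hk => ?_
  rw [abs_mul, abs_of_nonneg (wt_nonneg hp0 hp1)]

lemma bern_const (n : ℕ) (c : ℝ) (p : ℝ) : bernstein' n (fun _ => c) p = c := by
  rw [bern_eq, ← Finset.sum_mul, gm0', one_mul]

lemma bern_affine (n : ℕ) (hn : 1 ≤ n) (a b p : ℝ) :
    bernstein' n (fun x => a * x + b) p = a * p + b := by
  have hnne : ((n:ℝ)) ≠ 0 := by exact_mod_cast (by omega : n ≠ 0)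
  simp only [bern_eq]
  have : ∀ k ∈ range (n+1), wt n k p * (a * yy n k + b)
      = a * (wt n k p * yy n k) + b * wt n k p := fun k _ => by ring
  rw [Finset.sum_congr rfl this, Finset.sum_add_distrib, ← Finset.mul_sum, ← Finset.mul_sum,
    msum1' n p hnne, gm0']
  ring

lemma bern_eigen (n : ℕ) (hn : 1 ≤ n) (p : ℝ) :
    bernstein' n (fun x => x * (1 - x)) p = (1 - 1/(n:ℝ)) * (p * (1-p)) := by
  have hnne : ((n:ℝ)) ≠ 0 := by exact_mod_cast (by omega : n ≠ 0)
  simp only [bern_eq]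
  exact msumq' n p hnne

/-- Bernoulli-type bound -/
lemma interior_mass (n : ℕ) (hn : 1 ≤ n) {p : ℝ} (hp0 : 0 ≤ p) (hp1 : p ≤ 1) :
    1 - (1-p)^n - p^n ≤ 2*(n:ℝ)*(p*(1-p)) := by
  have h1 : 1 + (n:ℝ) * (-p) ≤ (1 + (-p))^n := one_add_mul_le_pow (by linarith) n
  have h2 : 1 + (n:ℝ) * (-(1-p)) ≤ (1 + (-(1-p)))^n := one_add_mul_le_pow (by linarith) n
  have hn1 : (1:ℝ) ≤ n := by exact_mod_cast hn
  have hp : (0:ℝ) ≤ p^n := pow_nonneg hp0 n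
  have hq : (0:ℝ) ≤ (1-p)^n := pow_nonneg (by linarith) n
  rcases le_or_gt p (1/2) with h | h
  · have : 1 - (1+(-p))^n ≤ (n:ℝ)*p := by linarith
    have e : (1 + (-p)) = 1 - p := by ring
    rw [e] at this
    nlinarith [mul_nonneg (mul_nonneg (by linarith : (0:ℝ) ≤ (n:ℝ)) hp0) (by linarith : (0:ℝ) ≤ 1 - 2*p)]
  · have : 1 - (1+(-(1-p)))^n ≤ (n:ℝ)*(1-p) := by linarith
    have e : (1 + (-(1-p))) = p := by ring
    rw [e] at this
    nlinarith [mul_nonneg (mul_nonneg (by linarith : (0:ℝ) ≤ (n:ℝ)) (by linarith : (0:ℝ) ≤ 1-p)) (by linarith : (0:ℝ) ≤ 2*p - 1)]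

/-- one-step bound for functions vanishing at the endpoints -/
lemma bern_edge (n : ℕ) (hn : 1 ≤ n) {h : ℝ → ℝ} (h0 : h 0 = 0) (h1 : h 1 = 0)
    {C : ℝ} (hC : ∀ x ∈ Set.Icc (0:ℝ) 1, |h x| ≤ C)
    {p : ℝ} (hp0 : 0 ≤ p) (hp1 : p ≤ 1) :
    |bernstein' n h p| ≤ C * (2*(n:ℝ)) * (p*(1-p)) := by
  have hC0 : 0 ≤ C := le_trans (abs_nonneg _) (hC 0 (by norm_num))
  have step1 := bern_abs n h hp0 hp1
  obtain ⟨n', rfl⟩ : ∃ n', n = n' + 1 := ⟨n - 1, by omega⟩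
  set N := n' + 1
  have key : bernstein' N (fun x => |h x|) p ≤ C * (1 - (1-p)^N - p^N) := by
    rw [bern_eq]
    rw [Finset.sum_range_succ, Finset.sum_range_succ']
    have e0 : yy N 0 = 0 := by unfold yy; simp
    have eN : yy N N = 1 := by
      unfold yy
      exact div_self (by exact_mod_cast (by omega : N ≠ 0))
    rw [e0, eN, h0, h1]
    simp only [abs_zero, mul_zero, add_zero, zero_add]
    have hbd : ∀ k ∈ range n', wt N (k+1) p * |h (yy N (k+1))| ≤ wt N (k+1) p * C := by
      intro k hk
      refine mul_le_mul_of_nonneg_left ?_ (wt_nonneg hp0 hp1)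
      refine hC _ ?_
      have := yy_mem (n := N) (k := k+1) (by omega) (by rw [Finset.mem_range] at hk ⊢; omega)
      exact ⟨this.1, this.2⟩
    refine le_trans (Finset.sum_le_sum hbd) ?_
    have : ∑ k ∈ range n', wt N (k+1) p * C = (∑ k ∈ range n', wt N (k+1) p) * C := by
      rw [Finset.sum_mul]
    rw [this]
    have hsum : (∑ k ∈ range n', wt N (k+1) p) = 1 - (1-p)^N - p^N := by
      have htot := gm0' N p
      rw [Finset.sum_range_succ, Finset.sum_range_succ'] at htot
      have e1 : wt N 0 p = (1-p)^N := by unfold wt; simp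
      have e2 : wt N N p = p^N := by unfold wt; simp
      rw [e1, e2] at htot
      linarith
    rw [hsum]
    ring_nf
    rfl
  have := interior_mass N (by omega) hp0 hp1
  calc |bernstein' N h p| ≤ bernstein' N (fun x => |h x|) p := step1
    _ ≤ C * (1 - (1-p)^N - p^N) := key
    _ ≤ C * (2*(N:ℝ)) * (p*(1-p)) := by nlinarith

noncomputable def iterB (n : ℕ) (K : ℕ) (g : ℝ → ℝ) : ℝ → ℝ := (bernstein' n)^[K] g

lemma iterB_zero (n : ℕ) (g : ℝ → ℝ) : iterB n 0 g = g := rfl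

lemma iterB_succ (n K : ℕ) (g : ℝ → ℝ) : iterB n (K+1) g = bernstein' n (iterB n K g) :=
  Function.iterate_succ_apply' _ _ _

/-- decay of iterates for functions vanishing at the endpoints -/
lemma iterB_decay (n : ℕ) (hn : 1 ≤ n) {h : ℝ → ℝ} (h0 : h 0 = 0) (h1 : h 1 = 0)
    {C : ℝ} (hC : ∀ x ∈ Set.Icc (0:ℝ) 1, |h x| ≤ C) :
    ∀ K, ∀ p ∈ Set.Icc (0:ℝ) 1,
      |iterB n (K+1) h p| ≤ C * (2*(n:ℝ)) * (1 - 1/(n:ℝ))^K * (p*(1-p)) := by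
  have hC0 : 0 ≤ C := le_trans (abs_nonneg _) (hC 0 (by norm_num))
  intro K
  induction K with
  | zero =>
    intro p hp
    have := bern_edge n hn h0 h1 hC hp.1 hp.2
    rw [iterB_succ, iterB_zero]
    simpa using this
  | succ K ih =>
    intro p hp
    rw [iterB_succ]
    have habs := bern_abs n (iterB n (K+1) h) hp.1 hp.2
    have hmono : bernstein' n (fun x => |iterB n (K+1) h x|) p
        ≤ bernstein' n (fun x => (C * (2*(n:ℝ)) * (1 - 1/(n:ℝ))^K) * (x*(1-x))) p := by
      refine bern_mono n ?_ hp.1 hp.2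
      intro k hk
      obtain ⟨hy0, hy1⟩ := yy_mem hn hk
      have := ih (yy n k) ⟨hy0, hy1⟩
      calc |iterB n (K+1) h (yy n k)| ≤ C * (2*(n:ℝ)) * (1 - 1/(n:ℝ))^K * (yy n k * (1 - yy n k)) := this
        _ = (C * (2*(n:ℝ)) * (1 - 1/(n:ℝ))^K) * (yy n k * (1 - yy n k)) := by ring
    have heig : bernstein' n (fun x => (C * (2*(n:ℝ)) * (1 - 1/(n:ℝ))^K) * (x*(1-x))) p
        = (C * (2*(n:ℝ)) * (1 - 1/(n:ℝ))^K) * ((1 - 1/(n:ℝ)) * (p*(1-p))) := by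
      rw [bern_smul, bern_eigen n hn]
    calc |bernstein' n (iterB n (K+1) h) p| ≤ _ := habs
      _ ≤ _ := hmono
      _ = C * (2*(n:ℝ)) * (1 - 1/(n:ℝ))^(K+1) * (p*(1-p)) := by rw [heig]; ring

noncomputable def ssq (n : ℕ) (u : ℝ → ℝ) : ℕ → ℝ → ℝ
  | 0 => fun _ => 0
  | K+1 => fun x => |u x| + bernstein' n (ssq n u K) x

noncomputable def PP (n : ℕ) (u : ℝ → ℝ) : ℕ → ℝ → ℝ
  | 0 => fun _ => 0
  | K+1 => fun x => u x + bernstein' n (PP n u K) x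

lemma ssq_zero (n : ℕ) (u : ℝ → ℝ) : ssq n u 0 = fun _ => 0 := rfl
lemma ssq_succ (n : ℕ) (u : ℝ → ℝ) (K : ℕ) :
    ssq n u (K+1) = fun x => |u x| + bernstein' n (ssq n u K) x := rfl
lemma PP_zero (n : ℕ) (u : ℝ → ℝ) : PP n u 0 = fun _ => 0 := rfl
lemma PP_succ (n : ℕ) (u : ℝ → ℝ) (K : ℕ) :
    PP n u (K+1) = fun x => u x + bernstein' n (PP n u K) x := rfl

/-- the key inequality: `‖h‖ ≤ (1+4n)‖(I-B_n)h‖` for `h` vanishing at the endpoints -/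
lemma star (n : ℕ) (hn2 : 2 ≤ n) (h : ℝ → ℝ)
    (h0 : h 0 = 0) (h1 : h 1 = 0) (C ε : ℝ)
    (hC : ∀ x ∈ Set.Icc (0:ℝ) 1, |h x| ≤ C)
    (hε : ∀ x ∈ Set.Icc (0:ℝ) 1, |h x - bernstein' n h x| ≤ ε) :
    ∀ x ∈ Set.Icc (0:ℝ) 1, |h x| ≤ (1 + 4*(n:ℝ)) * ε := by
  have hn : 1 ≤ n := by omega
  have hnne : ((n:ℝ)) ≠ 0 := by exact_mod_cast (by omega : n ≠ 0)
  have hn0 : (0:ℝ) < n := by exact_mod_cast (by omega : 0 < n)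
  set u : ℝ → ℝ := fun x => h x - bernstein' n h x with hu
  have hC0 : 0 ≤ C := le_trans (abs_nonneg _) (hC 0 (by norm_num))
  have hε0 : 0 ≤ ε := le_trans (abs_nonneg _) (hε 0 (by norm_num))
  have u0 : u 0 = 0 := by rw [hu]; simp [bern_zero, h0]
  have u1 : u 1 = 0 := by rw [hu]; simp [bern_one n hn, h1]
  -- telescope
  have tel : ∀ K, ∀ x, h x = PP n u K x + iterB n K h x := by
    intro K
    induction K with
    | zero => intro x; rw [PP_zero, iterB_zero]; simp
    | succ K ih =>
      intro x
      have heq : (fun y => PP n u K y + iterB n K h y) = h := by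
        funext y; rw [← ih y]
      calc h x = u x + bernstein' n h x := by rw [hu]; ring
        _ = u x + bernstein' n (fun y => PP n u K y + iterB n K h y) x := by rw [heq]
        _ = u x + (bernstein' n (PP n u K) x + bernstein' n (iterB n K h) x) := by rw [bern_add]
        _ = PP n u (K+1) x + iterB n (K+1) h x := by rw [iterB_succ, PP_succ]; dsimp only; ring
  -- endpoints of ssq
  have send : ∀ K, ssq n u K 0 = 0 ∧ ssq n u K 1 = 0 := by
    intro K
    induction K with
    | zero => simp [ssq]
    | succ K ih =>
      constructor
      · show |u 0| + bernstein' n (ssq n u K) 0 = 0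
        rw [bern_zero, u0, ih.1]; simp
      · show |u 1| + bernstein' n (ssq n u K) 1 = 0
        rw [bern_one n hn, u1, ih.2]; simp
  -- grid bound for ssq
  have sgrid : ∀ K, ∀ k ∈ range (n+1),
      ssq n u K (yy n k) ≤ ε * (8*(n:ℝ) * Real.sqrt (yy n k * (1 - yy n k))) := by
    intro K
    induction K with
    | zero =>
      intro k hk
      rw [ssq_zero]
      have : 0 ≤ Real.sqrt (yy n k * (1 - yy n k)) := Real.sqrt_nonneg _
      positivity
    | succ K ih =>
      intro k hk
      obtain ⟨hy0, hy1⟩ := yy_mem hn hk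
      rw [Finset.mem_range] at hk
      show |u (yy n k)| + bernstein' n (ssq n u K) (yy n k) ≤ _
      rcases Nat.eq_zero_or_pos k with rfl | hk1
      · have e0 : yy n 0 = 0 := by unfold yy; simp
        rw [e0, u0, bern_zero, (send K).1]
        simp
      rcases eq_or_lt_of_le (Nat.lt_succ_iff.1 hk) with hkeq | hkn
      · have e1 : yy n k = 1 := by rw [hkeq]; unfold yy; exact div_self hnne
        rw [e1, u1, bern_one n hn, (send K).2]
        simp

      -- interior
      have hyp0 : 0 < yy n k := by
        unfold yy
        have : (0:ℝ) < (k:ℝ) := by exact_mod_cast hk1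
        positivity
      have hyp1 : yy n k < 1 := by
        unfold yy
        rw [div_lt_one hn0]
        exact_mod_cast hkn
      have h2 : 1 ≤ 2*(n:ℝ)*(yy n k * (1 - yy n k)) := by
        have hk1' : (1:ℝ) ≤ (k:ℝ) := by exact_mod_cast hk1
        have hkn' : (k:ℝ) ≤ (n:ℝ) - 1 := by
          have : (k:ℝ) + 1 ≤ (n:ℝ) := by exact_mod_cast hkn
          linarith
        have e : 2*(n:ℝ)*(yy n k * (1 - yy n k)) = 2*(k:ℝ)*((n:ℝ)-(k:ℝ))/(n:ℝ) := by
          unfold yy; field_simp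
        rw [e, le_div_iff₀ hn0]
        nlinarith [mul_nonneg (by linarith : (0:ℝ) ≤ (k:ℝ) - 1) (by linarith : (0:ℝ) ≤ (n:ℝ) - 1 - (k:ℝ))]
      have hmono : bernstein' n (ssq n u K) (yy n k)
          ≤ bernstein' n (fun x => (ε * (8*(n:ℝ))) * Real.sqrt (x * (1 - x))) (yy n k) := by
        refine bern_mono n ?_ hyp0.le hyp1.le
        intro j hj
        have := ih j hj
        calc ssq n u K (yy n j) ≤ ε * (8*(n:ℝ) * Real.sqrt (yy n j * (1 - yy n j))) := this
          _ = (ε * (8*(n:ℝ))) * Real.sqrt (yy n j * (1 - yy n j)) := by ring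
      have hdia : bernstein' n (fun x => (ε * (8*(n:ℝ))) * Real.sqrt (x * (1 - x))) (yy n k)
          ≤ (ε * (8*(n:ℝ))) * (Real.sqrt (yy n k * (1 - yy n k)) - 1/(8*(n:ℝ))) := by
        rw [bern_smul]
        refine mul_le_mul_of_nonneg_left ?_ (by positivity)
        exact diamond n hn2 (yy n k) hyp0 hyp1 h2
      have huk : |u (yy n k)| ≤ ε := hε (yy n k) ⟨hyp0.le, hyp1.le⟩
      have : (ε * (8*(n:ℝ))) * (Real.sqrt (yy n k * (1 - yy n k)) - 1/(8*(n:ℝ)))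
          = ε * (8*(n:ℝ) * Real.sqrt (yy n k * (1 - yy n k))) - ε := by
        field_simp
      linarith [hmono, hdia, huk, this]
  -- sup bound for ssq
  have ssup : ∀ K, ∀ x ∈ Set.Icc (0:ℝ) 1, ssq n u K x ≤ (1 + 4*(n:ℝ)) * ε := by
    intro K
    cases K with
    | zero =>
      intro x hx
      rw [ssq_zero]
      positivity
    | succ K =>
      intro x hx
      show |u x| + bernstein' n (ssq n u K) x ≤ _
      have hmono : bernstein' n (ssq n u K) x
          ≤ bernstein' n (fun _ => 4*(n:ℝ)*ε) x := by
        refine bern_mono n ?_ hx.1 hx.2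
        intro j hj
        obtain ⟨hy0, hy1⟩ := yy_mem hn hj
        refine le_trans (sgrid K j hj) ?_
        have hsq : Real.sqrt (yy n j * (1 - yy n j)) ≤ 1/2 := by
          have h14 : yy n j * (1 - yy n j) ≤ (1/2:ℝ)^2 := by nlinarith [sq_nonneg (yy n j - 1/2)]
          calc Real.sqrt (yy n j * (1 - yy n j)) ≤ Real.sqrt ((1/2:ℝ)^2) := Real.sqrt_le_sqrt h14
            _ = 1/2 := Real.sqrt_sq (by norm_num)
        calc ε * (8*(n:ℝ) * Real.sqrt (yy n j * (1 - yy n j)))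
            ≤ ε * (8*(n:ℝ) * (1/2)) := by
              refine mul_le_mul_of_nonneg_left ?_ hε0
              refine mul_le_mul_of_nonneg_left hsq (by positivity)
          _ = 4*(n:ℝ)*ε := by ring
      have hconst : bernstein' n (fun _ => 4*(n:ℝ)*ε) x = 4*(n:ℝ)*ε := bern_const n _ x
      have hux : |u x| ≤ ε := hε x hx
      linarith [hmono, hux, hconst]
  -- PP bounded by ssq on the grid
  have pgrid : ∀ K, ∀ k ∈ range (n+1), |PP n u K (yy n k)| ≤ ssq n u K (yy n k) := by
    intro K
    induction K with
    | zero => intro k hk; rw [PP_zero, ssq_zero]; simp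
    | succ K ih =>
      intro k hk
      obtain ⟨hy0, hy1⟩ := yy_mem hn hk
      show |u (yy n k) + bernstein' n (PP n u K) (yy n k)| ≤ |u (yy n k)| + bernstein' n (ssq n u K) (yy n k)
      refine le_trans (abs_add_le _ _) ?_
      have h1' := bern_abs n (PP n u K) hy0 hy1
      have h2' : bernstein' n (fun x => |PP n u K x|) (yy n k) ≤ bernstein' n (ssq n u K) (yy n k) :=
        bern_mono n (fun j hj => ih j hj) hy0 hy1
      linarith
  -- PP bounded by ssq everywhere on [0,1]
  have px : ∀ K, ∀ x ∈ Set.Icc (0:ℝ) 1, |PP n u K x| ≤ ssq n u K x := by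
    intro K
    cases K with
    | zero => intro x hx; rw [PP_zero, ssq_zero]; simp
    | succ K =>
      intro x hx
      show |u x + bernstein' n (PP n u K) x| ≤ |u x| + bernstein' n (ssq n u K) x
      refine le_trans (abs_add_le _ _) ?_
      have h1' := bern_abs n (PP n u K) hx.1 hx.2
      have h2' : bernstein' n (fun x => |PP n u K x|) x ≤ bernstein' n (ssq n u K) x :=
        bern_mono n (fun j hj => pgrid K j hj) hx.1 hx.2
      linarith
  -- combine
  intro x hx
  set lam : ℝ := 1 - 1/(n:ℝ) with hlam
  have hlam0 : 0 ≤ lam := by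
    rw [hlam]
    have : 1/(n:ℝ) ≤ 1 := by
      rw [div_le_one hn0]
      exact_mod_cast hn
    linarith
  have hlam1 : lam < 1 := by
    rw [hlam]
    have : 0 < 1/(n:ℝ) := by positivity
    linarith
  have hbd : ∀ K : ℕ, |h x| ≤ (1 + 4*(n:ℝ)) * ε + (C * (2*(n:ℝ))) * lam^K := by
    intro K
    have e := tel (K+1) x
    have t1 : |PP n u (K+1) x| ≤ (1 + 4*(n:ℝ)) * ε :=
      le_trans (px (K+1) x hx) (ssup (K+1) x hx)
    have t2 : |iterB n (K+1) h x| ≤ C * (2*(n:ℝ)) * lam^K * (x*(1-x)) :=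
      iterB_decay n hn h0 h1 hC K x hx
    have hq14 : x*(1-x) ≤ 1 := by nlinarith [hx.1, hx.2]
    have t3 : C * (2*(n:ℝ)) * lam^K * (x*(1-x)) ≤ C * (2*(n:ℝ)) * lam^K := by
      nlinarith [pow_nonneg hlam0 K, mul_nonneg (mul_nonneg hC0 (by positivity : (0:ℝ) ≤ 2*(n:ℝ))) (pow_nonneg hlam0 K)]
    calc |h x| = |PP n u (K+1) x + iterB n (K+1) h x| := by rw [← e]
      _ ≤ |PP n u (K+1) x| + |iterB n (K+1) h x| := abs_add_le _ _
      _ ≤ (1 + 4*(n:ℝ)) * ε + C * (2*(n:ℝ)) * lam^K := by linarith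
  have htend : Filter.Tendsto (fun K : ℕ => (1 + 4*(n:ℝ)) * ε + (C * (2*(n:ℝ))) * lam^K)
      Filter.atTop (nhds ((1 + 4*(n:ℝ)) * ε)) := by
    have h1' : Filter.Tendsto (fun K : ℕ => lam^K) Filter.atTop (nhds 0) :=
      tendsto_pow_atTop_nhds_zero_of_lt_one hlam0 hlam1
    have h2' := (h1'.const_mul (C * (2*(n:ℝ)))).const_add ((1 + 4*(n:ℝ)) * ε)
    simpa using h2'
  exact ge_of_tendsto' htend hbd


noncomputable def Msup (g : ℝ → ℝ) : ℝ := sSup ((fun p => |g p|) '' Set.Icc (0:ℝ) 1)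

lemma Msup_ge {g : ℝ → ℝ} (hg : ContinuousOn g (Set.Icc 0 1)) :
    ∀ x ∈ Set.Icc (0:ℝ) 1, |g x| ≤ Msup g := by
  intro x hx
  exact le_csSup (isCompact_Icc.bddAbove_image hg.abs) ⟨x, hx, rfl⟩

lemma Msup_le {g : ℝ → ℝ} {c : ℝ} (hc : ∀ x ∈ Set.Icc (0:ℝ) 1, |g x| ≤ c) : Msup g ≤ c :=
  csSup_le ⟨|g 0|, 0, by norm_num, rfl⟩ (by rintro y ⟨p, hp, rfl⟩; exact hc p hp)

lemma Msup_nonneg {g : ℝ → ℝ} (hg : ContinuousOn g (Set.Icc 0 1)) : 0 ≤ Msup g :=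
  le_trans (abs_nonneg _) (Msup_ge hg 0 (by norm_num))

lemma bern_continuous (n : ℕ) (g : ℝ → ℝ) : Continuous (fun p => bernstein' n g p) := by
  unfold bernstein'
  exact continuous_finset_sum _ (fun k _ => by continuity)

lemma bootIter_zero (n : ℕ) (f : ℝ → ℝ) : bootIter n f 0 = f := rfl
lemma bootIter_succ (n : ℕ) (f : ℝ → ℝ) (j : ℕ) :
    bootIter n f (j+1) = fun p => bootIter n f j p - bernstein' n (bootIter n f j) p := rfl

end BootstrapAux

/-- `n^m · ‖(I−B_n)^m f‖ → 0` as `n → ∞` iff `f` is affine on `[0,1]`. -/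
theorem bootstrap_bias_little_o_iff_affine (m : ℕ) (hm : 1 ≤ m) (f : ℝ → ℝ)
    (hf : ContinuousOn f (Set.Icc 0 1)) :
    Filter.Tendsto
      (fun n : ℕ => (n : ℝ) ^ m *
        sSup ((fun p => |bootIter n f m p|) '' Set.Icc (0:ℝ) 1))
      Filter.atTop (nhds 0) ↔
    ∃ a b : ℝ, ∀ p ∈ Set.Icc (0:ℝ) 1, f p = a * p + b := by
  have hcont : ∀ n j, ContinuousOn (bootIter n f j) (Set.Icc (0:ℝ) 1) := by
    intro n j
    induction j with
    | zero => exact hf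
    | succ j ih =>
      rw [bootIter_succ]
      exact ih.sub (bern_continuous n _).continuousOn
  constructor
  · -- forward direction
    intro hyp
    refine ⟨f 1 - f 0, f 0, ?_⟩
    set L : ℝ → ℝ := fun x => (f 1 - f 0) * x + f 0 with hL
    set g : ℝ → ℝ := fun x => f x - L x with hg
    have hLc : Continuous L := by rw [hL]; continuity
    have hgc : ContinuousOn g (Set.Icc 0 1) := hf.sub hLc.continuousOn
    have hg0 : g 0 = 0 := by show f 0 - ((f 1 - f 0) * 0 + f 0) = 0; ring
    have hg1 : g 1 = 0 := by show f 1 - ((f 1 - f 0) * 1 + f 0) = 0; ring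
    have boot0 : ∀ n : ℕ, 1 ≤ n → ∀ j, bootIter n f (j+1) 0 = 0 ∧ bootIter n f (j+1) 1 = 0 := by
      intro n hn j
      constructor
      · show bootIter n f j 0 - bernstein' n (bootIter n f j) 0 = 0
        rw [bern_zero]; ring
      · show bootIter n f j 1 - bernstein' n (bootIter n f j) 1 = 0
        rw [bern_one n hn]; ring
    have chain : ∀ n : ℕ, 2 ≤ n → ∀ j : ℕ,
        Msup g ≤ (1 + 4*(n:ℝ))^(j+1) * Msup (bootIter n f (j+1)) := by
      intro n hn2 j
      have hn : 1 ≤ n := by omega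
      induction j with
      | zero =>
        have hε : ∀ x ∈ Set.Icc (0:ℝ) 1, |g x - bernstein' n g x| ≤ Msup (bootIter n f 1) := by
          intro x hx
          have e : g x - bernstein' n g x = bootIter n f 1 x := by
            have e1 : bernstein' n g x = bernstein' n f x - bernstein' n L x := by
              rw [hg]
              exact bern_sub n f L x
            have e2 : bernstein' n L x = L x := by
              rw [hL]
              exact bern_affine n hn (f 1 - f 0) (f 0) x
            show g x - bernstein' n g x = f x - bernstein' n f x
            rw [e1, e2, hg]
            ring
          rw [e]
          exact Msup_ge (hcont n 1) x hx
        have hstar := star n hn2 g hg0 hg1 (Msup g) (Msup (bootIter n f 1)) (Msup_ge hgc) hε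
        rw [pow_one]
        exact Msup_le hstar
      | succ j ih =>
        have hstep : Msup (bootIter n f (j+1)) ≤ (1 + 4*(n:ℝ)) * Msup (bootIter n f (j+2)) := by
          have hε : ∀ x ∈ Set.Icc (0:ℝ) 1,
              |bootIter n f (j+1) x - bernstein' n (bootIter n f (j+1)) x| ≤ Msup (bootIter n f (j+2)) := by
            intro x hx
            have e : bootIter n f (j+1) x - bernstein' n (bootIter n f (j+1)) x = bootIter n f (j+2) x := rfl
            rw [e]
            exact Msup_ge (hcont n (j+2)) x hx
          have hstar := star n hn2 (bootIter n f (j+1)) (boot0 n hn j).1 (boot0 n hn j).2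
            (Msup (bootIter n f (j+1))) (Msup (bootIter n f (j+2)))
            (Msup_ge (hcont n (j+1))) hε
          exact Msup_le hstar
        have hpow : (0:ℝ) ≤ (1 + 4*(n:ℝ))^(j+1) := by positivity
        calc Msup g ≤ (1 + 4*(n:ℝ))^(j+1) * Msup (bootIter n f (j+1)) := ih
          _ ≤ (1 + 4*(n:ℝ))^(j+1) * ((1 + 4*(n:ℝ)) * Msup (bootIter n f (j+2))) :=
              mul_le_mul_of_nonneg_left hstep hpow
          _ = (1 + 4*(n:ℝ))^(j+2) * Msup (bootIter n f (j+2)) := by ring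
    intro p hp
    obtain ⟨m', rfl⟩ : ∃ m', m = m' + 1 := ⟨m - 1, by omega⟩
    have hb : ∀ n : ℕ, 2 ≤ n →
        |g p| ≤ 5^(m'+1) * ((n:ℝ)^(m'+1) * Msup (bootIter n f (m'+1))) := by
      intro n hn2
      have hn0 : (0:ℝ) < n := by exact_mod_cast (by omega : 0 < n)
      have hM0 := Msup_nonneg (hcont n (m'+1))
      have h1 : |g p| ≤ (1 + 4*(n:ℝ))^(m'+1) * Msup (bootIter n f (m'+1)) :=
        le_trans (Msup_ge hgc p hp) (chain n hn2 m')
      have h2 : (1 + 4*(n:ℝ))^(m'+1) ≤ (5*(n:ℝ))^(m'+1) := by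
        apply pow_le_pow_left₀ (by positivity)
        have : (1:ℝ) ≤ n := by exact_mod_cast (by omega : 1 ≤ n)
        linarith
      calc |g p| ≤ (1 + 4*(n:ℝ))^(m'+1) * Msup (bootIter n f (m'+1)) := h1
        _ ≤ (5*(n:ℝ))^(m'+1) * Msup (bootIter n f (m'+1)) :=
            mul_le_mul_of_nonneg_right h2 hM0
        _ = 5^(m'+1) * ((n:ℝ)^(m'+1) * Msup (bootIter n f (m'+1))) := by
            rw [mul_pow]; ring
    have htend : Filter.Tendsto
        (fun n : ℕ => (5:ℝ)^(m'+1) * ((n:ℝ)^(m'+1) * Msup (bootIter n f (m'+1))))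
        Filter.atTop (nhds 0) := by
      have := hyp.const_mul ((5:ℝ)^(m'+1))
      simpa [Msup] using this
    have habs : |g p| ≤ 0 :=
      ge_of_tendsto htend (Filter.eventually_atTop.2 ⟨2, fun n hn => hb n hn⟩)
    have hgp : g p = 0 := abs_eq_zero.1 (le_antisymm habs (abs_nonneg _))
    have : f p - ((f 1 - f 0) * p + f 0) = 0 := hgp
    linarith
  · -- backward direction
    rintro ⟨a, b, hab⟩
    have hzero : ∀ n : ℕ, 1 ≤ n → ∀ j, ∀ p ∈ Set.Icc (0:ℝ) 1, bootIter n f (j+1) p = 0 := by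
      intro n hn j
      induction j with
      | zero =>
        intro p hp
        show f p - bernstein' n f p = 0
        have hB : bernstein' n f p = a * p + b := by
          have h1 : ∀ k ∈ Finset.range (n+1), wt n k p * f (yy n k) = wt n k p * (a * yy n k + b) := by
            intro k hk
            obtain ⟨h1, h2⟩ := yy_mem hn hk
            rw [hab _ ⟨h1, h2⟩]
          calc bernstein' n f p = ∑ k ∈ Finset.range (n+1), wt n k p * f (yy n k) := bern_eq n f p
            _ = ∑ k ∈ Finset.range (n+1), wt n k p * (a * yy n k + b) := Finset.sum_congr rfl h1
            _ = bernstein' n (fun x => a * x + b) p := rfl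
            _ = a * p + b := bern_affine n hn a b p
        rw [hB, hab p hp]
        ring
      | succ j ih =>
        intro p hp
        show bootIter n f (j+1) p - bernstein' n (bootIter n f (j+1)) p = 0
        have h2 : bernstein' n (bootIter n f (j+1)) p = 0 := by
          rw [bern_eq]
          apply Finset.sum_eq_zero
          intro k hk
          obtain ⟨ha', hb'⟩ := yy_mem hn hk
          rw [ih (yy n k) ⟨ha', hb'⟩, mul_zero]
        rw [ih p hp, h2, sub_zero]
    have hfun : (fun n : ℕ => (n : ℝ) ^ m *
        sSup ((fun p => |bootIter n f m p|) '' Set.Icc (0:ℝ) 1)) = fun _ => (0:ℝ) := by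
      funext n
      rcases Nat.eq_zero_or_pos n with rfl | hn
      · simp [zero_pow (by omega : m ≠ 0)]
      · obtain ⟨m', rfl⟩ : ∃ m', m = m' + 1 := ⟨m - 1, by omega⟩
        have hz : ∀ p ∈ Set.Icc (0:ℝ) 1, |bootIter n f (m'+1) p| = 0 := fun p hp => by
          rw [hzero n hn m' p hp, abs_zero]
        have hsup : sSup ((fun p => |bootIter n f (m'+1) p|) '' Set.Icc (0:ℝ) 1) = 0 := by
          apply le_antisymm
          · apply csSup_le
            · exact ⟨_, Set.mem_image_of_mem _ (by norm_num : (0:ℝ) ∈ Set.Icc (0:ℝ) 1)⟩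
            · rintro y ⟨p, hp, rfl⟩
              exact le_of_eq (hz p hp)
          · apply le_csSup
            · refine ⟨0, ?_⟩
              rintro y ⟨p, hp, rfl⟩
              exact le_of_eq (hz p hp)
            · exact ⟨0, by norm_num, hz 0 (by norm_num)⟩
        rw [hsup, mul_zero]
    rw [hfun]
    exact tendsto_const_nhds
end

section
/- Fix an integer m ≥ 1. Then: (i) for f(p) = −p ln p (with f(0) = 0), there exist constants c_1, c_2 > 0 and N ∈ ℕ depending only on m such that c_1/n ≤ sup_{p∈[0,1]} |(I − B_n)^m f(p)| ≤ c_2/n for all n ≥ N; (ii) for f(p) = p^α with 0 < α < 1, there exist constants c_1, c_2 > 0 and N ∈ ℕ depending only on m and α such that c_1 n^{−α} ≤ sup_{p∈[0,1]} |(I − B_n)^m f(p)| ≤ c_2 n^{−α} for all n ≥ N. In particular, for these functions the first m−1 rounds of bootstrap bias correction do not change the order of the bias. -/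
namespace BB

noncomputable def w (n k : ℕ) (p : ℝ) : ℝ := (n.choose k : ℝ) * p ^ k * (1 - p) ^ (n - k)

lemma w_nonneg {n k : ℕ} {p : ℝ} (h0 : 0 ≤ p) (h1 : p ≤ 1) : 0 ≤ w n k p := by
  have h2 : (0:ℝ) ≤ 1 - p := by linarith
  have := pow_nonneg h0 k
  have := pow_nonneg h2 (n-k)
  have := Nat.cast_nonneg (α := ℝ) (n.choose k)
  unfold w; positivity

lemma sum_w (n : ℕ) (p : ℝ) : ∑ k ∈ Finset.range (n+1), w n k p = 1 := by
  have := bernsteinPolynomial.sum ℝ n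
  have h := congrArg (Polynomial.eval p) this
  simpa [w, bernsteinPolynomial, Polynomial.eval_finset_sum] using h

lemma sum_w_mul (n : ℕ) (p : ℝ) :
    ∑ k ∈ Finset.range (n+1), w n k p * k = n * p := by
  have := bernsteinPolynomial.sum_smul ℝ n
  have h := congrArg (Polynomial.eval p) this
  simp [bernsteinPolynomial, Polynomial.eval_finset_sum] at h
  rw [← h]
  apply Finset.sum_congr rfl
  intro k _
  simp [w]; ring

lemma sum_w_var (n : ℕ) (p : ℝ) :
    ∑ k ∈ Finset.range (n+1), w n k p * ((n:ℝ) * p - k)^2 = n * p * (1 - p) := by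
  have := bernsteinPolynomial.variance ℝ n
  have h := congrArg (Polynomial.eval p) this
  simp [bernsteinPolynomial, Polynomial.eval_finset_sum] at h
  rw [← h]
  apply Finset.sum_congr rfl
  intro k _
  simp [w]; ring

lemma bernstein'_eq (n : ℕ) (g : ℝ → ℝ) (p : ℝ) :
    bernstein' n g p = ∑ k ∈ Finset.range (n+1), w n k p * g ((k:ℝ)/n) := rfl

lemma bernstein'_zero (n : ℕ) (g : ℝ → ℝ) : bernstein' n g 0 = g 0 := by
  rw [bernstein'_eq]
  rw [Finset.sum_eq_single 0]
  · simp [w]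
  · intro k _ hk
    simp [w, zero_pow hk]
  · intro h; simp at h

lemma bootIter_zero (n : ℕ) (f : ℝ → ℝ) (hf : f 0 = 0) : ∀ j, bootIter n f j 0 = 0 := by
  intro j; induction j with
  | zero => exact hf
  | succ j ih => simp [bootIter, bernstein'_zero, ih]

lemma abs_bernstein'_le {n : ℕ} {g : ℝ → ℝ} {M p : ℝ} (h0 : 0 ≤ p) (h1 : p ≤ 1)
    (hM : ∀ k ∈ Finset.range (n+1), |g ((k:ℝ)/n)| ≤ M) :
    |bernstein' n g p| ≤ M := by
  rw [bernstein'_eq]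
  calc |∑ k ∈ Finset.range (n+1), w n k p * g ((k:ℝ)/n)|
      ≤ ∑ k ∈ Finset.range (n+1), |w n k p * g ((k:ℝ)/n)| := Finset.abs_sum_le_sum_abs _ _
    _ ≤ ∑ k ∈ Finset.range (n+1), w n k p * M := by
        apply Finset.sum_le_sum
        intro k hk
        rw [abs_mul, abs_of_nonneg (w_nonneg h0 h1)]
        exact mul_le_mul_of_nonneg_left (hM k hk) (w_nonneg h0 h1)
    _ = M := by rw [← Finset.sum_mul, sum_w, one_mul]

/-- refined bound when `g 0 = 0`. -/
lemma abs_bernstein'_le' {n : ℕ} {g : ℝ → ℝ} {M p : ℝ} (h0 : 0 ≤ p) (h1 : p ≤ 1)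
    (hg0 : g 0 = 0)     (hM : ∀ k ∈ Finset.range (n+1), |g ((k:ℝ)/n)| ≤ M) :
    |bernstein' n g p| ≤ (1 - (1-p)^n) * M := by
  rw [bernstein'_eq, Finset.sum_range_succ']
  have h00 : w n 0 p * g ((0:ℕ):ℝ)/n = 0 := by simp [hg0]
  simp only [Nat.cast_zero, zero_div, hg0, mul_zero, add_zero]
  calc |∑ k ∈ Finset.range n, w n (k+1) p * g (((k+1:ℕ):ℝ)/n)|
      ≤ ∑ k ∈ Finset.range n, |w n (k+1) p * g (((k+1:ℕ):ℝ)/n)| := Finset.abs_sum_le_sum_abs _ _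
    _ ≤ ∑ k ∈ Finset.range n, w n (k+1) p * M := by
        apply Finset.sum_le_sum
        intro k hk
        rw [abs_mul, abs_of_nonneg (w_nonneg h0 h1)]
        refine mul_le_mul_of_nonneg_left (hM (k+1) ?_) (w_nonneg h0 h1)
        simpa using Nat.succ_lt_succ (Finset.mem_range.mp hk)
    _ = (1 - (1-p)^n) * M := by
        rw [← Finset.sum_mul]
        congr 1
        have := sum_w n p
        rw [Finset.sum_range_succ'] at this
        have hw0 : w n 0 p = (1-p)^n := by simp [w]
        linarith

lemma grid_mem {n k : ℕ} (hk : k ∈ Finset.range (n+1)) :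
    0 ≤ (k:ℝ)/n ∧ (k:ℝ)/n ≤ 1 := by
  rcases Nat.eq_zero_or_pos n with hn | hn
  · subst hn
    have hk0 : k = 0 := by have := Finset.mem_range.mp hk; omega
    subst hk0; norm_num
  · constructor
    · positivity
    · rw [div_le_one (by exact_mod_cast hn)]
      exact_mod_cast Nat.lt_succ_iff.mp (Finset.mem_range.mp hk)

/-- uniform sup bound on iterates from a bound on the first error. -/
lemma bootIter_abs_le {n : ℕ} {f : ℝ → ℝ} {U : ℝ}
    (hU : ∀ p, 0 ≤ p → p ≤ 1 → |bootIter n f 1 p| ≤ U) :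
    ∀ j, 1 ≤ j → ∀ p, 0 ≤ p → p ≤ 1 → |bootIter n f j p| ≤ 2^(j-1) * U := by
  intro j
  induction j with
  | zero => omega
  | succ j ih =>
    intro _ p h0 h1
    rcases Nat.eq_zero_or_pos j with h | h
    · subst h; simpa using hU p h0 h1
    have hj : 1 ≤ j := h
    have step : bootIter n f (j+1) p = bootIter n f j p - bernstein' n (bootIter n f j) p := rfl
    rw [step]
    have hB : |bernstein' n (bootIter n f j) p| ≤ 2^(j-1) * U := by
      apply abs_bernstein'_le h0 h1
      intro k hk
      obtain ⟨hk0, hk1⟩ := grid_mem hk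
      exact ih hj _ hk0 hk1
    have h1' := ih hj p h0 h1
    have hj1 : j - 1 + 1 = j := by omega
    have h2 : (2:ℝ)^j = 2^(j-1) * 2 := by rw [← pow_succ, hj1]
    have heq : (2:ℝ)^(j-1) * U + 2^(j-1) * U = 2^j * U := by rw [h2]; ring
    have : (2:ℝ)^(j-1) * U + 2^(j-1) * U ≤ 2^j * U := le_of_eq heq
    calc |bootIter n f j p - bernstein' n (bootIter n f j) p|
        ≤ |bootIter n f j p| + |bernstein' n (bootIter n f j) p| := abs_sub _ _
      _ ≤ 2^(j-1) * U + 2^(j-1) * U := add_le_add h1' hB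
      _ ≤ 2^j * U := this
      _ = 2^(j+1-1) * U := by norm_num

/-- telescoping: `e_m = e_1 - ∑_{j=1}^{m-1} B e_j`. -/
lemma bootIter_telescope (n : ℕ) (f : ℝ → ℝ) (m : ℕ) (hm : 1 ≤ m) (p : ℝ) :
    bootIter n f m p =
      bootIter n f 1 p - ∑ j ∈ Finset.Ico 1 m, bernstein' n (bootIter n f j) p := by
  induction m with
  | zero => omega
  | succ m ih =>
    rcases Nat.eq_or_lt_of_le hm with h | h
    · simp [← h]
    have hm' : 1 ≤ m := by omega
    have step : bootIter n f (m+1) p = bootIter n f m p - bernstein' n (bootIter n f m) p := rfl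
    rw [step, ih hm', Finset.sum_Ico_succ_top hm']
    ring

/-- Key lower bound: at `p₀ = γ/n` the iterated bias is at least the first-order
bias minus `γ 2^m U`. -/
lemma key_lower {n : ℕ} {f : ℝ → ℝ} {U γ : ℝ} (hn : 1 ≤ n) (hf0 : f 0 = 0)
    (hγ0 : 0 < γ) (hγ1 : γ ≤ 1)
    (hU : ∀ p, 0 ≤ p → p ≤ 1 → |bootIter n f 1 p| ≤ U) (m : ℕ) (hm : 1 ≤ m) :
    bootIter n f 1 (γ/n) - γ * (2^m * U) ≤ bootIter n f m (γ/n) := by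
  have hnR : (1:ℝ) ≤ n := by exact_mod_cast hn
  have hn0 : (0:ℝ) < n := by linarith
  have hp0 : 0 ≤ γ/n := by positivity
  have hp1 : γ/n ≤ 1 := by
    rw [div_le_one hn0]; linarith
  have hU0 : 0 ≤ U := le_trans (abs_nonneg _) (hU 0 le_rfl zero_le_one)
  -- Bernoulli
  have hbern : 1 - γ ≤ (1 - γ/n)^n := by
    have h := one_add_mul_le_pow (a := -(γ/n)) (by nlinarith) n
    have : (n:ℝ) * (γ/n) = γ := by field_simp
    calc 1 - γ = 1 + (n:ℝ) * -(γ/n) := by rw [mul_neg, this]; ring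
      _ ≤ (1 + -(γ/n))^n := h
      _ = (1 - γ/n)^n := by ring_nf
  have hfac : 1 - (1 - γ/n)^n ≤ γ := by linarith
  have hfac0 : 0 ≤ 1 - (1 - γ/n)^n := by
    have : (1 - γ/n)^n ≤ 1 := by
      apply pow_le_one₀ (by linarith) (by linarith)
    linarith
  rw [bootIter_telescope n f m hm]
  have hsum : |∑ j ∈ Finset.Ico 1 m, bernstein' n (bootIter n f j) (γ/n)| ≤ γ * (2^m * U) := by
    calc |∑ j ∈ Finset.Ico 1 m, bernstein' n (bootIter n f j) (γ/n)|
        ≤ ∑ j ∈ Finset.Ico 1 m, |bernstein' n (bootIter n f j) (γ/n)| :=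
          Finset.abs_sum_le_sum_abs _ _
      _ ≤ ∑ j ∈ Finset.Ico 1 m, (1 - (1 - γ/n)^n) * (2^(j-1) * U) := by
          apply Finset.sum_le_sum
          intro j hj
          have hj1 : 1 ≤ j := (Finset.mem_Ico.mp hj).1
          apply abs_bernstein'_le' hp0 hp1 (bootIter_zero n f hf0 j)
          intro k hk
          obtain ⟨hk0, hk1⟩ := grid_mem hk
          exact bootIter_abs_le hU j hj1 _ hk0 hk1
      _ ≤ ∑ j ∈ Finset.Ico 1 m, γ * (2^(j-1) * U) := by
          apply Finset.sum_le_sum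
          intro j hj
          have : (0:ℝ) ≤ 2^(j-1) * U := by positivity
          nlinarith
      _ = γ * U * ∑ j ∈ Finset.Ico 1 m, (2:ℝ)^(j-1) := by
          rw [Finset.mul_sum]; apply Finset.sum_congr rfl; intro j _; ring
      _ ≤ γ * U * 2^m := by
          have hs : ∑ j ∈ Finset.Ico 1 m, (2:ℝ)^(j-1) ≤ 2^m := by
            rw [Finset.sum_Ico_eq_sum_range]
            have : ∀ i ∈ Finset.range (m-1), (2:ℝ)^(1+i-1) = 2^i := by
              intro i _; congr 1; omega
            rw [Finset.sum_congr rfl this]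
            calc ∑ i ∈ Finset.range (m-1), (2:ℝ)^i
                ≤ ∑ i ∈ Finset.range m, (2:ℝ)^i := by
                  apply Finset.sum_le_sum_of_subset_of_nonneg
                  · exact Finset.range_subset_range.mpr (by omega)
                  · intros; positivity
              _ = 2^m - 1 := by
                  have := geom_sum_eq (x := (2:ℝ)) (by norm_num) m
                  rw [this]; norm_num
              _ ≤ 2^m := by linarith
          have : (0:ℝ) ≤ γ * U := by positivity
          nlinarith
      _ = γ * (2^m * U) := by ring
  have := abs_le.mp hsum
  linarith

lemma sum_w_centered {n : ℕ} (hn : 1 ≤ n) (p : ℝ) :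
    ∑ k ∈ Finset.range (n+1), w n k p * ((k:ℝ)/n - p) = 0 := by
  have hn0 : (n:ℝ) ≠ 0 := by positivity
  have h1 := sum_w_mul n p
  have h2 := sum_w n p
  have : ∑ k ∈ Finset.range (n+1), w n k p * ((k:ℝ)/n - p)
      = (1/n) * (∑ k ∈ Finset.range (n+1), w n k p * k)
        - p * (∑ k ∈ Finset.range (n+1), w n k p) := by
    rw [Finset.mul_sum, Finset.mul_sum, ← Finset.sum_sub_distrib]
    apply Finset.sum_congr rfl
    intro k _; ring
  rw [this, h1, h2]
  field_simp
  ring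

lemma sum_w_centered_sq {n : ℕ} (hn : 1 ≤ n) (p : ℝ) :
    ∑ k ∈ Finset.range (n+1), w n k p * ((k:ℝ)/n - p)^2 = p * (1-p) / n := by
  have hn0 : (n:ℝ) ≠ 0 := by positivity
  have h1 := sum_w_var n p
  have : ∑ k ∈ Finset.range (n+1), w n k p * ((k:ℝ)/n - p)^2
      = (1/(n:ℝ)^2) * ∑ k ∈ Finset.range (n+1), w n k p * ((n:ℝ)*p - k)^2 := by
    rw [Finset.mul_sum]
    apply Finset.sum_congr rfl
    intro k _
    rw [div_sub' hn0, div_pow]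
    have hsq : ((k:ℝ) - n*p)^2 = ((n:ℝ)*p - k)^2 := by ring
    rw [hsq]
    ring
  rw [this, h1]
  field_simp

lemma sum_w_mean {n : ℕ} (hn : 1 ≤ n) (p : ℝ) :
    ∑ k ∈ Finset.range (n+1), w n k p * ((k:ℝ)/n) = p := by
  have hc := sum_w_centered hn p
  have hw := sum_w n p
  have : ∑ k ∈ Finset.range (n+1), w n k p * ((k:ℝ)/n - p)
      = (∑ k ∈ Finset.range (n+1), w n k p * ((k:ℝ)/n))
        - p * ∑ k ∈ Finset.range (n+1), w n k p := by
    rw [Finset.mul_sum, ← Finset.sum_sub_distrib]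
    apply Finset.sum_congr rfl
    intro k _; ring
  rw [this, hw] at hc
  linarith

lemma e1_eq (n : ℕ) (f : ℝ → ℝ) (p : ℝ) :
    bootIter n f 1 p = ∑ k ∈ Finset.range (n+1), w n k p * (f p - f ((k:ℝ)/n)) := by
  have h : bootIter n f 1 p = f p - bernstein' n f p := rfl
  rw [h, bernstein'_eq]
  have h2 : ∑ k ∈ Finset.range (n+1), w n k p * (f p - f ((k:ℝ)/n))
      = (∑ k ∈ Finset.range (n+1), w n k p) * f p
        - ∑ k ∈ Finset.range (n+1), w n k p * f ((k:ℝ)/n) := by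
    rw [Finset.sum_mul, ← Finset.sum_sub_distrib]
    apply Finset.sum_congr rfl
    intro k _; ring
  rw [h2, sum_w, one_mul]

section entropy

noncomputable def fent : ℝ → ℝ := fun q => -(q * Real.log q)

lemma fent_zero : fent 0 = 0 := by simp [fent]

lemma ent_point_lb {x p : ℝ} (hx : 0 ≤ x) (hp : 0 < p) :
    fent p - fent x ≥ (1 + Real.log p) * (x - p) := by
  simp only [fent]
  rcases eq_or_lt_of_le hx with h | hx0
  · rw [← h]
    simp only [Real.log_zero, mul_zero, neg_zero]  -- careful
    nlinarith
  · have hlog : Real.log (p/x) ≤ p/x - 1 := Real.log_le_sub_one_of_pos (by positivity)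
    rw [Real.log_div hp.ne' hx0.ne'] at hlog
    have hx' := mul_le_mul_of_nonneg_left hlog (le_of_lt hx0)
    have hxx : x * (p/x - 1) = p - x := by field_simp
    rw [mul_sub, hxx] at hx'
    nlinarith

lemma ent_point_ub {x p : ℝ} (hx : 0 ≤ x) (hp : 0 < p) :
    p * (fent p - fent x) ≤ p * ((1 + Real.log p) * (x - p)) + (x - p)^2 := by
  simp only [fent]
  rcases eq_or_lt_of_le hx with h | hx0
  · rw [← h]
    simp only [Real.log_zero, mul_zero, neg_zero]
    nlinarith
  · have hlog : Real.log (x/p) ≤ x/p - 1 := Real.log_le_sub_one_of_pos (by positivity)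
    rw [Real.log_div hx0.ne' hp.ne'] at hlog
    have h1 := mul_le_mul_of_nonneg_left hlog hx
    have h2 := mul_le_mul_of_nonneg_left h1 hp.le
    have hxx : p * (x * (x/p - 1)) = x^2 - p*x := by field_simp
    rw [hxx, mul_sub] at h2
    nlinarith [h2]

lemma ent_e1_bounds {n : ℕ} (hn : 1 ≤ n) {p : ℝ} (h0 : 0 ≤ p) (h1 : p ≤ 1) :
    0 ≤ bootIter n fent 1 p ∧ bootIter n fent 1 p ≤ 1/n := by
  have hn0 : (0:ℝ) < n := by positivity
  rcases eq_or_lt_of_le h0 with h | hp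
  · have hz := bootIter_zero n fent fent_zero 1
    rw [← h, hz]
    constructor
    · exact le_refl 0
    · positivity
  · constructor
    · rw [e1_eq]
      have step1 : (0:ℝ) = (1+Real.log p) * ∑ k ∈ Finset.range (n+1), w n k p * ((k:ℝ)/n - p) := by
        rw [sum_w_centered hn p]; ring
      rw [step1]
      rw [Finset.mul_sum]
      apply Finset.sum_le_sum
      intro k hk
      have hterm := ent_point_lb (grid_mem hk).1 hp
      calc (1+Real.log p) * (w n k p * ((k:ℝ)/n - p))
          = w n k p * ((1+Real.log p) * ((k:ℝ)/n - p)) := by ring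
        _ ≤ w n k p * (fent p - fent ((k:ℝ)/n)) :=
            mul_le_mul_of_nonneg_left hterm (w_nonneg h0 h1)
    · have key : p * bootIter n fent 1 p ≤ p * (1-p) / n := by
        rw [e1_eq, Finset.mul_sum]
        have hub : ∀ k ∈ Finset.range (n+1),
            p * (w n k p * (fent p - fent ((k:ℝ)/n)))
              ≤ (p * (1+Real.log p)) * (w n k p * ((k:ℝ)/n - p))
                + w n k p * ((k:ℝ)/n - p)^2 := by
          intro k hk
          have hterm := ent_point_ub (grid_mem hk).1 hp
          have hw := w_nonneg (n := n) (k := k) h0 h1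
          nlinarith [mul_le_mul_of_nonneg_left hterm hw]
        calc ∑ k ∈ Finset.range (n+1), p * (w n k p * (fent p - fent ((k:ℝ)/n)))
            ≤ ∑ k ∈ Finset.range (n+1),
                ((p * (1+Real.log p)) * (w n k p * ((k:ℝ)/n - p))
                  + w n k p * ((k:ℝ)/n - p)^2) := Finset.sum_le_sum hub
          _ = (p * (1+Real.log p)) * (∑ k ∈ Finset.range (n+1), w n k p * ((k:ℝ)/n - p))
              + ∑ k ∈ Finset.range (n+1), w n k p * ((k:ℝ)/n - p)^2 := by
              rw [Finset.sum_add_distrib, Finset.mul_sum]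
          _ = p * (1-p) / n := by
              rw [sum_w_centered hn p, sum_w_centered_sq hn p]; ring
      have h2 : bootIter n fent 1 p ≤ (1-p)/n := by
        rw [mul_div_assoc] at key
        exact (mul_le_mul_iff_right₀ hp).mp key
      calc bootIter n fent 1 p ≤ (1-p)/n := h2
        _ ≤ 1/n := by gcongr; linarith

lemma fent_grid_le {n k : ℕ} (hn : 1 ≤ n) : fent ((k:ℝ)/n) ≤ ((k:ℝ)/n) * Real.log n := by
  have hn0 : (0:ℝ) < n := by positivity
  rcases Nat.eq_zero_or_pos k with hk | hk
  · subst hk; simp [fent]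
  · have hk0 : (0:ℝ) < k := by exact_mod_cast hk
    have hlogk : 0 ≤ Real.log k := Real.log_nonneg (by exact_mod_cast hk)
    have hld : Real.log ((k:ℝ)/n) = Real.log k - Real.log n :=
      Real.log_div (by positivity) (by positivity)
    simp only [fent]
    rw [hld]
    have hkn : (0:ℝ) ≤ (k:ℝ)/n := by positivity
    nlinarith

lemma ent_e1_lower {n : ℕ} (hn : 1 ≤ n) {γ : ℝ} (hγ0 : 0 < γ) (hγ1 : γ ≤ 1) :
    γ * (-Real.log γ) / n ≤ bootIter n fent 1 (γ/n) := by
  have hn0 : (0:ℝ) < n := by positivity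
  have hp0 : 0 ≤ γ/n := by positivity
  have hp1 : γ/n ≤ 1 := by
    rw [div_le_one hn0]
    have : (1:ℝ) ≤ n := by exact_mod_cast hn
    linarith
  have h : bootIter n fent 1 (γ/n) = fent (γ/n) - bernstein' n fent (γ/n) := rfl
  have hB : bernstein' n fent (γ/n) ≤ Real.log n * (γ/n) := by
    rw [bernstein'_eq]
    calc ∑ k ∈ Finset.range (n+1), w n k (γ/n) * fent ((k:ℝ)/n)
        ≤ ∑ k ∈ Finset.range (n+1), w n k (γ/n) * (((k:ℝ)/n) * Real.log n) := by
          apply Finset.sum_le_sum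
          intro k _
          exact mul_le_mul_of_nonneg_left (fent_grid_le hn) (w_nonneg hp0 hp1)
      _ = Real.log n * ∑ k ∈ Finset.range (n+1), w n k (γ/n) * ((k:ℝ)/n) := by
          rw [Finset.mul_sum]
          apply Finset.sum_congr rfl
          intro k _; ring
      _ = Real.log n * (γ/n) := by rw [sum_w_mean hn]
  have hfp : fent (γ/n) = (γ/n) * (Real.log n - Real.log γ) := by
    simp only [fent]
    rw [Real.log_div hγ0.ne' hn0.ne']
    ring
  rw [h, hfp]
  have : γ * (-Real.log γ) / n = (γ/n) * (Real.log n - Real.log γ) - Real.log n * (γ/n) := by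
    ring
  linarith

/-- main entropy estimate, packaged. -/
lemma ent_main {m n : ℕ} (hm : 1 ≤ m) (hn : 1 ≤ n) :
    (Real.exp (-(2^(m+2))) * 2^(m+1)) / n
        ≤ bootIter n fent m (Real.exp (-(2^(m+2))) / n)
      ∧ ∀ p, 0 ≤ p → p ≤ 1 → |bootIter n fent m p| ≤ 2^(m-1) / n := by
  have hn0 : (0:ℝ) < n := by positivity
  set γ := Real.exp (-(2^(m+2))) with hγdef
  have hγ0 : 0 < γ := Real.exp_pos _
  have hγ1 : γ ≤ 1 := by
    rw [hγdef]
    apply Real.exp_le_one_iff.mpr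
    have : (0:ℝ) ≤ 2^(m+2) := by positivity
    linarith
  have hU : ∀ p, 0 ≤ p → p ≤ 1 → |bootIter n fent 1 p| ≤ 1/n := by
    intro p h0 h1
    obtain ⟨ha, hb⟩ := ent_e1_bounds hn h0 h1
    rw [abs_of_nonneg ha]; exact hb
  constructor
  · have hkey := key_lower hn fent_zero hγ0 hγ1 hU m hm
    have hlow := ent_e1_lower hn hγ0 hγ1
    have hlog : -Real.log γ = 2^(m+2) := by rw [hγdef, Real.log_exp]; ring
    rw [hlog] at hlow
    have harith : (γ * 2^(m+1)) / n ≤ γ * 2^(m+2) / n - γ * (2^m * (1/n)) := by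
      have h1 : γ * (2^m * (1/n)) = γ * 2^m / n := by ring
      rw [h1, ← sub_div]
      rw [div_le_div_iff_of_pos_right hn0]
      have h2 : (2:ℝ)^(m+2) = 4 * 2^m := by ring
      have h3 : (2:ℝ)^(m+1) = 2 * 2^m := by ring
      have hpow : (0:ℝ) < 2^m := by positivity
      nlinarith
    calc (γ * 2^(m+1)) / n ≤ γ * 2^(m+2) / n - γ * (2^m * (1/n)) := harith
      _ ≤ bootIter n fent 1 (γ/n) - γ * (2^m * (1/n)) := by linarith
      _ ≤ bootIter n fent m (γ/n) := hkey
  · intro p h0 h1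
    have := bootIter_abs_le hU m hm p h0 h1
    calc |bootIter n fent m p| ≤ 2^(m-1) * (1/n) := this
      _ = 2^(m-1)/n := by ring

end entropy

section power

variable {α : ℝ}

lemma pow_core_lb (hα0 : 0 < α) (hα1 : α < 1) {t : ℝ} (ht : 0 ≤ t) :
    t ^ α ≤ 1 + α * (t - 1) := by
  have h := Real.geom_mean_le_arith_mean2_weighted (le_of_lt hα0) (by linarith : (0:ℝ) ≤ 1 - α)
    ht zero_le_one (by ring)
  rw [Real.one_rpow, mul_one] at h
  linarith

lemma pow_core_ub (hα0 : 0 < α) (hα1 : α < 1) {t : ℝ} (ht : 0 ≤ t) :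
    1 + α * (t - 1) ≤ t ^ α + 2 * (t - 1)^2 := by
  rcases eq_or_lt_of_le ht with h | ht0
  · rw [← h, Real.zero_rpow hα0.ne']
    nlinarith
  rcases le_or_gt t (1/2) with hc | hc
  · have h1 : t ^ (1:ℝ) ≤ t ^ α :=
      Real.rpow_le_rpow_of_exponent_ge ht0 (by linarith) (le_of_lt hα1)
    rw [Real.rpow_one] at h1
    nlinarith [sq_nonneg (1-t)]
  · have hlt : 0 < t := by linarith
    have hexp : 1 + α * Real.log t ≤ t ^ α := by
      rw [Real.rpow_def_of_pos hlt]
      linarith [Real.add_one_le_exp (Real.log t * α)]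
    have hlog1 : Real.log t ≤ t - 1 := Real.log_le_sub_one_of_pos hlt
    have hlog2 : 1 - t⁻¹ ≤ Real.log t := by
      have h := Real.log_le_sub_one_of_pos (inv_pos.mpr hlt)
      rw [Real.log_inv] at h
      linarith
    have hti : t * t⁻¹ = 1 := mul_inv_cancel₀ hlt.ne'
    have htinv : t⁻¹ ≤ 2 := by nlinarith [(inv_pos.mpr hlt).le]
    have hnn : 0 ≤ t - 1 - Real.log t := by linarith
    have hb : t - 1 - Real.log t ≤ 2*(t-1)^2 := by
      have e : t - 2 + t⁻¹ = (t-1)^2 * t⁻¹ := by field_simp; ring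
      have h4 : (t-1)^2 * t⁻¹ ≤ (t-1)^2 * 2 :=
        mul_le_mul_of_nonneg_left htinv (sq_nonneg _)
      nlinarith [e, h4]
    have hαb : α * (t - 1 - Real.log t) ≤ 2*(t-1)^2 := by nlinarith
    nlinarith [hexp]

lemma pow_point_lb (hα0 : 0 < α) (hα1 : α < 1) {x p : ℝ} (hx : 0 ≤ x) (hp : 0 < p) :
    x ^ α ≤ p ^ α * (1 + α * (x/p - 1)) := by
  have ht : 0 ≤ x/p := by positivity
  have hxp : p * (x/p) = x := by field_simp
  calc x ^ α = (p * (x/p)) ^ α := by rw [hxp]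
    _ = p ^ α * (x/p) ^ α := Real.mul_rpow hp.le ht
    _ ≤ p ^ α * (1 + α * (x/p - 1)) :=
        mul_le_mul_of_nonneg_left (pow_core_lb hα0 hα1 ht) (Real.rpow_nonneg hp.le α)

lemma pow_point_ub (hα0 : 0 < α) (hα1 : α < 1) {x p : ℝ} (hx : 0 ≤ x) (hp : 0 < p) :
    p ^ α - x ^ α ≤ -(p^α * α) * (x/p - 1) + p^α * (2 * (x/p - 1)^2) := by
  have ht : 0 ≤ x/p := by positivity
  have hxp : p * (x/p) = x := by field_simp
  have hcore := pow_core_ub hα0 hα1 ht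
  have hmul := mul_le_mul_of_nonneg_left hcore (Real.rpow_nonneg hp.le α)
  have hx' : p ^ α * (x/p) ^ α = x ^ α := by
    rw [← Real.mul_rpow hp.le ht, hxp]
  nlinarith [hmul, hx']

lemma sum_w_t_one {n : ℕ} (hn : 1 ≤ n) {p : ℝ} (hp : p ≠ 0) :
    ∑ k ∈ Finset.range (n+1), w n k p * ((k:ℝ)/n/p - 1) = 0 := by
  have h1 := sum_w_mean hn p
  have h2 := sum_w n p
  have : ∑ k ∈ Finset.range (n+1), w n k p * ((k:ℝ)/n/p - 1)
      = (1/p) * (∑ k ∈ Finset.range (n+1), w n k p * ((k:ℝ)/n))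
        - ∑ k ∈ Finset.range (n+1), w n k p := by
    rw [Finset.mul_sum, ← Finset.sum_sub_distrib]
    apply Finset.sum_congr rfl
    intro k _
    field_simp
  rw [this, h1, h2]
  field_simp
  ring

lemma sum_w_t_sq {n : ℕ} (hn : 1 ≤ n) {p : ℝ} (hp : p ≠ 0) :
    ∑ k ∈ Finset.range (n+1), w n k p * ((k:ℝ)/n/p - 1)^2 = (p*(1-p)/n) / p^2 := by
  have h1 := sum_w_centered_sq hn p
  have : ∑ k ∈ Finset.range (n+1), w n k p * ((k:ℝ)/n/p - 1)^2
      = (1/p^2) * ∑ k ∈ Finset.range (n+1), w n k p * ((k:ℝ)/n - p)^2 := by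
    rw [Finset.mul_sum]
    apply Finset.sum_congr rfl
    intro k _
    rw [div_sub_one hp, div_pow]
    ring
  rw [this, h1]
  ring

lemma pow_e1_nonneg (hα0 : 0 < α) (hα1 : α < 1) {n : ℕ} (hn : 1 ≤ n)
    {p : ℝ} (h0 : 0 ≤ p) (h1 : p ≤ 1) :
    0 ≤ bootIter n (fun q => q ^ α) 1 p := by
  rcases eq_or_lt_of_le h0 with h | hp
  · rw [← h, bootIter_zero n _ (by simp [Real.zero_rpow hα0.ne']) 1]
  · rw [e1_eq]
    have step : (0:ℝ)
        = -(p^α * α) * ∑ k ∈ Finset.range (n+1), w n k p * ((k:ℝ)/n/p - 1) := by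
      rw [sum_w_t_one hn hp.ne']; ring
    rw [step, Finset.mul_sum]
    apply Finset.sum_le_sum
    intro k hk
    have hlb := pow_point_lb hα0 hα1 (grid_mem hk).1 hp
    have hw := w_nonneg (n := n) (k := k) h0 h1
    have := mul_le_mul_of_nonneg_left (sub_le_sub_left hlb (p^α)) hw
    calc -(p^α * α) * (w n k p * ((k:ℝ)/n/p - 1))
        = w n k p * (p^α - p^α * (1 + α * ((k:ℝ)/n/p - 1))) := by ring
      _ ≤ w n k p * (p^α - ((k:ℝ)/n)^α) := this

lemma pow_e1_ub (hα0 : 0 < α) (hα1 : α < 1) {n : ℕ} (hn : 1 ≤ n)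
    {p : ℝ} (h0 : 0 ≤ p) (h1 : p ≤ 1) :
    bootIter n (fun q => q ^ α) 1 p ≤ 2 * ((1:ℝ)/n)^α := by
  have hn0 : (0:ℝ) < n := by positivity
  have hinv0 : (0:ℝ) < 1/n := by positivity
  have hrpow0 : (0:ℝ) ≤ ((1:ℝ)/n)^α := Real.rpow_nonneg hinv0.le α
  rcases le_or_gt p (1/n) with hc | hc
  · have hB : 0 ≤ bernstein' n (fun q => q ^ α) p := by
      rw [bernstein'_eq]
      apply Finset.sum_nonneg
      intro k hk
      exact mul_nonneg (w_nonneg h0 h1) (Real.rpow_nonneg (grid_mem hk).1 α)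
    have he : bootIter n (fun q => q ^ α) 1 p
        = p ^ α - bernstein' n (fun q => q ^ α) p := rfl
    have hpa : p ^ α ≤ ((1:ℝ)/n)^α := Real.rpow_le_rpow h0 hc hα0.le
    rw [he]
    linarith
  · have hp : 0 < p := lt_trans hinv0 hc
    have hsum : ∑ k ∈ Finset.range (n+1), w n k p * (p^α - ((k:ℝ)/n)^α)
        ≤ -(p^α * α) * (∑ k ∈ Finset.range (n+1), w n k p * ((k:ℝ)/n/p - 1))
          + (p^α * 2) * ∑ k ∈ Finset.range (n+1), w n k p * ((k:ℝ)/n/p - 1)^2 := by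
      rw [Finset.mul_sum, Finset.mul_sum, ← Finset.sum_add_distrib]
      apply Finset.sum_le_sum
      intro k hk
      have hub := pow_point_ub hα0 hα1 (grid_mem hk).1 hp
      have hw := w_nonneg (n := n) (k := k) h0 h1
      have := mul_le_mul_of_nonneg_left hub hw
      calc w n k p * (p^α - ((k:ℝ)/n)^α)
          ≤ w n k p * (-(p^α * α) * ((k:ℝ)/n/p - 1) + p^α * (2 * ((k:ℝ)/n/p - 1)^2)) := this
        _ = -(p^α * α) * (w n k p * ((k:ℝ)/n/p - 1))
            + (p^α * 2) * (w n k p * ((k:ℝ)/n/p - 1)^2) := by ring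
    rw [sum_w_t_one hn hp.ne', sum_w_t_sq hn hp.ne'] at hsum
    have hqe : p*(1-p)/(n:ℝ)/p^2 = (1-p)/(n*p) := by
      field_simp
    have hq : (p*(1-p)/n) / p^2 ≤ 1/(n*p) := by
      rw [hqe, div_le_div_iff_of_pos_right (show (0:ℝ) < (n:ℝ)*p by positivity)]
      linarith
    have hpa0 : (0:ℝ) ≤ p ^ α := Real.rpow_nonneg h0 α
    have hstep : bootIter n (fun q => q ^ α) 1 p ≤ (p^α * 2) * (1/(n*p)) := by
      rw [e1_eq]
      calc ∑ k ∈ Finset.range (n+1), w n k p * (p^α - ((k:ℝ)/n)^α)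
          ≤ -(p^α * α) * 0 + (p^α * 2) * ((p*(1-p)/n) / p^2) := hsum
        _ ≤ (p^α * 2) * (1/(n*p)) := by nlinarith [hq, hpa0]
    -- ratio lemma: p^α * (1/n) ≤ p * (1/n)^α
    have hratio : p^α * (1/n) ≤ p * ((1:ℝ)/n)^α := by
      have hd1 : (1:ℝ) ≤ p / (1/n) := (one_le_div hinv0).mpr hc.le
      have h := Real.rpow_le_rpow_of_exponent_le hd1 (le_of_lt hα1)
      rw [Real.rpow_one, Real.div_rpow h0 hinv0.le] at h
      rw [div_le_div_iff₀ (Real.rpow_pos_of_pos hinv0 α) hinv0] at h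
      linarith
    have hfin : (p^α * 2) * (1/(n*p)) ≤ 2 * ((1:ℝ)/n)^α := by
      have h2 : (p^α * 2) * (1/(n*p)) = 2 * ((p^α * (1/n)) / p) := by
        ring
      rw [h2]
      have h3 : (p^α * (1/n)) / p ≤ (p * ((1:ℝ)/n)^α) / p := by gcongr
      have h4 : (p * ((1:ℝ)/n)^α) / p = ((1:ℝ)/n)^α := by
        field_simp
      linarith
    linarith

lemma natcast_rpow_le (hα0 : 0 < α) (hα1 : α < 1) (k : ℕ) : ((k:ℝ)) ^ α ≤ (k:ℝ) := by
  rcases Nat.eq_zero_or_pos k with hk | hk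
  · subst hk; simp [Real.zero_rpow hα0.ne']
  · have h1 : (1:ℝ) ≤ (k:ℝ) := by exact_mod_cast hk
    have := Real.rpow_le_rpow_of_exponent_le h1 (le_of_lt hα1)
    rwa [Real.rpow_one] at this

lemma pow_e1_lower (hα0 : 0 < α) (hα1 : α < 1) {n : ℕ} (hn : 1 ≤ n)
    {γ : ℝ} (hγ0 : 0 < γ) (hγ1 : γ ≤ 1) :
    (γ^α - γ) * ((1:ℝ)/n)^α ≤ bootIter n (fun q => q ^ α) 1 (γ/n) := by
  have hn0 : (0:ℝ) < n := by positivity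
  have hnR : (1:ℝ) ≤ n := by exact_mod_cast hn
  have hp0 : 0 ≤ γ/n := by positivity
  have hp1 : γ/n ≤ 1 := by rw [div_le_one hn0]; linarith
  have hA0 : (0:ℝ) ≤ ((1:ℝ)/n)^α := Real.rpow_nonneg (by positivity) α
  have he : bootIter n (fun q => q ^ α) 1 (γ/n)
      = (γ/n) ^ α - bernstein' n (fun q => q ^ α) (γ/n) := rfl
  have hsplit : (γ/n) ^ α = γ^α * ((1:ℝ)/n)^α := by
    rw [div_eq_mul_one_div, Real.mul_rpow hγ0.le (by positivity)]
  have hB : bernstein' n (fun q => q ^ α) (γ/n) ≤ γ * ((1:ℝ)/n)^α := by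
    rw [bernstein'_eq]
    have hterm : ∀ k ∈ Finset.range (n+1),
        w n k (γ/n) * ((k:ℝ)/n) ^ α ≤ ((1:ℝ)/n)^α * (w n k (γ/n) * k) := by
      intro k hk
      have hkn : ((k:ℝ)/n) ^ α = (k:ℝ)^α * ((1:ℝ)/n)^α := by
        rw [div_eq_mul_one_div, Real.mul_rpow (Nat.cast_nonneg k) (by positivity)]
      rw [hkn]
      have hkle := natcast_rpow_le hα0 hα1 k
      have hw := w_nonneg (n := n) (k := k) hp0 hp1
      calc w n k (γ/n) * ((k:ℝ)^α * ((1:ℝ)/n)^α)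
          = (w n k (γ/n) * ((1:ℝ)/n)^α) * (k:ℝ)^α := by ring
        _ ≤ (w n k (γ/n) * ((1:ℝ)/n)^α) * (k:ℝ) := by
            apply mul_le_mul_of_nonneg_left hkle
            positivity
        _ = ((1:ℝ)/n)^α * (w n k (γ/n) * k) := by ring
    calc ∑ k ∈ Finset.range (n+1), w n k (γ/n) * ((k:ℝ)/n) ^ α
        ≤ ∑ k ∈ Finset.range (n+1), ((1:ℝ)/n)^α * (w n k (γ/n) * k) :=
          Finset.sum_le_sum hterm
      _ = ((1:ℝ)/n)^α * ∑ k ∈ Finset.range (n+1), w n k (γ/n) * k := by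
          rw [Finset.mul_sum]
      _ = ((1:ℝ)/n)^α * ((n:ℝ) * (γ/n)) := by rw [sum_w_mul]
      _ = γ * ((1:ℝ)/n)^α := by field_simp
  rw [he, hsplit]
  nlinarith [hB]

/-- main power estimate, packaged. -/
lemma pow_main {m n : ℕ} (hm : 1 ≤ m) (hn : 1 ≤ n) (hα0 : 0 < α) (hα1 : α < 1) :
    (((2:ℝ)^(m+2)) ^ (-(1-α)⁻¹) * ((1:ℝ)/n)^α
        ≤ bootIter n (fun q => q ^ α) m (((2:ℝ)^(m+2)) ^ (-(1-α)⁻¹) / n))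
      ∧ ∀ p, 0 ≤ p → p ≤ 1 →
          |bootIter n (fun q => q ^ α) m p| ≤ 2^m * ((1:ℝ)/n)^α := by
  have hn0 : (0:ℝ) < n := by positivity
  have h1α : (0:ℝ) < 1 - α := by linarith
  set γ : ℝ := ((2:ℝ)^(m+2)) ^ (-(1-α)⁻¹) with hγdef
  have hbase : (1:ℝ) ≤ 2^(m+2) := one_le_pow₀ (by norm_num)
  have hγ0 : 0 < γ := Real.rpow_pos_of_pos (by positivity) _
  have hγ1 : γ ≤ 1 := by
    apply Real.rpow_le_one_of_one_le_of_nonpos hbase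
    have : (0:ℝ) < (1-α)⁻¹ := by positivity
    linarith
  have hexp1 : (-(1-α)⁻¹) * (α-1) = 1 := by field_simp; ring
  have hγpow : γ ^ (α - 1) = 2^(m+2) := by
    rw [hγdef, ← Real.rpow_mul (by positivity : (0:ℝ) ≤ 2^(m+2)), hexp1, Real.rpow_one]
  have hγα : γ ^ α = 2^(m+2) * γ := by
    have : α = (α - 1) + 1 := by ring
    rw [this, Real.rpow_add hγ0, hγpow, Real.rpow_one]
  have hA0 : (0:ℝ) ≤ ((1:ℝ)/n)^α := Real.rpow_nonneg (by positivity) α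
  have hU : ∀ p, 0 ≤ p → p ≤ 1 →
      |bootIter n (fun q => q ^ α) 1 p| ≤ 2 * ((1:ℝ)/n)^α := by
    intro p h0 h1
    rw [abs_of_nonneg (pow_e1_nonneg hα0 hα1 hn h0 h1)]
    exact pow_e1_ub hα0 hα1 hn h0 h1
  have hf0 : (fun q : ℝ => q ^ α) 0 = 0 := by simp [Real.zero_rpow hα0.ne']
  constructor
  · have hkey := key_lower hn hf0 hγ0 hγ1 hU m hm
    have hlow := pow_e1_lower hα0 hα1 hn hγ0 hγ1
    rw [hγα] at hlow
    have h2m : (2:ℝ) ≤ 2^m := by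
      calc (2:ℝ) = 2^1 := by norm_num
        _ ≤ 2^m := pow_le_pow_right₀ (by norm_num) hm
    have h4 : (2:ℝ)^(m+2) = 4 * 2^m := by ring
    have hP : 0 ≤ γ * ((1:ℝ)/n)^α := mul_nonneg hγ0.le hA0
    have hprod : 0 ≤ (γ * ((1:ℝ)/n)^α) * (2^m - 2) := mul_nonneg hP (by linarith)
    calc γ * ((1:ℝ)/n)^α
        ≤ (2^(m+2)*γ - γ) * ((1:ℝ)/n)^α - γ * (2^m * (2*((1:ℝ)/n)^α)) := by nlinarith [hprod, hP]
      _ ≤ bootIter n (fun q => q ^ α) 1 (γ/n) - γ * (2^m * (2*((1:ℝ)/n)^α)) := by linarith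
      _ ≤ bootIter n (fun q => q ^ α) m (γ/n) := hkey
  · intro p h0 h1
    have := bootIter_abs_le hU m hm p h0 h1
    have hm1 : m - 1 + 1 = m := by omega
    have h2 : (2:ℝ)^m = 2^(m-1) * 2 := by rw [← pow_succ, hm1]
    calc |bootIter n (fun q => q ^ α) m p| ≤ 2^(m-1) * (2 * ((1:ℝ)/n)^α) := this
      _ = (2^(m-1) * 2) * ((1:ℝ)/n)^α := by ring
      _ = 2^m * ((1:ℝ)/n)^α := by rw [h2]

end power

lemma inv_rpow_eq (n : ℕ) (α : ℝ) : ((1:ℝ)/n)^α = (n:ℝ)^(-α) := by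
  rw [Real.rpow_neg (Nat.cast_nonneg n), one_div, Real.inv_rpow (Nat.cast_nonneg n)]

end BB

/-- for `f(p) = −p ln p` the bootstrap bias `(I−B_n)^m f` has sup-norm `≍ 1/n`,
and for `f(p) = p^α` (`0<α<1`) it is `≍ n^{−α}`: the first `m−1` bootstrap bias-correction
rounds do not change the order of the bias for these functions. -/
theorem bootstrap_bias_entropy_power (m : ℕ) (hm : 1 ≤ m) :
    (∃ c₁ > 0, ∃ c₂ > 0, ∃ N : ℕ, ∀ n ≥ N,
      c₁ / n ≤ sSup ((fun p => |bootIter n (fun q => -(q * Real.log q)) m p|) ''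
          Set.Icc (0:ℝ) 1) ∧
      sSup ((fun p => |bootIter n (fun q => -(q * Real.log q)) m p|) '' Set.Icc (0:ℝ) 1) ≤
        c₂ / n) ∧
    (∀ α : ℝ, 0 < α → α < 1 → ∃ c₁ > 0, ∃ c₂ > 0, ∃ N : ℕ, ∀ n ≥ N,
      c₁ * (n : ℝ) ^ (-α) ≤
        sSup ((fun p => |bootIter n (fun q => q ^ α) m p|) '' Set.Icc (0:ℝ) 1) ∧
      sSup ((fun p => |bootIter n (fun q => q ^ α) m p|) '' Set.Icc (0:ℝ) 1) ≤
        c₂ * (n : ℝ) ^ (-α)) := by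
  have hfent : (fun q => -(q * Real.log q)) = BB.fent := rfl
  constructor
  · -- entropy part
    set γ : ℝ := Real.exp (-(2^(m+2))) with hγdef
    have hγ0 : 0 < γ := Real.exp_pos _
    have hγ1 : γ ≤ 1 := by
      rw [hγdef]
      apply Real.exp_le_one_iff.mpr
      have : (0:ℝ) ≤ 2^(m+2) := by positivity
      linarith
    refine ⟨γ * 2^(m+1), by positivity, 2^(m-1), by positivity, 1, ?_⟩
    intro n hn
    have hn0 : (0:ℝ) < n := by positivity
    have hnR : (1:ℝ) ≤ n := by exact_mod_cast hn
    obtain ⟨hlow, hup⟩ := BB.ent_main (m := m) (n := n) hm hn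
    rw [hfent]
    have hbdd : BddAbove ((fun p => |bootIter n BB.fent m p|) '' Set.Icc (0:ℝ) 1) := by
      refine ⟨2^(m-1)/n, ?_⟩
      rintro x ⟨p, hp, rfl⟩
      exact hup p hp.1 hp.2
    constructor
    · have hmem : |bootIter n BB.fent m (γ/n)|
          ∈ ((fun p => |bootIter n BB.fent m p|) '' Set.Icc (0:ℝ) 1) := by
        refine ⟨γ/n, ⟨by positivity, ?_⟩, rfl⟩
        rw [div_le_one hn0]; linarith
      calc γ * 2^(m+1) / n ≤ bootIter n BB.fent m (γ/n) := hlow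
        _ ≤ |bootIter n BB.fent m (γ/n)| := le_abs_self _
        _ ≤ sSup ((fun p => |bootIter n BB.fent m p|) '' Set.Icc (0:ℝ) 1) :=
            le_csSup hbdd hmem
    · apply Real.sSup_le
      · rintro x ⟨p, hp, rfl⟩
        exact hup p hp.1 hp.2
      · positivity
  · -- power part
    intro α hα0 hα1
    set γ : ℝ := ((2:ℝ)^(m+2)) ^ (-(1-α)⁻¹) with hγdef
    have hbase : (1:ℝ) ≤ 2^(m+2) := one_le_pow₀ (by norm_num)
    have hγ0 : 0 < γ := Real.rpow_pos_of_pos (by positivity) _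
    have hγ1 : γ ≤ 1 := by
      apply Real.rpow_le_one_of_one_le_of_nonpos hbase
      have h1α : (0:ℝ) < 1 - α := by linarith
      have : (0:ℝ) < (1-α)⁻¹ := by positivity
      linarith
    refine ⟨γ, hγ0, 2^m, by positivity, 1, ?_⟩
    intro n hn
    have hn0 : (0:ℝ) < n := by positivity
    have hnR : (1:ℝ) ≤ n := by exact_mod_cast hn
    obtain ⟨hlow, hup⟩ := BB.pow_main (m := m) (n := n) hm hn hα0 hα1
    rw [← BB.inv_rpow_eq]
    have hbdd : BddAbove ((fun p => |bootIter n (fun q => q ^ α) m p|) '' Set.Icc (0:ℝ) 1) := by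
      refine ⟨2^m * ((1:ℝ)/n)^α, ?_⟩
      rintro x ⟨p, hp, rfl⟩
      exact hup p hp.1 hp.2
    constructor
    · have hmem : |bootIter n (fun q => q ^ α) m (γ/n)|
          ∈ ((fun p => |bootIter n (fun q => q ^ α) m p|) '' Set.Icc (0:ℝ) 1) := by
        refine ⟨γ/n, ⟨by positivity, ?_⟩, rfl⟩
        rw [div_le_one hn0]; linarith
      calc γ * ((1:ℝ)/n)^α ≤ bootIter n (fun q => q ^ α) m (γ/n) := hlow
        _ ≤ |bootIter n (fun q => q ^ α) m (γ/n)| := le_abs_self _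
        _ ≤ sSup ((fun p => |bootIter n (fun q => q ^ α) m p|) '' Set.Icc (0:ℝ) 1) :=
            le_csSup hbdd hmem
    · apply Real.sSup_le
      · rintro x ⟨p, hp, rfl⟩
        exact hup p hp.1 hp.2
      · positivity
end
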